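/- arXiv:2506.00059 — 8 statements merged into one kernel-verified Lean document; each statement's English description precedes it below -/
import Mathlib

section
/- Let z : [0,∞) → [0,1]ⁿ be the trajectory of the SIS model with parameters (W, z(0), γ, π), and let 0 < T₀ ≤ T and v ∈ ℝⁿ. If ∫₀^{T₀} ⟨v, z(t)⟩² dt = 0, then ⟨v, z(t)⟩ = 0 for all t ≥ 0; in particular ∫₀^{T} ⟨v, z(t)⟩² dt = 0. Consequently the nullspace of the Gram matrix G(T), defined by G_{ij}(T) = ∫₀^T z_i(t) z_j(t) dt, is the same for every T > 0. -/
open MeasureTheory Set intervalIntegral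

lemma sis_key {n : ℕ} (z : ℝ → Fin n → ℝ)
    (hzan : ∀ i, AnalyticOnNhd ℝ (fun t => z t i) (Set.Ici (0 : ℝ)))
    (w : Fin n → ℝ) (a : ℝ) (ha : 0 < a)
    (hint : ∫ t in (0 : ℝ)..a, (∑ i, w i * z t i) ^ 2 = 0) :
    ∀ t ≥ (0 : ℝ), ∑ i, w i * z t i = 0 := by
  set f : ℝ → ℝ := fun t => ∑ i, w i * z t i with hf
  have hfan : AnalyticOnNhd ℝ f (Set.Ici 0) := by
    rw [show f = ∑ i, fun t => w i * z t i by ext t; simp [hf]]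
    apply Finset.analyticOnNhd_sum
    intro i _
    exact analyticOnNhd_const.mul (hzan i)
  have hfc : ContinuousOn f (Set.Ici 0) := hfan.continuousOn
  have hsub : Set.uIcc (0:ℝ) a ⊆ Set.Ici 0 := by
    rw [Set.uIcc_of_le ha.le]; exact Set.Icc_subset_Ici_self
  have hfi : IntervalIntegrable (fun t => f t ^ 2) volume 0 a :=
    ((hfc.mono hsub).pow 2).intervalIntegrable
  have hae : (fun t => f t ^ 2) =ᵐ[volume.restrict (Set.Ioc 0 a)] 0 := by
    rw [← integral_eq_zero_iff_of_le_of_nonneg_ae ha.le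
      (Filter.Eventually.of_forall fun t => sq_nonneg _) hfi]
    exact hint
  have hae' : (fun t => f t ^ 2) =ᵐ[volume.restrict (Set.Ioo 0 a)] 0 :=
    ae_restrict_of_ae_restrict_of_subset Set.Ioo_subset_Ioc_self hae
  have heq : Set.EqOn (fun t => f t ^ 2) 0 (Set.Ioo 0 a) :=
    Measure.eqOn_Ioo_of_ae_eq volume hae'
      (((hfc.mono (Set.Ioo_subset_Icc_self.trans ((Set.uIcc_of_le ha.le).symm.subset.trans hsub)))).pow 2)
      continuousOn_const
  have hzero : Set.EqOn f 0 (Set.Ici 0) := by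
    apply hfan.eqOn_zero_of_preconnected_of_frequently_eq_zero isPreconnected_Ici
      (Set.mem_Ici.2 (le_of_lt (half_pos ha)))
    apply Filter.Eventually.frequently
    have hmem : Set.Ioo (0:ℝ) a ∈ nhdsWithin (a/2) {(a/2)}ᶜ :=
      mem_nhdsWithin_of_mem_nhds (isOpen_Ioo.mem_nhds ⟨half_pos ha, half_lt_self ha⟩)
    filter_upwards [hmem] with t ht
    have := heq ht
    simpa [pow_eq_zero_iff] using this
  exact fun t ht => hzero ht

lemma sis_gram {n : ℕ} (z : ℝ → Fin n → ℝ)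
    (hzan : ∀ i, AnalyticOnNhd ℝ (fun t => z t i) (Set.Ici (0 : ℝ)))
    (T : ℝ) (hT : 0 < T) (w : Fin n → ℝ) :
    (Matrix.of fun i j => ∫ t in (0 : ℝ)..T, z t i * z t j).mulVec w = 0 ↔
      ∀ t ≥ (0 : ℝ), ∑ i, w i * z t i = 0 := by
  have hsub : Set.uIcc (0:ℝ) T ⊆ Set.Ici 0 := by
    rw [Set.uIcc_of_le hT.le]; exact Set.Icc_subset_Ici_self
  have hzc : ∀ i, ContinuousOn (fun t => z t i) (Set.uIcc (0:ℝ) T) :=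
    fun i => ((hzan i).continuousOn).mono hsub
  have hii : ∀ i j, IntervalIntegrable (fun t => z t i * z t j) volume 0 T :=
    fun i j => ((hzc i).mul (hzc j)).intervalIntegrable
  have hmv : ∀ i, (Matrix.of fun i j => ∫ t in (0 : ℝ)..T, z t i * z t j).mulVec w i
      = ∫ t in (0:ℝ)..T, z t i * ∑ j, w j * z t j := by
    intro i
    have : ∀ j, (∫ t in (0:ℝ)..T, z t i * z t j) * w j
        = ∫ t in (0:ℝ)..T, z t i * z t j * w j := fun j =>
      (intervalIntegral.integral_mul_const _ _).symm
    simp only [Matrix.mulVec, Matrix.of_apply, dotProduct, this]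
    rw [← intervalIntegral.integral_finset_sum]
    · congr 1; funext t; rw [Finset.mul_sum]; congr 1; funext j; ring
    · intro j _
      exact (hii i j).mul_const _
  constructor
  · intro h
    have hsum : ∑ i, w i * ((Matrix.of fun i j =>
        ∫ t in (0 : ℝ)..T, z t i * z t j).mulVec w) i = 0 := by
      rw [h]; simp
    have hkey : ∫ t in (0:ℝ)..T, (∑ i, w i * z t i) ^ 2 = 0 := by
      have : ∀ i, w i * ((Matrix.of fun i j =>
          ∫ t in (0 : ℝ)..T, z t i * z t j).mulVec w) i
          = ∫ t in (0:ℝ)..T, w i * (z t i * ∑ j, w j * z t j) := by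
        intro i
        rw [hmv i, ← intervalIntegral.integral_const_mul]
      simp only [this] at hsum
      rw [← intervalIntegral.integral_finset_sum] at hsum
      · rw [← hsum]; congr 1; funext t
        rw [sq, Finset.sum_mul]; congr 1; funext i; ring
      · intro i _
        apply IntervalIntegrable.const_mul
        apply IntervalIntegrable.continuousOn_mul _ (hzc i)
        apply ContinuousOn.intervalIntegrable
        apply continuousOn_finset_sum
        intro j _
        exact continuousOn_const.mul (hzc j)
    exact sis_key z hzan w T hT hkey
  · intro h
    funext i
    rw [Pi.zero_apply, hmv i]
    rw [intervalIntegral.integral_congr (g := fun _ => (0:ℝ))]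
    · exact intervalIntegral.integral_zero
    · intro t ht
      show z t i * ∑ j, w j * z t j = 0
      rw [h t (hsub ht), mul_zero]

/-- For the SIS trajectory `z` (which is analytic in `t`), if
`∫₀^{T₀} ⟨v, z(t)⟩² dt = 0` for some `T₀ > 0`, then `⟨v, z(t)⟩ = 0` for all `t ≥ 0`,
in particular `∫₀^{T} ⟨v, z(t)⟩² dt = 0` for any `T ≥ T₀`; consequently the nullspace
of the Gram matrix `G(T)` is the same for every `T > 0`. -/
theorem stmt_1 {n : ℕ} (W : Matrix (Fin n) (Fin n) ℝ) (pv γ : Fin n → ℝ)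
    (z : ℝ → Fin n → ℝ)
    (hWsymm : W.IsSymm) (hWpos : ∀ i j, 0 ≤ W i j)
    (hpv : ∀ i, 0 ≤ pv i) (hpv1 : ∑ i, pv i = 1) (hγ : ∀ i, 0 ≤ γ i)
    (hode : ∀ i, ∀ t ∈ Set.Ici (0 : ℝ), HasDerivWithinAt (fun s => z s i)
      ((1 - z t i) * (∑ j, W i j * pv j * z t j) - γ i * z t i) (Set.Ici 0) t)
    (hz01 : ∀ t ∈ Set.Ici (0 : ℝ), ∀ i, z t i ∈ Set.Icc (0 : ℝ) 1)
    (hzan : ∀ i, AnalyticOnNhd ℝ (fun t => z t i) (Set.Ici (0 : ℝ)))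
    (T₀ T : ℝ) (hT₀ : 0 < T₀) (hTT : T₀ ≤ T)
    (v : Fin n → ℝ)
    (hint : ∫ t in (0 : ℝ)..T₀, (∑ i, v i * z t i) ^ 2 = 0) :
    (∀ t ≥ (0 : ℝ), ∑ i, v i * z t i = 0) ∧
    (∫ t in (0 : ℝ)..T, (∑ i, v i * z t i) ^ 2 = 0) ∧
    (∀ T₁ T₂ : ℝ, 0 < T₁ → 0 < T₂ → ∀ w : Fin n → ℝ,
      (Matrix.of fun i j => ∫ t in (0 : ℝ)..T₁, z t i * z t j).mulVec w = 0 ↔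
      (Matrix.of fun i j => ∫ t in (0 : ℝ)..T₂, z t i * z t j).mulVec w = 0) := by
  have hT : 0 < T := lt_of_lt_of_le hT₀ hTT
  have h1 : ∀ t ≥ (0 : ℝ), ∑ i, v i * z t i = 0 := sis_key z hzan v T₀ hT₀ hint
  refine ⟨h1, ?_, ?_⟩
  · rw [intervalIntegral.integral_congr (g := fun _ => (0:ℝ))]
    · exact intervalIntegral.integral_zero
    · intro t ht
      have ht' : t ∈ Set.Ici (0:ℝ) := by
        rw [Set.uIcc_of_le hT.le] at ht; exact ht.1
      show (∑ i, v i * z t i) ^ 2 = 0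
      rw [h1 t ht']; ring
  · intro T₁ T₂ hT₁ hT₂ w
    rw [sis_gram z hzan T₁ hT₁ w, sis_gram z hzan T₂ hT₂ w]
end

section
/- Let z and ẑ be trajectories of the SIS model with parameters (W, z(0), γ, π) and (Ŵ, ẑ(0), γ̂, π) respectively, where W, Ŵ are symmetric with entries in [0,M], z(0), ẑ(0) ∈ [0,1]ⁿ, and γ, γ̂ have entries in [0,M]. Then for every T > 0: sup_{0 ≤ t ≤ T} ‖z(t) − ẑ(t)‖_{1,π} ≤ (‖z(0) − ẑ(0)‖_{1,π} + T·‖γ − γ̂‖_{1,π} + H_{1,T}) · e^{3MT}. -/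
open Set Filter MeasureTheory intervalIntegral
open scoped Topology

private lemma abs_add_five (a b c d e : ℝ) :
    |a + b + c + d + e| ≤ |a| + |b| + |c| + |d| + |e| := by
  calc |a + b + c + d + e| ≤ |a + b + c + d| + |e| := abs_add_le _ _
    _ ≤ (|a + b + c| + |d|) + |e| := by gcongr; exact abs_add_le _ _
    _ ≤ ((|a + b| + |c|) + |d|) + |e| := by gcongr; exact abs_add_le _ _
    _ ≤ (((|a| + |b|) + |c|) + |d|) + |e| := by gcongr; exact abs_add_le _ _

set_option maxHeartbeats 1000000 in
/-- Stability lemma (Lemma `l:H1`): for two SIS trajectories `z, ẑ` with parameters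
`(W, z(0), γ, π)` and `(Ŵ, ẑ(0), γ̂, π)` (weights and curing rates bounded by `M`),
`sup_{0 ≤ t ≤ T} ‖z(t) − ẑ(t)‖_{1,π}
  ≤ (‖z(0) − ẑ(0)‖_{1,π} + T‖γ − γ̂‖_{1,π} + H_{1,T}) e^{3MT}`. -/
theorem stmt_2 {n : ℕ} (M : ℝ) (hM : 0 ≤ M)
    (W W' : Matrix (Fin n) (Fin n) ℝ) (pv γ γ' : Fin n → ℝ)
    (z z' : ℝ → Fin n → ℝ)
    (hWsymm : W.IsSymm) (hW'symm : W'.IsSymm)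
    (hWb : ∀ i j, W i j ∈ Set.Icc (0 : ℝ) M) (hW'b : ∀ i j, W' i j ∈ Set.Icc (0 : ℝ) M)
    (hpv : ∀ i, 0 ≤ pv i) (hpv1 : ∑ i, pv i = 1)
    (hγ : ∀ i, γ i ∈ Set.Icc (0 : ℝ) M) (hγ' : ∀ i, γ' i ∈ Set.Icc (0 : ℝ) M)
    (hode : ∀ i, ∀ t ∈ Set.Ici (0 : ℝ), HasDerivWithinAt (fun s => z s i)
      ((1 - z t i) * (∑ j, W i j * pv j * z t j) - γ i * z t i) (Set.Ici 0) t)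
    (hode' : ∀ i, ∀ t ∈ Set.Ici (0 : ℝ), HasDerivWithinAt (fun s => z' s i)
      ((1 - z' t i) * (∑ j, W' i j * pv j * z' t j) - γ' i * z' t i) (Set.Ici 0) t)
    (hz01 : ∀ t ∈ Set.Ici (0 : ℝ), ∀ i, z t i ∈ Set.Icc (0 : ℝ) 1)
    (hz01' : ∀ t ∈ Set.Ici (0 : ℝ), ∀ i, z' t i ∈ Set.Icc (0 : ℝ) 1)
    (T : ℝ) (hT : 0 < T) :
    ∀ t ∈ Set.Icc (0 : ℝ) T,
      ∑ i, |z t i - z' t i| * pv i ≤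
        (∑ i, |z 0 i - z' 0 i| * pv i + T * ∑ i, |γ i - γ' i| * pv i +
          ∫ s in (0 : ℝ)..T,
            ∑ i, |(∑ j, W i j * pv j * z s j) - (∑ j, W' i j * pv j * z s j)| * pv i) *
        Real.exp (3 * M * T) := by
  set φ : ℝ → ℝ := fun s => ∑ i, |z s i - z' s i| * pv i with hφdef
  set ε₀ : ℝ → ℝ := fun s =>
    ∑ i, |(∑ j, W i j * pv j * z s j) - (∑ j, W' i j * pv j * z s j)| * pv i with hε₀def
  set G : ℝ := ∑ i, |γ i - γ' i| * pv i with hGdef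
  set D : Fin n → ℝ → ℝ := fun i x =>
    ((1 - z x i) * (∑ j, W i j * pv j * z x j) - γ i * z x i) -
      ((1 - z' x i) * (∑ j, W' i j * pv j * z' x j) - γ' i * z' x i) with hDdef
  -- basic positivity
  have hGnn : 0 ≤ G := Finset.sum_nonneg fun i _ => mul_nonneg (abs_nonneg _) (hpv i)
  have hε₀nn : ∀ s, 0 ≤ ε₀ s := fun s =>
    Finset.sum_nonneg fun i _ => mul_nonneg (abs_nonneg _) (hpv i)
  have hφnn : ∀ s, 0 ≤ φ s := fun s =>
    Finset.sum_nonneg fun i _ => mul_nonneg (abs_nonneg _) (hpv i)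
  -- continuity
  have hzc : ∀ i, ContinuousOn (fun s => z s i) (Set.Ici 0) :=
    fun i x hx => (hode i x hx).continuousWithinAt
  have hzc' : ∀ i, ContinuousOn (fun s => z' s i) (Set.Ici 0) :=
    fun i x hx => (hode' i x hx).continuousWithinAt
  have hφc : ContinuousOn φ (Set.Ici 0) := by
    apply continuousOn_finset_sum
    intro i _
    exact (((hzc i).sub (hzc' i)).abs).mul continuousOn_const
  have hε₀c : ContinuousOn ε₀ (Set.Ici 0) := by
    apply continuousOn_finset_sum
    intro i _
    refine ContinuousOn.mul (ContinuousOn.abs (ContinuousOn.sub ?_ ?_)) continuousOn_const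
    · exact continuousOn_finset_sum _ fun j _ => continuousOn_const.mul (hzc j)
    · exact continuousOn_finset_sum _ fun j _ => continuousOn_const.mul (hzc j)
  have hεc : ContinuousOn (fun s => G + ε₀ s) (Set.Ici 0) := continuousOn_const.add hε₀c
  -- the primitive of the inhomogeneity
  set h : ℝ → ℝ := fun u => ∫ s in (0 : ℝ)..u, (G + ε₀ s) with hhdef
  have hint : ∀ x : ℝ, 0 ≤ x → IntervalIntegrable (fun s => G + ε₀ s) volume 0 x := by
    intro x hx
    apply (hεc.mono ?_).intervalIntegrable
    rw [Set.uIcc_of_le hx]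
    exact fun y hy => hy.1
  have hmeas : ∀ x : ℝ, 0 ≤ x →
      StronglyMeasurableAtFilter (fun s => G + ε₀ s) (𝓝[Set.Ioi x] x) volume := by
    intro x hx0
    exact ⟨Set.Ici 0, Filter.mem_of_superset self_mem_nhdsWithin
      (fun y hy => le_trans hx0 (le_of_lt hy)),
      (hεc.aestronglyMeasurable measurableSet_Ici)⟩
  have hh' : ∀ x ∈ Set.Ico (0 : ℝ) T, HasDerivWithinAt h (G + ε₀ x) (Set.Ici x) x := by
    intro x hx
    exact intervalIntegral.integral_hasDerivWithinAt_right (hint x hx.1) (hmeas x hx.1)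
      ((hεc x hx.1).mono (fun y hy => le_trans hx.1 (le_of_lt hy)))
  have hhc : ContinuousOn h (Set.Icc 0 T) := by
    have := intervalIntegral.continuousOn_primitive_interval'
      (hint T hT.le) (left_mem_uIcc (a := (0:ℝ)) (b := T))
    rwa [Set.uIcc_of_le hT.le] at this
  set E : ℝ := T * G + ∫ s in (0 : ℝ)..T, ε₀ s with hEdef
  have hTE : h T = E := by
    simp only [hhdef, hEdef]
    rw [intervalIntegral.integral_add intervalIntegrable_const
      ((hε₀c.mono (by rw [Set.uIcc_of_le hT.le]; exact fun y hy => hy.1)).intervalIntegrable),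
      intervalIntegral.integral_const]
    simp [smul_eq_mul, mul_comm]
  have hhle : ∀ x ∈ Set.Icc (0 : ℝ) T, h x ≤ E := by
    intro x hx
    have i1 : IntervalIntegrable (fun s => G + ε₀ s) volume 0 x := hint x hx.1
    have i2 : IntervalIntegrable (fun s => G + ε₀ s) volume x T := by
      apply (hεc.mono ?_).intervalIntegrable
      rw [Set.uIcc_of_le hx.2]
      exact fun y hy => le_trans hx.1 hy.1
    have hadd := intervalIntegral.integral_add_adjacent_intervals i1 i2
    have hpos : 0 ≤ ∫ s in x..T, (G + ε₀ s) :=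
      intervalIntegral.integral_nonneg hx.2 (fun u _ => add_nonneg hGnn (hε₀nn u))
    have : h x + ∫ s in x..T, (G + ε₀ s) = h T := hadd
    rw [← hTE]
    linarith
  -- the pointwise bound on the derivative
  have habs : ∀ x ∈ Set.Icc (0 : ℝ) T, ∀ i,
      |D i x| ≤ |(∑ j, W i j * pv j * z x j) - (∑ j, W' i j * pv j * z x j)|
        + (∑ j, W' i j * pv j * |z x j - z' x j|)
        + M * |z x i - z' x i| + M * |z x i - z' x i| + |γ i - γ' i| := by
    intro x hx i
    have hx0 : x ∈ Set.Ici (0 : ℝ) := hx.1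
    obtain ⟨hz0, hz1⟩ := hz01 x hx0 i
    obtain ⟨hz0', hz1'⟩ := hz01' x hx0 i
    have hS'0 : 0 ≤ ∑ j, W' i j * pv j * z' x j := Finset.sum_nonneg fun j _ =>
      mul_nonneg (mul_nonneg (hW'b i j).1 (hpv j)) (hz01' x hx0 j).1
    have hS'M : (∑ j, W' i j * pv j * z' x j) ≤ M := by
      calc (∑ j, W' i j * pv j * z' x j) ≤ ∑ j, M * pv j := by
            refine Finset.sum_le_sum fun j _ => ?_
            have h1 := (hW'b i j).2
            have h2 := (hz01' x hx0 j).2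
            have h3 := (hz01' x hx0 j).1
            have h4 := hpv j
            have p1 : W' i j * pv j * z' x j ≤ W' i j * pv j * 1 :=
              mul_le_mul_of_nonneg_left h2 (mul_nonneg (hW'b i j).1 h4)
            have p2 : W' i j * pv j ≤ M * pv j := mul_le_mul_of_nonneg_right h1 h4
            rw [mul_one] at p1
            linarith
        _ = M := by rw [← Finset.mul_sum, hpv1, mul_one]
    have hdec : D i x =
        (1 - z x i) * ((∑ j, W i j * pv j * z x j) - (∑ j, W' i j * pv j * z x j))
        + (1 - z x i) * (∑ j, W' i j * pv j * (z x j - z' x j))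
        + (z' x i - z x i) * (∑ j, W' i j * pv j * z' x j)
        + γ i * (z' x i - z x i)
        + (γ' i - γ i) * z' x i := by
      have hsplit : (∑ j, W' i j * pv j * (z x j - z' x j))
          = (∑ j, W' i j * pv j * z x j) - (∑ j, W' i j * pv j * z' x j) := by
        rw [← Finset.sum_sub_distrib]
        exact Finset.sum_congr rfl fun j _ => by ring
      simp only [hDdef]
      rw [hsplit]; ring
    rw [hdec]
    have h1z : |1 - z x i| ≤ 1 := by rw [abs_of_nonneg (by linarith)]; linarith
    have b1 : |(1 - z x i) * ((∑ j, W i j * pv j * z x j) - (∑ j, W' i j * pv j * z x j))|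
        ≤ |(∑ j, W i j * pv j * z x j) - (∑ j, W' i j * pv j * z x j)| := by
      rw [abs_mul]
      nlinarith [abs_nonneg ((∑ j, W i j * pv j * z x j) - (∑ j, W' i j * pv j * z x j))]
    have b2 : |(1 - z x i) * (∑ j, W' i j * pv j * (z x j - z' x j))|
        ≤ ∑ j, W' i j * pv j * |z x j - z' x j| := by
      rw [abs_mul]
      have hb : |∑ j, W' i j * pv j * (z x j - z' x j)|
          ≤ ∑ j, W' i j * pv j * |z x j - z' x j| := by
        refine (Finset.abs_sum_le_sum_abs _ _).trans ?_
        refine Finset.sum_le_sum fun j _ => ?_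
        rw [abs_mul, abs_of_nonneg (mul_nonneg (hW'b i j).1 (hpv j))]
      nlinarith [abs_nonneg (∑ j, W' i j * pv j * (z x j - z' x j))]
    have b3 : |(z' x i - z x i) * (∑ j, W' i j * pv j * z' x j)| ≤ M * |z x i - z' x i| := by
      rw [abs_mul, abs_sub_comm, abs_of_nonneg hS'0]
      nlinarith [abs_nonneg (z x i - z' x i)]
    have b4 : |γ i * (z' x i - z x i)| ≤ M * |z x i - z' x i| := by
      rw [abs_mul, abs_of_nonneg (hγ i).1, abs_sub_comm]
      exact mul_le_mul_of_nonneg_right (hγ i).2 (abs_nonneg _)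
    have b5 : |(γ' i - γ i) * z' x i| ≤ |γ i - γ' i| := by
      rw [abs_mul, abs_sub_comm]
      have : |z' x i| ≤ 1 := by rw [abs_of_nonneg hz0']; exact hz1'
      nlinarith [abs_nonneg (γ i - γ' i)]
    calc |(1 - z x i) * ((∑ j, W i j * pv j * z x j) - (∑ j, W' i j * pv j * z x j))
        + (1 - z x i) * (∑ j, W' i j * pv j * (z x j - z' x j))
        + (z' x i - z x i) * (∑ j, W' i j * pv j * z' x j)
        + γ i * (z' x i - z x i)
        + (γ' i - γ i) * z' x i|
        ≤ _ := abs_add_five _ _ _ _ _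
      _ ≤ |(∑ j, W i j * pv j * z x j) - (∑ j, W' i j * pv j * z x j)|
          + (∑ j, W' i j * pv j * |z x j - z' x j|)
          + M * |z x i - z' x i| + M * |z x i - z' x i| + |γ i - γ' i| := by
        gcongr <;> assumption
  have hbound : ∀ x ∈ Set.Ico (0 : ℝ) T,
      (∑ i, |D i x| * pv i) ≤ 3 * M * φ x + (G + ε₀ x) := by
    intro x hx
    have hx' : x ∈ Set.Icc (0 : ℝ) T := ⟨hx.1, hx.2.le⟩
    have step1 : (∑ i, |D i x| * pv i) ≤
        ∑ i, (|(∑ j, W i j * pv j * z x j) - (∑ j, W' i j * pv j * z x j)|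
          + (∑ j, W' i j * pv j * |z x j - z' x j|)
          + M * |z x i - z' x i| + M * |z x i - z' x i| + |γ i - γ' i|) * pv i :=
      Finset.sum_le_sum fun i _ => mul_le_mul_of_nonneg_right (habs x hx' i) (hpv i)
    refine step1.trans ?_
    have expand : ∑ i, (|(∑ j, W i j * pv j * z x j) - (∑ j, W' i j * pv j * z x j)|
          + (∑ j, W' i j * pv j * |z x j - z' x j|)
          + M * |z x i - z' x i| + M * |z x i - z' x i| + |γ i - γ' i|) * pv i
        = ε₀ x + (∑ i, (∑ j, W' i j * pv j * |z x j - z' x j|) * pv i)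
          + (∑ i, M * |z x i - z' x i| * pv i) + (∑ i, M * |z x i - z' x i| * pv i) + G := by
      simp only [hε₀def, hGdef, add_mul, Finset.sum_add_distrib]
    rw [expand]
    have hswap : (∑ i, (∑ j, W' i j * pv j * |z x j - z' x j|) * pv i) ≤ M * φ x := by
      calc (∑ i, (∑ j, W' i j * pv j * |z x j - z' x j|) * pv i)
          = ∑ i, ∑ j, (W' i j * pv i) * (|z x j - z' x j| * pv j) := by
            refine Finset.sum_congr rfl fun i _ => ?_
            rw [Finset.sum_mul]
            exact Finset.sum_congr rfl fun j _ => by ring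
        _ = ∑ j, ∑ i, (W' i j * pv i) * (|z x j - z' x j| * pv j) := Finset.sum_comm
        _ = ∑ j, (∑ i, W' i j * pv i) * (|z x j - z' x j| * pv j) := by
            refine Finset.sum_congr rfl fun j _ => ?_
            rw [Finset.sum_mul]
        _ ≤ ∑ j, M * (|z x j - z' x j| * pv j) := by
            refine Finset.sum_le_sum fun j _ => ?_
            have hMj : (∑ i, W' i j * pv i) ≤ M := by
              calc (∑ i, W' i j * pv i) ≤ ∑ i, M * pv i :=
                    Finset.sum_le_sum fun i _ =>
                      mul_le_mul_of_nonneg_right (hW'b i j).2 (hpv i)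
                _ = M := by rw [← Finset.mul_sum, hpv1, mul_one]
            exact mul_le_mul_of_nonneg_right hMj (mul_nonneg (abs_nonneg _) (hpv j))
        _ = M * φ x := by simp only [hφdef]; rw [Finset.mul_sum]
    have hM1 : (∑ i, M * |z x i - z' x i| * pv i) = M * φ x := by
      simp only [hφdef]
      rw [Finset.mul_sum]
      exact Finset.sum_congr rfl fun i _ => by ring
    rw [hM1]
    linarith [hε₀nn x]
  -- the comparison function and Grönwall
  set g : ℝ → ℝ := fun x => φ x - h x with hgdef
  have hgc : ContinuousOn g (Set.Icc 0 T) :=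
    (hφc.mono (Set.Icc_subset_Ici_self)).sub hhc
  have hbound2 : ∀ x ∈ Set.Ico (0 : ℝ) T,
      ((∑ i, |D i x| * pv i) - (G + ε₀ x)) ≤ 3 * M * g x + 3 * M * E := by
    intro x hx
    have h1 := hbound x hx
    have h2 : h x ≤ E := hhle x ⟨hx.1, hx.2.le⟩
    have h5 : 3 * M * φ x = 3 * M * g x + 3 * M * h x := by
      simp only [hgdef]; ring
    have h4 : 3 * M * h x ≤ 3 * M * E :=
      mul_le_mul_of_nonneg_left h2 (by linarith)
    linarith
  have hliminf : ∀ x ∈ Set.Ico (0 : ℝ) T, ∀ r,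
      ((∑ i, |D i x| * pv i) - (G + ε₀ x)) < r →
      ∃ᶠ y in 𝓝[>] x, (y - x)⁻¹ * (g y - g x) < r := by
    intro x hx r hr
    have hx0 : (0 : ℝ) ≤ x := hx.1
    have hIci : Set.Ici x ⊆ Set.Ici (0 : ℝ) := Set.Ici_subset_Ici.2 hx0
    have hsl : ∀ i : Fin n, Filter.Tendsto (slope (fun s => z s i - z' s i) x)
        (𝓝[>] x) (𝓝 (D i x)) := by
      intro i
      have hdx : HasDerivWithinAt (fun s => z s i - z' s i) (D i x) (Set.Ici x) x := by
        simpa only [hDdef, Pi.sub_def] using ((hode i x hx0).sub (hode' i x hx0)).mono hIci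
      rw [hasDerivWithinAt_iff_tendsto_slope, Set.Ici_sdiff_left] at hdx
      exact hdx
    have hslh : Filter.Tendsto (slope h x) (𝓝[>] x) (𝓝 (G + ε₀ x)) := by
      have hdx := hh' x hx
      rw [hasDerivWithinAt_iff_tendsto_slope, Set.Ici_sdiff_left] at hdx
      exact hdx
    have htend : Filter.Tendsto
        (fun y => (∑ i, |slope (fun s => z s i - z' s i) x y| * pv i) - slope h x y)
        (𝓝[>] x) (𝓝 ((∑ i, |D i x| * pv i) - (G + ε₀ x))) :=
      (tendsto_finset_sum _ fun i _ => ((hsl i).abs.mul_const (pv i))).sub hslh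
    have hev2 : ∀ᶠ y in 𝓝[>] x, (y - x)⁻¹ * (g y - g x) < r := by
      filter_upwards [htend.eventually_lt_const hr, self_mem_nhdsWithin] with y h1 h2
      have hyx : (0 : ℝ) < y - x := sub_pos.2 h2
      have e2 : φ y - φ x ≤ ∑ i, |(z y i - z' y i) - (z x i - z' x i)| * pv i := by
        have e2' : φ y - φ x = ∑ i, (|z y i - z' y i| - |z x i - z' x i|) * pv i := by
          simp only [hφdef]
          rw [← Finset.sum_sub_distrib]
          exact Finset.sum_congr rfl fun i _ => by ring
        rw [e2']
        exact Finset.sum_le_sum fun i _ =>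
          mul_le_mul_of_nonneg_right (abs_sub_abs_le_abs_sub _ _) (hpv i)
      have e3 : (y - x)⁻¹ * (∑ i, |(z y i - z' y i) - (z x i - z' x i)| * pv i)
          = ∑ i, |slope (fun s => z s i - z' s i) x y| * pv i := by
        rw [Finset.mul_sum]
        refine Finset.sum_congr rfl fun i _ => ?_
        rw [slope_def_field, abs_div, abs_of_pos hyx]
        ring
      have l1 : (y - x)⁻¹ * (φ y - φ x)
          ≤ ∑ i, |slope (fun s => z s i - z' s i) x y| * pv i := by
        rw [← e3]
        exact mul_le_mul_of_nonneg_left e2 (inv_nonneg.2 hyx.le)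
      have l2 : (y - x)⁻¹ * (h y - h x) = slope h x y := by
        rw [slope_def_field]; ring
      have l3 : (y - x)⁻¹ * (g y - g x)
          = (y - x)⁻¹ * (φ y - φ x) - (y - x)⁻¹ * (h y - h x) := by
        simp only [hgdef]; ring
      rw [l3, l2]
      calc (y - x)⁻¹ * (φ y - φ x) - slope h x y
          ≤ (∑ i, |slope (fun s => z s i - z' s i) x y| * pv i) - slope h x y := by linarith
        _ < r := h1
    exact hev2.frequently
  have hga : g 0 ≤ φ 0 := by
    simp only [hgdef, hhdef]
    rw [intervalIntegral.integral_same]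
    simp
  have hgron := le_gronwallBound_of_liminf_deriv_right_le hgc hliminf hga hbound2
  -- conclusion
  intro t ht
  have hgt := hgron t ht
  have hht : h t ≤ E := hhle t ht
  have hφ0 : 0 ≤ φ 0 := hφnn 0
  have hE0' : 0 ≤ E := by
    rw [← hTE]
    simp only [hhdef]
    exact intervalIntegral.integral_nonneg hT.le (fun u _ => add_nonneg hGnn (hε₀nn u))
  have hexp : Real.exp (3 * M * t) ≤ Real.exp (3 * M * T) :=
    Real.exp_le_exp.2 (by nlinarith [ht.1, ht.2])
  have h2 : gronwallBound (φ 0) (3 * M) (3 * M * E) (t - 0) + E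
      ≤ (φ 0 + E) * Real.exp (3 * M * T) := by
    by_cases hK : (3 * M : ℝ) = 0
    · rw [hK]
      simp only [gronwallBound_K0, zero_mul, add_zero, Real.exp_zero, mul_one]
      linarith
    · rw [sub_zero]
      simp only [gronwallBound_of_K_ne_0 hK]
      have hEE : 3 * M * E / (3 * M) = E := mul_div_cancel_left₀ E hK
      rw [hEE]
      have key : (φ 0 + E) * Real.exp (3 * M * t) ≤ (φ 0 + E) * Real.exp (3 * M * T) :=
        mul_le_mul_of_nonneg_left hexp (by linarith)
      nlinarith [Real.exp_pos (3 * M * t)]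
  have hfin : φ t ≤ (φ 0 + E) * Real.exp (3 * M * T) := by
    have h1 : φ t = g t + h t := by simp only [hgdef]; ring
    linarith
  calc φ t ≤ (φ 0 + E) * Real.exp (3 * M * T) := hfin
    _ = (φ 0 + T * G + ∫ s in (0 : ℝ)..T, ε₀ s) * Real.exp (3 * M * T) := by
        rw [hEdef, add_assoc]
end

section
/- Let z and ẑ be trajectories of the SIS model with parameters (W, z(0), γ, π) and (Ŵ, z(0), γ, π) respectively (same initial condition and same curing rates), where W, Ŵ are symmetric with entries in [0,M], z(0) ∈ [0,1]ⁿ, and γ has entries in [0,M]. Then for every T > 0: sup_{0 ≤ t ≤ T} ‖z(t) − ẑ(t)‖_{1,π} ≤ e^{3MT}·H_{1,T} ≤ √T·e^{3MT}·H_{2,T}. -/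
open Set MeasureTheory intervalIntegral

lemma gronwall_aux {e h : ℝ → ℝ} {K T : ℝ} (hK : 0 ≤ K) (hT : 0 < T)
    (heC : ContinuousOn e (Set.Icc 0 T)) (hhC : ContinuousOn h (Set.Icc 0 T))
    (hh0 : ∀ t ∈ Set.Icc (0:ℝ) T, 0 ≤ h t)
    (hineq : ∀ t ∈ Set.Icc (0:ℝ) T, e t ≤ ∫ s in (0:ℝ)..t, (h s + K * e s)) :
    ∀ t ∈ Set.Icc (0:ℝ) T, e t ≤ Real.exp (K * T) * ∫ s in (0:ℝ)..T, h s := by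
  have hsub : ∀ t ∈ Set.Icc (0:ℝ) T, Set.uIcc (0:ℝ) t ⊆ Set.Icc 0 T := by
    intro t ht
    rw [Set.uIcc_of_le ht.1]
    exact Set.Icc_subset_Icc le_rfl ht.2
  set f : ℝ → ℝ := fun s => h s + K * e s with hf
  have hfC : ContinuousOn f (Set.Icc 0 T) := hhC.add (continuousOn_const.mul heC)
  have hfInt : ∀ t ∈ Set.Icc (0:ℝ) T, IntervalIntegrable f volume 0 t := fun t ht =>
    (hfC.mono (hsub t ht)).intervalIntegrable
  have hhInt : ∀ t ∈ Set.Icc (0:ℝ) T, IntervalIntegrable h volume 0 t := fun t ht =>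
    (hhC.mono (hsub t ht)).intervalIntegrable
  set g : ℝ → ℝ := fun t => ∫ s in (0:ℝ)..t, f s with hg
  set ψ : ℝ → ℝ := fun t => ∫ s in (0:ℝ)..t, h s with hψ
  have hTmem : T ∈ Set.Icc (0:ℝ) T := ⟨hT.le, le_rfl⟩
  have h0mem : (0:ℝ) ∈ Set.Icc (0:ℝ) T := ⟨le_rfl, hT.le⟩
  have huIcc : Set.uIcc (0:ℝ) T = Set.Icc 0 T := Set.uIcc_of_le hT.le
  have hgC : ContinuousOn g (Set.Icc 0 T) := by
    have := intervalIntegral.continuousOn_primitive_interval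
      (f := f) (μ := volume) (a := (0:ℝ)) (b := T) ?_
    · rwa [huIcc] at this
    · rw [huIcc]; exact hfC.integrableOn_Icc
  have hψC : ContinuousOn ψ (Set.Icc 0 T) := by
    have := intervalIntegral.continuousOn_primitive_interval
      (f := h) (μ := volume) (a := (0:ℝ)) (b := T) ?_
    · rwa [huIcc] at this
    · rw [huIcc]; exact hhC.integrableOn_Icc
  -- derivatives on the interior
  have hmeasf := ContinuousOn.stronglyMeasurableAtFilter (μ := volume) isOpen_Ioo
    (hfC.mono Set.Ioo_subset_Icc_self)
  have hmeash := ContinuousOn.stronglyMeasurableAtFilter (μ := volume) isOpen_Ioo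
    (hhC.mono Set.Ioo_subset_Icc_self)
  have hgD : ∀ t ∈ Set.Ioo (0:ℝ) T, HasDerivAt g (f t) t := by
    intro t ht
    exact intervalIntegral.integral_hasDerivAt_right
      (hfInt t (Set.Ioo_subset_Icc_self ht)) (hmeasf t ht)
      (hfC.continuousAt (Icc_mem_nhds ht.1 ht.2))
  have hψD : ∀ t ∈ Set.Ioo (0:ℝ) T, HasDerivAt ψ (h t) t := by
    intro t ht
    exact intervalIntegral.integral_hasDerivAt_right
      (hhInt t (Set.Ioo_subset_Icc_self ht)) (hmeash t ht)
      (hhC.continuousAt (Icc_mem_nhds ht.1 ht.2))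
  set D : ℝ → ℝ := fun t => ψ t - Real.exp (-(K*t)) * g t with hD
  have hexpD : ∀ t : ℝ, HasDerivAt (fun t => Real.exp (-(K*t))) (Real.exp (-(K*t)) * (-K)) t := by
    intro t
    have : HasDerivAt (fun t : ℝ => -(K*t)) (-K) t := by
      have h := ((hasDerivAt_id t).const_mul K).neg
      simp only [mul_one] at h
      exact h
    exact this.exp
  have hDD : ∀ t ∈ Set.Ioo (0:ℝ) T, HasDerivAt D
      (h t - (Real.exp (-(K*t)) * (-K) * g t + Real.exp (-(K*t)) * f t)) t := by
    intro t ht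
    exact (hψD t ht).sub ((hexpD t).mul (hgD t ht))
  have hDnn : ∀ t ∈ Set.Ioo (0:ℝ) T, 0 ≤ h t - (Real.exp (-(K*t)) * (-K) * g t + Real.exp (-(K*t)) * f t) := by
    intro t ht
    have htIcc : t ∈ Set.Icc (0:ℝ) T := Set.Ioo_subset_Icc_self ht
    have h1 : Real.exp (-(K*t)) ≤ 1 := Real.exp_le_one_iff.2 (by nlinarith [ht.1])
    have h2 : (0:ℝ) < Real.exp (-(K*t)) := Real.exp_pos _
    have h3 : e t ≤ g t := hineq t htIcc
    have h4 : 0 ≤ h t := hh0 t htIcc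
    have hA : 0 ≤ h t * (1 - Real.exp (-(K*t))) := mul_nonneg h4 (by linarith)
    have hB : 0 ≤ (K * Real.exp (-(K*t))) * (g t - e t) :=
      mul_nonneg (mul_nonneg hK h2.le) (by linarith)
    simp only [hf]
    nlinarith [hA, hB]
  have hDC : ContinuousOn D (Set.Icc 0 T) :=
    hψC.sub ((Real.continuous_exp.comp ((continuous_const.mul continuous_id).neg)).continuousOn.mul hgC)
  have hmono : MonotoneOn D (Set.Icc 0 T) := by
    apply monotoneOn_of_deriv_nonneg (convex_Icc 0 T) hDC
    · intro x hx
      rw [interior_Icc] at hx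
      exact ((hDD x hx).differentiableAt).differentiableWithinAt
    · intro x hx
      rw [interior_Icc] at hx
      rw [(hDD x hx).deriv]
      exact hDnn x hx
  have hD0 : D 0 = 0 := by
    simp [hD, hψ, hg, intervalIntegral.integral_same]
  have hψmono : ∀ t ∈ Set.Icc (0:ℝ) T, ψ t ≤ ψ T := by
    intro t ht
    have hint1 : IntervalIntegrable h volume 0 t := hhInt t ht
    have hint2 : IntervalIntegrable h volume t T := by
      apply (hhC.mono _).intervalIntegrable
      rw [Set.uIcc_of_le ht.2]
      exact Set.Icc_subset_Icc ht.1 le_rfl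
    have hadd : ψ t + ∫ s in t..T, h s = ψ T :=
      intervalIntegral.integral_add_adjacent_intervals hint1 hint2
    have : 0 ≤ ∫ s in t..T, h s := by
      apply intervalIntegral.integral_nonneg ht.2
      intro u hu
      exact hh0 u ⟨ht.1.trans hu.1, hu.2⟩
    linarith
  have hψnn : ∀ t ∈ Set.Icc (0:ℝ) T, 0 ≤ ψ t := by
    intro t ht
    apply intervalIntegral.integral_nonneg ht.1
    intro u hu
    exact hh0 u ⟨hu.1, hu.2.trans ht.2⟩
  intro t ht
  have h1 : Real.exp (-(K*t)) * g t ≤ ψ t := by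
    have := hmono h0mem ht ht.1
    rw [hD0] at this
    simp only [hD] at this
    linarith
  have h2 : g t ≤ Real.exp (K*t) * ψ t := by
    have h3 : (0:ℝ) < Real.exp (-(K*t)) := Real.exp_pos _
    have h4 : Real.exp (K*t) * Real.exp (-(K*t)) = 1 := by
      rw [← Real.exp_add]; simp
    calc g t = Real.exp (K*t) * Real.exp (-(K*t)) * g t := by rw [h4]; ring
      _ = Real.exp (K*t) * (Real.exp (-(K*t)) * g t) := by ring
      _ ≤ Real.exp (K*t) * ψ t := mul_le_mul_of_nonneg_left h1 (Real.exp_nonneg _)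
  have h5 : Real.exp (K*t) * ψ t ≤ Real.exp (K*T) * ψ T := by
    have := hψmono t ht
    have h6 : Real.exp (K*t) ≤ Real.exp (K*T) := Real.exp_le_exp.2 (by nlinarith [ht.2])
    have := hψnn t ht
    nlinarith [Real.exp_nonneg (K*t)]
  calc e t ≤ g t := hineq t ht
    _ ≤ Real.exp (K*t) * ψ t := h2
    _ ≤ Real.exp (K*T) * ψ T := h5


/-- Stability lemma with equal initial conditions and equal curing rates:
`sup_{0 ≤ t ≤ T} ‖z(t) − ẑ(t)‖_{1,π} ≤ e^{3MT} H_{1,T} ≤ √T e^{3MT} H_{2,T}`. -/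
theorem stmt_3 {n : ℕ} (M : ℝ) (hM : 0 ≤ M)
    (W W' : Matrix (Fin n) (Fin n) ℝ) (pv γ : Fin n → ℝ)
    (z z' : ℝ → Fin n → ℝ)
    (hWsymm : W.IsSymm) (hW'symm : W'.IsSymm)
    (hWb : ∀ i j, W i j ∈ Set.Icc (0 : ℝ) M) (hW'b : ∀ i j, W' i j ∈ Set.Icc (0 : ℝ) M)
    (hpv : ∀ i, 0 ≤ pv i) (hpv1 : ∑ i, pv i = 1)
    (hγ : ∀ i, γ i ∈ Set.Icc (0 : ℝ) M)
    (hinit : z' 0 = z 0)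
    (hode : ∀ i, ∀ t ∈ Set.Ici (0 : ℝ), HasDerivWithinAt (fun s => z s i)
      ((1 - z t i) * (∑ j, W i j * pv j * z t j) - γ i * z t i) (Set.Ici 0) t)
    (hode' : ∀ i, ∀ t ∈ Set.Ici (0 : ℝ), HasDerivWithinAt (fun s => z' s i)
      ((1 - z' t i) * (∑ j, W' i j * pv j * z' t j) - γ i * z' t i) (Set.Ici 0) t)
    (hz01 : ∀ t ∈ Set.Ici (0 : ℝ), ∀ i, z t i ∈ Set.Icc (0 : ℝ) 1)
    (hz01' : ∀ t ∈ Set.Ici (0 : ℝ), ∀ i, z' t i ∈ Set.Icc (0 : ℝ) 1)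
    (T : ℝ) (hT : 0 < T) :
    (∀ t ∈ Set.Icc (0 : ℝ) T,
      ∑ i, |z t i - z' t i| * pv i ≤
        Real.exp (3 * M * T) *
          ∫ s in (0 : ℝ)..T,
            ∑ i, |(∑ j, W i j * pv j * z s j) - (∑ j, W' i j * pv j * z s j)| * pv i) ∧
    Real.exp (3 * M * T) *
        (∫ s in (0 : ℝ)..T,
          ∑ i, |(∑ j, W i j * pv j * z s j) - (∑ j, W' i j * pv j * z s j)| * pv i) ≤
      Real.sqrt T * Real.exp (3 * M * T) *
        Real.sqrt (∫ s in (0 : ℝ)..T,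
          ∑ i, ((∑ j, W i j * pv j * z s j) - (∑ j, W' i j * pv j * z s j)) ^ 2 * pv i) := by
  have hIccIci : Set.Icc (0:ℝ) T ⊆ Set.Ici 0 := fun x hx => hx.1
  have hzc : ∀ i, ContinuousOn (fun s => z s i) (Set.Ici 0) :=
    fun i t ht => (hode i t ht).continuousWithinAt
  have hz'c : ∀ i, ContinuousOn (fun s => z' s i) (Set.Ici 0) :=
    fun i t ht => (hode' i t ht).continuousWithinAt
  set d : ℝ → Fin n → ℝ :=
    fun s i => (∑ j, W i j * pv j * z s j) - (∑ j, W' i j * pv j * z s j) with hd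
  set hfun : ℝ → ℝ := fun s => ∑ i, |d s i| * pv i with hhfun
  set efun : ℝ → ℝ := fun s => ∑ i, |z s i - z' s i| * pv i with hefun
  set qfun : ℝ → ℝ := fun s => ∑ i, (d s i)^2 * pv i with hqfun
  set fd : ℝ → Fin n → ℝ := fun s i =>
    ((1 - z s i) * (∑ j, W i j * pv j * z s j) - γ i * z s i) -
    ((1 - z' s i) * (∑ j, W' i j * pv j * z' s j) - γ i * z' s i) with hfd
  -- continuity of building blocks
  have hAc : ∀ i, ContinuousOn (fun s => ∑ j, W i j * pv j * z s j) (Set.Ici 0) := by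
    intro i
    exact continuousOn_finset_sum _ (fun j _ => continuousOn_const.mul (hzc j))
  have hBc : ∀ i, ContinuousOn (fun s => ∑ j, W' i j * pv j * z s j) (Set.Ici 0) := by
    intro i
    exact continuousOn_finset_sum _ (fun j _ => continuousOn_const.mul (hzc j))
  have hB'c : ∀ i, ContinuousOn (fun s => ∑ j, W' i j * pv j * z' s j) (Set.Ici 0) := by
    intro i
    exact continuousOn_finset_sum _ (fun j _ => continuousOn_const.mul (hz'c j))
  have hdc : ∀ i, ContinuousOn (fun s => d s i) (Set.Ici 0) :=
    fun i => (hAc i).sub (hBc i)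
  have hfdc : ∀ i, ContinuousOn (fun s => fd s i) (Set.Ici 0) := by
    intro i
    exact (((continuousOn_const.sub (hzc i)).mul (hAc i)).sub
      (continuousOn_const.mul (hzc i))).sub
      (((continuousOn_const.sub (hz'c i)).mul (hB'c i)).sub
      (continuousOn_const.mul (hz'c i)))
  have hhfunC : ContinuousOn hfun (Set.Ici 0) :=
    continuousOn_finset_sum _ (fun i _ => ((hdc i).abs).mul continuousOn_const)
  have hefunC : ContinuousOn efun (Set.Ici 0) :=
    continuousOn_finset_sum _ (fun i _ => (((hzc i).sub (hz'c i)).abs).mul continuousOn_const)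
  have hqfunC : ContinuousOn qfun (Set.Ici 0) :=
    continuousOn_finset_sum _ (fun i _ => ((hdc i).pow 2).mul continuousOn_const)
  have hfun_nonneg : ∀ s, 0 ≤ hfun s := by
    intro s
    exact Finset.sum_nonneg (fun i _ => mul_nonneg (abs_nonneg _) (hpv i))
  have hqfun_nonneg : ∀ s, 0 ≤ qfun s := by
    intro s
    exact Finset.sum_nonneg (fun i _ => mul_nonneg (sq_nonneg _) (hpv i))
  -- representation of the difference as an integral of fd
  have hrep : ∀ t ∈ Set.Icc (0:ℝ) T, ∀ i, z t i - z' t i = ∫ s in (0:ℝ)..t, fd s i := by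
    intro t ht i
    have hsub : Set.Icc (0:ℝ) t ⊆ Set.Ici 0 := fun x hx => hx.1
    have hcont : ContinuousOn (fun s => z s i - z' s i) (Set.Icc 0 t) :=
      ((hzc i).sub (hz'c i)).mono hsub
    have hderiv : ∀ x ∈ Set.Ioo (0:ℝ) t,
        HasDerivWithinAt (fun s => z s i - z' s i) (fd x i) (Set.Ioi x) x := by
      intro x hx
      have hxI : x ∈ Set.Ici (0:ℝ) := le_of_lt hx.1
      exact ((hode i x hxI).sub (hode' i x hxI)).mono
        (fun y hy => le_of_lt (hx.1.trans hy))
    have hint : IntervalIntegrable (fun s => fd s i) volume 0 t := by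
      apply (((hfdc i).mono ?_)).intervalIntegrable
      rw [Set.uIcc_of_le ht.1]
      exact fun x hx => hx.1
    have heq := intervalIntegral.integral_eq_sub_of_hasDeriv_right_of_le ht.1 hcont hderiv hint
    have h0 : z 0 i - z' 0 i = 0 := by rw [hinit]; ring
    rw [heq, h0]
    ring
  -- pointwise bound on the weighted sum of |fd|
  have hbound : ∀ s ∈ Set.Icc (0:ℝ) T, ∑ i, |fd s i| * pv i ≤ hfun s + 3*M * efun s := by
    intro s hs
    have hsI : s ∈ Set.Ici (0:ℝ) := hs.1
    have hcomp : ∀ i, |fd s i| ≤ |d s i| + (∑ j, W' i j * pv j * |z s j - z' s j|) +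
        M * |z s i - z' s i| + M * |z s i - z' s i| := by
      intro i
      have hb'nn : 0 ≤ ∑ j, W' i j * pv j * z' s j :=
        Finset.sum_nonneg (fun j _ =>
          mul_nonneg (mul_nonneg (hW'b i j).1 (hpv j)) (hz01' s hsI j).1)
      have hb'le : (∑ j, W' i j * pv j * z' s j) ≤ M := by
        calc ∑ j, W' i j * pv j * z' s j ≤ ∑ j, M * pv j := by
              apply Finset.sum_le_sum
              intro j _
              have h1 := hW'b i j
              have h2 := hpv j
              have h3 := hz01' s hsI j
              calc W' i j * pv j * z' s j ≤ W' i j * pv j * 1 :=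
                    mul_le_mul_of_nonneg_left h3.2 (mul_nonneg h1.1 h2)
                _ = W' i j * pv j := mul_one _
                _ ≤ M * pv j := mul_le_mul_of_nonneg_right h1.2 h2
          _ = M := by rw [← Finset.mul_sum, hpv1, mul_one]
      have hdiff : |(∑ j, W' i j * pv j * z s j) - (∑ j, W' i j * pv j * z' s j)| ≤
          ∑ j, W' i j * pv j * |z s j - z' s j| := by
        rw [← Finset.sum_sub_distrib]
        refine (Finset.abs_sum_le_sum_abs _ _).trans ?_
        apply Finset.sum_le_sum
        intro j _
        have : W' i j * pv j * z s j - W' i j * pv j * z' s j =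
            (W' i j * pv j) * (z s j - z' s j) := by ring
        rw [this, abs_mul, abs_of_nonneg (mul_nonneg (hW'b i j).1 (hpv j))]
      have hid : fd s i = (1 - z s i) * d s i +
          (1 - z s i) * ((∑ j, W' i j * pv j * z s j) - (∑ j, W' i j * pv j * z' s j)) -
          (z s i - z' s i) * (∑ j, W' i j * pv j * z' s j) - γ i * (z s i - z' s i) := by
        simp only [hfd, hd]
        ring
      have h1z : |1 - z s i| ≤ 1 := by
        have := hz01 s hsI i
        rw [abs_of_nonneg (by linarith [this.2])]
        linarith [this.1]
      rw [hid]
      have t1 : |(1 - z s i) * d s i +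
          (1 - z s i) * ((∑ j, W' i j * pv j * z s j) - (∑ j, W' i j * pv j * z' s j)) -
          (z s i - z' s i) * (∑ j, W' i j * pv j * z' s j) - γ i * (z s i - z' s i)| ≤
          |(1 - z s i) * d s i| +
          |(1 - z s i) * ((∑ j, W' i j * pv j * z s j) - (∑ j, W' i j * pv j * z' s j))| +
          |(z s i - z' s i) * (∑ j, W' i j * pv j * z' s j)| + |γ i * (z s i - z' s i)| := by
        calc _ ≤ |(1 - z s i) * d s i +
              (1 - z s i) * ((∑ j, W' i j * pv j * z s j) - (∑ j, W' i j * pv j * z' s j)) -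
              (z s i - z' s i) * (∑ j, W' i j * pv j * z' s j)| + |γ i * (z s i - z' s i)| :=
            abs_sub _ _
          _ ≤ |(1 - z s i) * d s i +
              (1 - z s i) * ((∑ j, W' i j * pv j * z s j) - (∑ j, W' i j * pv j * z' s j))| +
              |(z s i - z' s i) * (∑ j, W' i j * pv j * z' s j)| + |γ i * (z s i - z' s i)| := by
            have := abs_sub ((1 - z s i) * d s i +
              (1 - z s i) * ((∑ j, W' i j * pv j * z s j) - (∑ j, W' i j * pv j * z' s j)))
              ((z s i - z' s i) * (∑ j, W' i j * pv j * z' s j))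
            linarith
          _ ≤ _ := by
            have := abs_add_le ((1 - z s i) * d s i)
              ((1 - z s i) * ((∑ j, W' i j * pv j * z s j) - (∑ j, W' i j * pv j * z' s j)))
            linarith
      refine t1.trans ?_
      have e1 : |(1 - z s i) * d s i| ≤ |d s i| := by
        rw [abs_mul]
        nlinarith [abs_nonneg (d s i), h1z, abs_nonneg (1 - z s i)]
      have e2 : |(1 - z s i) * ((∑ j, W' i j * pv j * z s j) - (∑ j, W' i j * pv j * z' s j))| ≤
          ∑ j, W' i j * pv j * |z s j - z' s j| := by
        rw [abs_mul]
        calc |1 - z s i| * |(∑ j, W' i j * pv j * z s j) - (∑ j, W' i j * pv j * z' s j)| ≤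
            1 * |(∑ j, W' i j * pv j * z s j) - (∑ j, W' i j * pv j * z' s j)| :=
              mul_le_mul_of_nonneg_right h1z (abs_nonneg _)
          _ = |(∑ j, W' i j * pv j * z s j) - (∑ j, W' i j * pv j * z' s j)| := one_mul _
          _ ≤ _ := hdiff
      have e3 : |(z s i - z' s i) * (∑ j, W' i j * pv j * z' s j)| ≤ M * |z s i - z' s i| := by
        rw [abs_mul, abs_of_nonneg hb'nn]
        nlinarith [abs_nonneg (z s i - z' s i)]
      have e4 : |γ i * (z s i - z' s i)| ≤ M * |z s i - z' s i| := by
        rw [abs_mul, abs_of_nonneg (hγ i).1]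
        exact mul_le_mul_of_nonneg_right (hγ i).2 (abs_nonneg _)
      linarith
    -- middle-term estimate
    have hmid : ∑ i, (∑ j, W' i j * pv j * |z s j - z' s j|) * pv i ≤ M * efun s := by
      have step1 : ∑ i, (∑ j, W' i j * pv j * |z s j - z' s j|) * pv i =
          ∑ j, (∑ i, W' i j * pv i) * (pv j * |z s j - z' s j|) := by
        simp_rw [Finset.sum_mul]
        rw [Finset.sum_comm]
        apply Finset.sum_congr rfl
        intro j _
        apply Finset.sum_congr rfl
        intro i _
        ring
      rw [step1]
      have step2 : ∀ j, (∑ i, W' i j * pv i) ≤ M := by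
        intro j
        calc ∑ i, W' i j * pv i ≤ ∑ i, M * pv i := by
              apply Finset.sum_le_sum
              intro i _
              exact mul_le_mul_of_nonneg_right (hW'b i j).2 (hpv i)
          _ = M := by rw [← Finset.mul_sum, hpv1, mul_one]
      calc ∑ j, (∑ i, W' i j * pv i) * (pv j * |z s j - z' s j|) ≤
          ∑ j, M * (pv j * |z s j - z' s j|) := by
            apply Finset.sum_le_sum
            intro j _
            exact mul_le_mul_of_nonneg_right (step2 j)
              (mul_nonneg (hpv j) (abs_nonneg _))
        _ = M * efun s := by
            simp only [hefun, Finset.mul_sum]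
            apply Finset.sum_congr rfl
            intro j _
            ring
    calc ∑ i, |fd s i| * pv i ≤
        ∑ i, (|d s i| + (∑ j, W' i j * pv j * |z s j - z' s j|) +
          M * |z s i - z' s i| + M * |z s i - z' s i|) * pv i := by
          apply Finset.sum_le_sum
          intro i _
          exact mul_le_mul_of_nonneg_right (hcomp i) (hpv i)
      _ = hfun s + (∑ i, (∑ j, W' i j * pv j * |z s j - z' s j|) * pv i) + 2*M * efun s := by
          simp only [hhfun, hefun, Finset.mul_sum, ← Finset.sum_add_distrib]
          apply Finset.sum_congr rfl
          intro i _
          ring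
      _ ≤ hfun s + M * efun s + 2*M * efun s := by linarith [hmid]
      _ = hfun s + 3*M * efun s := by ring
  -- integral inequality for efun
  have hint_ineq : ∀ t ∈ Set.Icc (0:ℝ) T, efun t ≤ ∫ s in (0:ℝ)..t, (hfun s + 3*M * efun s) := by
    intro t ht
    have hsub : Set.uIcc (0:ℝ) t ⊆ Set.Ici 0 := by
      rw [Set.uIcc_of_le ht.1]; exact fun x hx => hx.1
    have hsubT : Set.Icc (0:ℝ) t ⊆ Set.Icc 0 T := Set.Icc_subset_Icc le_rfl ht.2
    have hintfd : ∀ i, IntervalIntegrable (fun s => |fd s i| * pv i) volume 0 t :=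
      fun i => ((((hfdc i).abs).mul continuousOn_const).mono hsub).intervalIntegrable
    have hintabs : ∀ i, IntervalIntegrable (fun s => |fd s i|) volume 0 t :=
      fun i => (((hfdc i).abs).mono hsub).intervalIntegrable
    have habs : ∀ i, |z t i - z' t i| ≤ ∫ s in (0:ℝ)..t, |fd s i| := by
      intro i
      rw [hrep t ht i]
      exact intervalIntegral.abs_integral_le_integral_abs ht.1
    calc efun t = ∑ i, |z t i - z' t i| * pv i := rfl
      _ ≤ ∑ i, (∫ s in (0:ℝ)..t, |fd s i|) * pv i := by
          apply Finset.sum_le_sum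
          intro i _
          exact mul_le_mul_of_nonneg_right (habs i) (hpv i)
      _ = ∫ s in (0:ℝ)..t, ∑ i, |fd s i| * pv i := by
          rw [intervalIntegral.integral_finset_sum (fun i _ => hintfd i)]
          apply Finset.sum_congr rfl
          intro i _
          rw [intervalIntegral.integral_mul_const]
      _ ≤ ∫ s in (0:ℝ)..t, (hfun s + 3*M * efun s) := by
          apply intervalIntegral.integral_mono_on ht.1
          · exact ((continuousOn_finset_sum _
              (fun i _ => ((hfdc i).abs).mul continuousOn_const)).mono hsub).intervalIntegrable
          · exact ((hhfunC.add (continuousOn_const.mul hefunC)).mono hsub).intervalIntegrable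
          · intro x hx
            exact hbound x (hsubT hx)
  -- Gronwall
  have key1 : ∀ t ∈ Set.Icc (0:ℝ) T, efun t ≤ Real.exp (3*M*T) * ∫ s in (0:ℝ)..T, hfun s := by
    apply gronwall_aux (by linarith) hT (hefunC.mono hIccIci) (hhfunC.mono hIccIci)
      (fun t _ => hfun_nonneg t) hint_ineq
  have huIccT : Set.uIcc (0:ℝ) T ⊆ Set.Ici 0 := by
    rw [Set.uIcc_of_le hT.le]; exact fun x hx => hx.1
  -- Cauchy-Schwarz pointwise in i
  have hCS : ∀ s, hfun s ≤ Real.sqrt (qfun s) := by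
    intro s
    have hcs := Finset.sum_mul_sq_le_sq_mul_sq Finset.univ
      (fun i => |d s i| * Real.sqrt (pv i)) (fun i => Real.sqrt (pv i))
    have e1 : ∑ i, (|d s i| * Real.sqrt (pv i)) * Real.sqrt (pv i) = hfun s := by
      apply Finset.sum_congr rfl
      intro i _
      rw [mul_assoc, Real.mul_self_sqrt (hpv i)]
    have e2 : ∑ i, (|d s i| * Real.sqrt (pv i))^2 = qfun s := by
      apply Finset.sum_congr rfl
      intro i _
      rw [mul_pow, Real.sq_sqrt (hpv i), sq_abs]
    have e3 : ∑ i, (Real.sqrt (pv i))^2 = 1 := by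
      rw [← hpv1]
      apply Finset.sum_congr rfl
      intro i _
      exact Real.sq_sqrt (hpv i)
    rw [e1, e2, e3, mul_one] at hcs
    calc hfun s = Real.sqrt ((hfun s)^2) := (Real.sqrt_sq (hfun_nonneg s)).symm
      _ ≤ Real.sqrt (qfun s) := Real.sqrt_le_sqrt hcs
  have hintq : IntervalIntegrable qfun volume 0 T := ((hqfunC.mono huIccT)).intervalIntegrable
  have hintsq : IntervalIntegrable (fun s => Real.sqrt (qfun s)) volume 0 T :=
    (((hqfunC.mono huIccT)).sqrt).intervalIntegrable
  have hinth : IntervalIntegrable hfun volume 0 T := ((hhfunC.mono huIccT)).intervalIntegrable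
  have hH_le : (∫ s in (0:ℝ)..T, hfun s) ≤ ∫ s in (0:ℝ)..T, Real.sqrt (qfun s) :=
    intervalIntegral.integral_mono_on hT.le hinth hintsq (fun s _ => hCS s)
  set Q : ℝ := ∫ s in (0:ℝ)..T, qfun s with hQdef
  have hQnn : 0 ≤ Q :=
    intervalIntegral.integral_nonneg hT.le (fun u _ => hqfun_nonneg u)
  have hlam : ∀ l : ℝ, 0 < l →
      (∫ s in (0:ℝ)..T, Real.sqrt (qfun s)) ≤ (l^2 * T + Q) / (2*l) := by
    intro l hl
    have hpt : ∀ u ∈ Set.Icc (0:ℝ) T, Real.sqrt (qfun u) ≤ (l^2 + qfun u)/(2*l) := by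
      intro u _
      have h1 : 0 ≤ qfun u := hqfun_nonneg u
      have h2 : (Real.sqrt (qfun u))^2 = qfun u := Real.sq_sqrt h1
      rw [le_div_iff₀ (by positivity)]
      nlinarith [sq_nonneg (Real.sqrt (qfun u) - l), Real.sqrt_nonneg (qfun u)]
    have hintr : IntervalIntegrable (fun s => (l^2 + qfun s)/(2*l)) volume 0 T :=
      (((continuousOn_const.add (hqfunC.mono huIccT)).div_const _)).intervalIntegrable
    calc (∫ s in (0:ℝ)..T, Real.sqrt (qfun s)) ≤ ∫ s in (0:ℝ)..T, (l^2 + qfun s)/(2*l) :=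
        intervalIntegral.integral_mono_on hT.le hintsq hintr hpt
      _ = (l^2 * T + Q) / (2*l) := by
        rw [intervalIntegral.integral_div]
        rw [intervalIntegral.integral_add intervalIntegrable_const hintq]
        rw [intervalIntegral.integral_const]
        simp only [smul_eq_mul, sub_zero]
        rw [← hQdef]
        ring_nf
  have hfinal : (∫ s in (0:ℝ)..T, Real.sqrt (qfun s)) ≤ Real.sqrt T * Real.sqrt Q := by
    rcases eq_or_lt_of_le hQnn with hQ0 | hQpos
    · have hzero : (∫ s in (0:ℝ)..T, Real.sqrt (qfun s)) ≤ 0 := by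
        by_contra hcon
        push_neg at hcon
        set X := ∫ s in (0:ℝ)..T, Real.sqrt (qfun s) with hX
        have hl : (0:ℝ) < X / T := div_pos hcon hT
        have := hlam (X/T) hl
        rw [← hQ0] at this
        have hexp : ((X/T)^2 * T + 0) / (2*(X/T)) = X/2 := by
          field_simp
          ring
        rw [hexp] at this
        linarith
      calc (∫ s in (0:ℝ)..T, Real.sqrt (qfun s)) ≤ 0 := hzero
        _ ≤ Real.sqrt T * Real.sqrt Q :=
          mul_nonneg (Real.sqrt_nonneg _) (Real.sqrt_nonneg _)
    · have hsT : (0:ℝ) < Real.sqrt T := Real.sqrt_pos.2 hT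
      have hsQ : (0:ℝ) < Real.sqrt Q := Real.sqrt_pos.2 hQpos
      have hl : (0:ℝ) < Real.sqrt Q / Real.sqrt T := div_pos hsQ hsT
      have := hlam _ hl
      have hval : ((Real.sqrt Q / Real.sqrt T)^2 * T + Q) / (2*(Real.sqrt Q / Real.sqrt T)) =
          Real.sqrt T * Real.sqrt Q := by
        have h1 : Real.sqrt T * Real.sqrt T = T := Real.mul_self_sqrt hT.le
        have h2 : Real.sqrt Q * Real.sqrt Q = Q := Real.mul_self_sqrt hQpos.le
        field_simp
        nlinarith [hsT, hsQ, h1, h2, mul_pos hsT hsQ]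
      rw [hval] at this
      exact this
  constructor
  · intro t ht
    have := key1 t ht
    simp only [hefun, hhfun, hd] at this
    exact this
  · have hH2 : (∫ s in (0:ℝ)..T, hfun s) ≤ Real.sqrt T * Real.sqrt Q := hH_le.trans hfinal
    have hexp : (0:ℝ) < Real.exp (3*M*T) := Real.exp_pos _
    have hconc : Real.exp (3*M*T) * (∫ s in (0:ℝ)..T, hfun s) ≤
        Real.sqrt T * Real.exp (3*M*T) * Real.sqrt Q := by
      calc Real.exp (3*M*T) * (∫ s in (0:ℝ)..T, hfun s) ≤
          Real.exp (3*M*T) * (Real.sqrt T * Real.sqrt Q) :=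
            mul_le_mul_of_nonneg_left hH2 hexp.le
        _ = Real.sqrt T * Real.exp (3*M*T) * Real.sqrt Q := by ring
    simp only [hhfun, hqfun, hd, hQdef] at hconc
    exact hconc
end

section
/- Let 0 < m ≤ 1/2, m ≤ M, and let p = (W, z(0), γ, π) be SIS parameters with m ≤ w_{ij} = w_{ji} ≤ M, m ≤ z_i(0) ≤ 1−m, 0 ≤ γ_i ≤ M, and π_i > 0 for all i, with trajectory z. Suppose there exist T₀ > 0 and a vector v ≠ 0 with ∫₀^{T₀} ⟨v, z(t)⟩² dt = 0. Then for every 0 < m' < m and M' > M there exists a symmetric matrix Ŵ ≠ W with m' ≤ ŵ_{ij} ≤ M' for all i,j such that the trajectory ẑ of the SIS model with parameters (Ŵ, z(0), γ, π) satisfies ẑ(t) = z(t) for all t ≥ 0. In particular, W is not reconstructible from the trajectory. -/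
open Set MeasureTheory Filter

/-- A continuous function with zero integral of its square vanishes. -/
lemma sq_integral_zero {g : ℝ → ℝ} {T₀ : ℝ} (hT₀ : 0 < T₀) (hg : ContinuousOn g (Icc 0 T₀))
    (hint : ∫ t in (0:ℝ)..T₀, (g t)^2 = 0) : ∀ t ∈ Icc (0:ℝ) T₀, g t = 0 := by
  have hg2 : ContinuousOn (fun t => (g t)^2) (Icc 0 T₀) := hg.pow 2
  have hInt : IntegrableOn (fun t => (g t)^2) (Ioc 0 T₀) := by
    exact (hg2.integrableOn_Icc).mono_set Ioc_subset_Icc_self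
  rw [intervalIntegral.integral_of_le hT₀.le] at hint
  have hae : (fun t => (g t)^2) =ᵐ[volume.restrict (Ioc 0 T₀)] 0 := by
    refine (setIntegral_eq_zero_iff_of_nonneg_ae ?_ hInt).mp hint
    filter_upwards with t using sq_nonneg _
  have hae0 : ∀ᵐ t ∂volume.restrict (Ioc (0:ℝ) T₀), (g t)^2 = 0 :=
    hae.mono (fun t ht => by simpa using ht)
  have hae' : ∀ᵐ t ∂(volume : Measure ℝ), t ∈ Ioc (0:ℝ) T₀ → (g t)^2 = 0 := by
    rwa [ae_restrict_iff' measurableSet_Ioc] at hae0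
  have hnull : volume {t : ℝ | ¬ (t ∈ Ioc (0:ℝ) T₀ → (g t)^2 = 0)} = 0 := by
    rw [← ae_iff]; exact hae'
  have hIoo : ∀ t ∈ Ioo (0:ℝ) T₀, g t = 0 := by
    intro t₁ ht₁
    by_contra hne
    have hct : ContinuousAt (fun t => (g t)^2) t₁ :=
      hg2.continuousAt (Icc_mem_nhds ht₁.1 ht₁.2)
    have hpos : (0:ℝ) < (g t₁)^2 := by positivity
    have hev : ∀ᶠ t in nhds t₁, (0:ℝ) < (g t)^2 :=
      hct.eventually (eventually_gt_nhds hpos)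
    obtain ⟨a, b, hab, hsub⟩ := mem_nhds_iff_exists_Ioo_subset.mp hev
    set a' := max a 0 with ha'
    set b' := min b T₀ with hb'
    have hsub2 : Ioo a' b' ⊆ {t : ℝ | ¬ (t ∈ Ioc (0:ℝ) T₀ → (g t)^2 = 0)} := by
      intro t ht
      have h1 : t ∈ Ioo a b := ⟨lt_of_le_of_lt (le_max_left a 0) ht.1,
        lt_of_lt_of_le ht.2 (min_le_left b T₀)⟩
      have h2 : t ∈ Ioc (0:ℝ) T₀ := ⟨lt_of_le_of_lt (le_max_right a 0) ht.1,
        le_of_lt (lt_of_lt_of_le ht.2 (min_le_right b T₀))⟩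
      intro hcon
      exact absurd (hcon h2) (ne_of_gt (hsub h1))
    have hmeas : volume (Ioo a' b') = 0 :=
      le_antisymm (hnull ▸ measure_mono hsub2) (by simp)
    have h1 : a' < t₁ := max_lt hab.1 ht₁.1
    have h2 : t₁ < b' := lt_min hab.2 ht₁.2
    rw [Real.volume_Ioo] at hmeas
    have : b' - a' ≤ 0 := by
      by_contra hc
      push_neg at hc
      exact absurd hmeas (by simp [ENNReal.ofReal_eq_zero]; linarith)
    linarith
  -- extend to the closed interval by continuity
  intro t ht
  have hclos : (closure (Ioo (0:ℝ) T₀)) = Icc 0 T₀ := closure_Ioo hT₀.ne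
  rcases eq_or_lt_of_le ht.1 with h0 | h0
  · -- t = 0
    have hcw : ContinuousWithinAt g (Icc 0 T₀) t := hg t ht
    have hne : (Filter.NeBot (nhdsWithin t (Ioo (0:ℝ) T₀))) := by
      rw [mem_closure_iff_nhdsWithin_neBot.symm, hclos]; exact ht
    have htend : Filter.Tendsto g (nhdsWithin t (Ioo (0:ℝ) T₀)) (nhds (g t)) :=
      hcw.tendsto.mono_left (nhdsWithin_mono t Ioo_subset_Icc_self)
    have htend0 : Filter.Tendsto g (nhdsWithin t (Ioo (0:ℝ) T₀)) (nhds 0) := by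
      refine Filter.Tendsto.congr' ?_ tendsto_const_nhds
      filter_upwards [self_mem_nhdsWithin] with s hs using (hIoo s hs).symm
    exact tendsto_nhds_unique htend htend0
  rcases eq_or_lt_of_le ht.2 with hT | hT
  · -- t = T₀
    have hcw : ContinuousWithinAt g (Icc 0 T₀) t := hg t ht
    have hne : (Filter.NeBot (nhdsWithin t (Ioo (0:ℝ) T₀))) := by
      rw [mem_closure_iff_nhdsWithin_neBot.symm, hclos]; exact ht
    have htend : Filter.Tendsto g (nhdsWithin t (Ioo (0:ℝ) T₀)) (nhds (g t)) :=
      hcw.tendsto.mono_left (nhdsWithin_mono t Ioo_subset_Icc_self)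
    have htend0 : Filter.Tendsto g (nhdsWithin t (Ioo (0:ℝ) T₀)) (nhds 0) := by
      refine Filter.Tendsto.congr' ?_ tendsto_const_nhds
      filter_upwards [self_mem_nhdsWithin] with s hs using (hIoo s hs).symm
    exact tendsto_nhds_unique htend htend0
  · exact hIoo t ⟨h0, hT⟩

variable {E : Type*} [NormedAddCommGroup E] [NormedSpace ℝ E]

lemma ode_smooth (b2 : E →L[ℝ] E →L[ℝ] E) (lin : E →L[ℝ] E) {z : ℝ → E}
    (hz : ∀ t ∈ Ici (0:ℝ), HasDerivWithinAt z (b2 (z t) (z t) + lin (z t)) (Ici 0) t) :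
    ∀ k : ℕ, ContDiffOn ℝ k z (Ici 0) := by
  intro k
  induction k with
  | zero =>
    rw [show ((0:ℕ) : WithTop ℕ∞) = 0 from rfl, contDiffOn_zero]
    exact fun t ht => (hz t ht).continuousWithinAt
  | succ k ih =>
    rw [show ((k+1:ℕ) : WithTop ℕ∞) = (k:WithTop ℕ∞) + 1 by norm_cast,
      contDiffOn_succ_iff_derivWithin (uniqueDiffOn_Ici 0)]
    refine ⟨fun t ht => (hz t ht).differentiableWithinAt, by simp, ?_⟩
    have hF : ContDiffOn ℝ k (fun t => b2 (z t) (z t) + lin (z t)) (Ici 0) := by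
      exact ((b2.contDiff.comp_contDiffOn ih).clm_apply ih).add (lin.contDiff.comp_contDiffOn ih)
    refine hF.congr (fun t ht => ?_)
    exact (hz t ht).derivWithin ((uniqueDiffOn_Ici 0) t ht)

lemma ode_deriv_bound (b2 : E →L[ℝ] E →L[ℝ] E) (lin : E →L[ℝ] E) {z : ℝ → E}
    (hz : ∀ t ∈ Ici (0:ℝ), HasDerivWithinAt z (b2 (z t) (z t) + lin (z t)) (Ici 0) t)
    (hzb : ∀ t ∈ Ici (0:ℝ), ‖z t‖ ≤ 1) :
    ∀ k : ℕ, ∀ t ∈ Ici (0:ℝ),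
      ‖iteratedDerivWithin k z (Ici 0) t‖ ≤ k.factorial * (‖b2‖ + ‖lin‖ + 1)^k := by
  have hs : UniqueDiffOn ℝ (Ici (0:ℝ)) := uniqueDiffOn_Ici 0
  set R : ℝ := ‖b2‖ + ‖lin‖ + 1 with hR
  have hR1 : (1:ℝ) ≤ R := by linarith [norm_nonneg b2, norm_nonneg lin]
  have hsm := ode_smooth b2 lin hz
  intro k
  induction k using Nat.strong_induction_on with
  | _ k IH =>
    match k with
    | 0 =>
      intro t ht
      simpa [iteratedDerivWithin_zero] using (hzb t ht).trans (by norm_num)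
    | (k+1) =>
      intro t ht
      rw [iteratedDerivWithin_succ']
      have hEq : Set.EqOn (derivWithin z (Ici 0)) (fun t => b2 (z t) (z t) + lin (z t))
          (Ici (0:ℝ)) := fun s hsmem => (hz s hsmem).derivWithin (hs s hsmem)
      rw [iteratedDerivWithin_congr hEq ht]
      rw [← norm_iteratedFDerivWithin_eq_norm_iteratedDerivWithin]
      have hq : ContDiffOn ℝ k (fun t => b2 (z t) (z t)) (Ici (0:ℝ)) :=
        (b2.contDiff.comp_contDiffOn (hsm k)).clm_apply (hsm k)
      have hl : ContDiffOn ℝ k (fun t => lin (z t)) (Ici (0:ℝ)) :=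
        lin.contDiff.comp_contDiffOn (hsm k)
      have hsplit : (fun t => b2 (z t) (z t) + lin (z t)) =
          ((fun t => b2 (z t) (z t)) + fun t => lin (z t)) := rfl
      rw [hsplit, iteratedFDerivWithin_add_apply (hq t ht) (hl t ht) hs ht]
      have hbound1 : ‖iteratedFDerivWithin ℝ k (fun t => b2 (z t) (z t)) (Ici 0) t‖ ≤
          ‖b2‖ * ∑ i ∈ Finset.range (k + 1), (k.choose i : ℝ) *
            ‖iteratedFDerivWithin ℝ i z (Ici 0) t‖ *
            ‖iteratedFDerivWithin ℝ (k - i) z (Ici 0) t‖ :=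
        b2.norm_iteratedFDerivWithin_le_of_bilinear (hsm k) (hsm k) hs ht le_rfl
      have hbound2 : ‖iteratedFDerivWithin ℝ k (fun t => lin (z t)) (Ici 0) t‖ ≤
          ‖lin‖ * ‖iteratedFDerivWithin ℝ k z (Ici 0) t‖ := by
        rw [show (fun t => lin (z t)) = (lin ∘ z) from rfl,
          lin.iteratedFDerivWithin_comp_left ((hsm k) t ht) hs ht le_rfl]
        exact lin.norm_compContinuousMultilinearMap_le _
      have hIH : ∀ i, i ≤ k → ‖iteratedFDerivWithin ℝ i z (Ici 0) t‖ ≤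
          i.factorial * R ^ i := by
        intro i hi
        rw [norm_iteratedFDerivWithin_eq_norm_iteratedDerivWithin]
        exact IH i (Nat.lt_succ_of_le hi) t ht
      have hsum : ∑ i ∈ Finset.range (k + 1), (k.choose i : ℝ) *
            ‖iteratedFDerivWithin ℝ i z (Ici 0) t‖ *
            ‖iteratedFDerivWithin ℝ (k - i) z (Ici 0) t‖ ≤
          (k+1) * (k.factorial * R ^ k) := by
        have : ∀ i ∈ Finset.range (k + 1), (k.choose i : ℝ) *
            ‖iteratedFDerivWithin ℝ i z (Ici 0) t‖ *
            ‖iteratedFDerivWithin ℝ (k - i) z (Ici 0) t‖ ≤ k.factorial * R ^ k := by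
          intro i hi
          rw [Finset.mem_range, Nat.lt_succ_iff] at hi
          have h1 := hIH i hi
          have h2 := hIH (k - i) (Nat.sub_le k i)
          have hnn1 : (0:ℝ) ≤ ‖iteratedFDerivWithin ℝ i z (Ici 0) t‖ := norm_nonneg _
          have hnn2 : (0:ℝ) ≤ ‖iteratedFDerivWithin ℝ (k-i) z (Ici 0) t‖ := norm_nonneg _
          calc (k.choose i : ℝ) * ‖iteratedFDerivWithin ℝ i z (Ici 0) t‖ *
              ‖iteratedFDerivWithin ℝ (k - i) z (Ici 0) t‖
              ≤ (k.choose i : ℝ) * (i.factorial * R ^ i) *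
                ((k-i).factorial * R ^ (k-i)) := by
                apply mul_le_mul (mul_le_mul le_rfl h1 hnn1 (by positivity)) h2 hnn2 (by positivity)
            _ = (k.choose i : ℝ) * i.factorial * (k-i).factorial * (R ^ i * R ^ (k-i)) := by ring
            _ = k.factorial * R ^ k := by
                rw [← pow_add, Nat.add_sub_cancel' hi]
                congr 1
                rw [← Nat.cast_mul, ← Nat.cast_mul, Nat.choose_mul_factorial_mul_factorial hi]
        calc ∑ i ∈ Finset.range (k + 1), (k.choose i : ℝ) *
              ‖iteratedFDerivWithin ℝ i z (Ici 0) t‖ *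
              ‖iteratedFDerivWithin ℝ (k - i) z (Ici 0) t‖
            ≤ ∑ _i ∈ Finset.range (k + 1), (k.factorial * R ^ k : ℝ) :=
              Finset.sum_le_sum this
          _ = (k+1) * (k.factorial * R ^ k) := by
              rw [Finset.sum_const, Finset.card_range]; push_cast; ring
      have hRnn : (0:ℝ) ≤ R := by linarith
      have hfac : (0:ℝ) < k.factorial * R ^ k := by positivity
      calc ‖iteratedFDerivWithin ℝ k (fun t => b2 (z t) (z t)) (Ici 0) t +
              iteratedFDerivWithin ℝ k (fun t => lin (z t)) (Ici 0) t‖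
          ≤ ‖iteratedFDerivWithin ℝ k (fun t => b2 (z t) (z t)) (Ici 0) t‖ +
            ‖iteratedFDerivWithin ℝ k (fun t => lin (z t)) (Ici 0) t‖ := norm_add_le _ _
        _ ≤ ‖b2‖ * ((k+1) * (k.factorial * R ^ k)) + ‖lin‖ * (k.factorial * R ^ k) := by
            refine add_le_add (hbound1.trans ?_) (hbound2.trans ?_)
            · exact mul_le_mul_of_nonneg_left hsum (ContinuousLinearMap.opNorm_nonneg b2)
            · refine mul_le_mul_of_nonneg_left ?_ (ContinuousLinearMap.opNorm_nonneg lin)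
              rw [norm_iteratedFDerivWithin_eq_norm_iteratedDerivWithin]
              exact IH k (Nat.lt_succ_self k) t ht
        _ ≤ ‖b2‖ * ((k+1) * (k.factorial * R ^ k)) + ‖lin‖ * ((k+1) * (k.factorial * R ^ k)) := by
            have hk1 : (1:ℝ) ≤ (k:ℝ)+1 := by
              have := Nat.cast_nonneg (α := ℝ) k; linarith
            exact add_le_add le_rfl (mul_le_mul_of_nonneg_left
              (le_mul_of_one_le_left hfac.le hk1) (ContinuousLinearMap.opNorm_nonneg lin))
        _ = (‖b2‖ + ‖lin‖) * ((k+1) * (k.factorial * R ^ k)) := by ring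
        _ ≤ R * ((k+1) * (k.factorial * R ^ k)) := by
            have h2 : (‖b2‖ + ‖lin‖) ≤ R := by simp [hR]
            exact mul_le_mul_of_nonneg_right h2 (by positivity)
        _ = (k+1).factorial * R^(k+1) := by
            rw [Nat.factorial_succ]; push_cast; ring

noncomputable def sisLin (n : ℕ) (W : Matrix (Fin n) (Fin n) ℝ) (pv γ : Fin n → ℝ) :
    (Fin n → ℝ) →L[ℝ] (Fin n → ℝ) :=
  LinearMap.toContinuousLinearMap
    { toFun := fun x i => (∑ j, W i j * pv j * x j) - γ i * x i
      map_add' := by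
        intro x y; funext i
        simp only [Pi.add_apply, mul_add]
        rw [Finset.sum_add_distrib]; ring
      map_smul' := by
        intro c x; funext i
        simp only [Pi.smul_apply, smul_eq_mul, RingHom.id_apply]
        have h : ∑ j, W i j * pv j * (c * x j) = c * ∑ j, W i j * pv j * x j := by
          rw [Finset.mul_sum]; exact Finset.sum_congr rfl (fun j _ => by ring)
        rw [h]; ring }

noncomputable def sisBilInner (n : ℕ) (W : Matrix (Fin n) (Fin n) ℝ) (pv : Fin n → ℝ)
    (x : Fin n → ℝ) : (Fin n → ℝ) →L[ℝ] (Fin n → ℝ) :=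
  LinearMap.toContinuousLinearMap
    { toFun := fun y i => -(x i) * ∑ j, W i j * pv j * y j
      map_add' := by
        intro y y'; funext i
        simp only [Pi.add_apply, mul_add]
        rw [Finset.sum_add_distrib]; ring
      map_smul' := by
        intro c y; funext i
        simp only [Pi.smul_apply, smul_eq_mul, RingHom.id_apply]
        have h : ∑ j, W i j * pv j * (c * y j) = c * ∑ j, W i j * pv j * y j := by
          rw [Finset.mul_sum]; exact Finset.sum_congr rfl (fun j _ => by ring)
        rw [h]; ring }

noncomputable def sisBil (n : ℕ) (W : Matrix (Fin n) (Fin n) ℝ) (pv : Fin n → ℝ) :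
    (Fin n → ℝ) →L[ℝ] (Fin n → ℝ) →L[ℝ] (Fin n → ℝ) :=
  LinearMap.toContinuousLinearMap
    { toFun := sisBilInner n W pv
      map_add' := by
        intro x x'
        apply ContinuousLinearMap.ext; intro y
        simp only [sisBilInner, LinearMap.coe_toContinuousLinearMap', LinearMap.coe_mk,
          AddHom.coe_mk, ContinuousLinearMap.add_apply]
        funext i
        simp only [Pi.add_apply]
        ring
      map_smul' := by
        intro c x
        apply ContinuousLinearMap.ext; intro y
        simp only [sisBilInner, LinearMap.coe_toContinuousLinearMap', LinearMap.coe_mk,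
          AddHom.coe_mk, RingHom.id_apply, ContinuousLinearMap.smul_apply]
        funext i
        simp only [Pi.smul_apply, smul_eq_mul]
        ring }

noncomputable def sisPhi (n : ℕ) (v : Fin n → ℝ) : (Fin n → ℝ) →L[ℝ] ℝ :=
  LinearMap.toContinuousLinearMap
    { toFun := fun x => ∑ i, v i * x i
      map_add' := by
        intro x y
        simp only [Pi.add_apply, mul_add]
        rw [Finset.sum_add_distrib]
      map_smul' := by
        intro c x
        simp only [Pi.smul_apply, smul_eq_mul, RingHom.id_apply]
        rw [Finset.mul_sum]
        exact Finset.sum_congr rfl (fun j _ => by ring) }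

@[simp] lemma sisLin_apply (n : ℕ) (W : Matrix (Fin n) (Fin n) ℝ) (pv γ : Fin n → ℝ)
    (x : Fin n → ℝ) (i : Fin n) :
    sisLin n W pv γ x i = (∑ j, W i j * pv j * x j) - γ i * x i := by
  simp [sisLin, LinearMap.coe_toContinuousLinearMap']

@[simp] lemma sisBil_apply (n : ℕ) (W : Matrix (Fin n) (Fin n) ℝ) (pv : Fin n → ℝ)
    (x y : Fin n → ℝ) (i : Fin n) :
    sisBil n W pv x y i = -(x i) * ∑ j, W i j * pv j * y j := by
  simp [sisBil, sisBilInner, LinearMap.coe_toContinuousLinearMap']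

@[simp] lemma sisPhi_apply (n : ℕ) (v : Fin n → ℝ) (x : Fin n → ℝ) :
    sisPhi n v x = ∑ i, v i * x i := by
  simp [sisPhi, LinearMap.coe_toContinuousLinearMap']

lemma taylor_ext_step {g : ℝ → ℝ} {C R T₀ : ℝ} (hR : 1 ≤ R) (hC : 0 ≤ C)
    (hg : ∀ k : ℕ, ContDiffOn ℝ k g (Ici 0))
    (hb : ∀ k : ℕ, ∀ t ∈ Ici (0:ℝ), ‖iteratedDerivWithin k g (Ici 0) t‖ ≤ C * k.factorial * R^k)
    (hT₀ : 0 < T₀) {T : ℝ} (hT : T₀ ≤ T) (hzero : ∀ t ∈ Icc (0:ℝ) T, g t = 0) :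
    ∀ t ∈ Icc (0:ℝ) (T + min T₀ (1/R) / 4), g t = 0 := by
  have hRpos : (0:ℝ) < R := lt_of_lt_of_le one_pos hR
  set σ : ℝ := min T₀ (1/R) / 4 with hσ
  have hσpos : 0 < σ := by
    have : 0 < min T₀ (1/R) := lt_min hT₀ (by positivity)
    positivity
  have hσT₀ : σ ≤ T₀/4 := by
    have := min_le_left T₀ (1/R); rw [hσ]; linarith
  have hσR : σ ≤ 1/(4*R) := by
    have h := min_le_right T₀ (1/R)
    have : (1:ℝ)/(4*R) = (1/R)/4 := by field_simp
    rw [hσ, this]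
    linarith
  intro t ht
  rcases le_or_gt t T with htT | htT
  · exact hzero t ⟨ht.1, htT⟩
  -- T < t ≤ T + σ
  set x₀ : ℝ := T - σ with hx₀
  have hx₀pos : 0 < x₀ := by
    have : σ < T₀ := lt_of_le_of_lt hσT₀ (by linarith)
    simp only [hx₀]; linarith
  have hx₀t : x₀ < t := by simp only [hx₀]; linarith
  have hx₀T : x₀ < T := by simp only [hx₀]; linarith
  have htx₀ : t - x₀ ≤ 2*σ := by simp only [hx₀]; rcases ht with ⟨_, h2⟩; linarith
  have hhalf : R * (t - x₀) ≤ 1/2 := by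
    calc R * (t - x₀) ≤ R * (2*σ) := by
          apply mul_le_mul_of_nonneg_left htx₀ hRpos.le
      _ ≤ R * (2 * (1/(4*R))) := by
          apply mul_le_mul_of_nonneg_left (by linarith) hRpos.le
      _ = (R * R⁻¹) / 2 := by ring
      _ = 1/2 := by rw [mul_inv_cancel₀ (ne_of_gt hRpos)]
  have hsub : Icc x₀ t ⊆ Ici (0:ℝ) := fun s hs => le_trans hx₀pos.le hs.1
  -- key: for every N, |g t| ≤ C * (1/2)^(N+1)
  have key : ∀ N : ℕ, |g t| ≤ C * (1/2)^(N+1) := by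
    intro N
    have hf : ContDiffOn ℝ N g (Icc x₀ t) := (hg N).mono hsub
    have hf' : DifferentiableOn ℝ (iteratedDerivWithin N g (Icc x₀ t)) (Ioo x₀ t) := by
      refine (((hg (N+1)).mono hsub).differentiableOn_iteratedDerivWithin ?_
        (uniqueDiffOn_Icc hx₀t)).mono Ioo_subset_Icc_self
      exact_mod_cast Nat.lt_succ_self N
    obtain ⟨x', hx', heq⟩ := taylor_mean_remainder_lagrange hx₀t.ne
      (by rwa [uIcc_of_le hx₀t.le]) (by rwa [uIcc_of_le hx₀t.le, uIoo_of_le hx₀t.le])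
    rw [uIoo_of_le hx₀t.le] at hx'
    rw [uIcc_of_le hx₀t.le] at heq
    -- Taylor polynomial vanishes
    have hpoly : taylorWithinEval g N (Icc x₀ t) x₀ t = 0 := by
      rw [taylor_within_apply]
      apply Finset.sum_eq_zero
      intro k _
      have hseteq : Icc x₀ t ∩ Iio T = Ico x₀ T := by
        ext u
        simp only [mem_inter_iff, mem_Icc, mem_Iio, mem_Ico]
        constructor
        · rintro ⟨⟨h1, _⟩, h3⟩; exact ⟨h1, h3⟩
        · rintro ⟨h1, h3⟩; exact ⟨⟨h1, le_trans h3.le htT.le⟩, h3⟩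
      have hmem : Iio T ∈ nhds x₀ := Iio_mem_nhds hx₀T
      have e1 : iteratedDerivWithin k g (Icc x₀ t) x₀ =
          iteratedDerivWithin k g (Ico x₀ T) x₀ := by
        rw [iteratedDerivWithin, iteratedDerivWithin, ← iteratedFDerivWithin_inter hmem, hseteq]
      have e2 : iteratedDerivWithin k g (Ico x₀ T) x₀ = 0 := by
        have hEq : Set.EqOn g (fun _ => (0:ℝ)) (Ico x₀ T) := by
          intro s hs
          exact hzero s ⟨le_trans hx₀pos.le hs.1, hs.2.le⟩
        have hx₀mem : x₀ ∈ Ico x₀ T := ⟨le_rfl, hx₀T⟩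
        rw [iteratedDerivWithin_congr hEq hx₀mem]
        rw [iteratedDerivWithin, iteratedFDerivWithin_zero_fun]
        simp
      rw [e1, e2, smul_zero]
    rw [hpoly, sub_zero] at heq
    -- bound the remainder
    have e3 : iteratedDerivWithin (N+1) g (Icc x₀ t) x' =
        iteratedDerivWithin (N+1) g (Ici 0) x' := by
      have hmem : Ioo x₀ t ∈ nhds x' := Ioo_mem_nhds hx'.1 hx'.2
      have i1 : Icc x₀ t ∩ Ioo x₀ t = Ioo x₀ t := inter_eq_self_of_subset_right Ioo_subset_Icc_self
      have i2 : Ici (0:ℝ) ∩ Ioo x₀ t = Ioo x₀ t :=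
        inter_eq_self_of_subset_right (fun s hs => le_trans hx₀pos.le hs.1.le)
      rw [iteratedDerivWithin, iteratedDerivWithin,
        ← iteratedFDerivWithin_inter (s := Icc x₀ t) hmem,
        ← iteratedFDerivWithin_inter (s := Ici (0:ℝ)) hmem, i1, i2]
    have hbd : |iteratedDerivWithin (N+1) g (Ici 0) x'| ≤ C * (N+1).factorial * R^(N+1) := by
      have := hb (N+1) x' (le_trans hx₀pos.le hx'.1.le)
      simpa using this
    rw [heq, e3]
    rw [abs_div, abs_mul]
    have hfacpos : (0:ℝ) < ((N+1).factorial : ℝ) := by positivity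
    have htx0 : (0:ℝ) ≤ t - x₀ := by linarith
    have habs2 : |(t - x₀)^(N+1)| = (t - x₀)^(N+1) := abs_of_nonneg (pow_nonneg htx0 _)
    have habs3 : |((N+1).factorial : ℝ)| = ((N+1).factorial : ℝ) := abs_of_pos hfacpos
    rw [habs2, habs3]
    rw [div_le_iff₀ hfacpos]
    calc |iteratedDerivWithin (N+1) g (Ici 0) x'| * (t - x₀)^(N+1)
        ≤ (C * (N+1).factorial * R^(N+1)) * (t - x₀)^(N+1) := by
          apply mul_le_mul_of_nonneg_right hbd (pow_nonneg htx0 _)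
      _ = C * ((N+1).factorial) * (R * (t-x₀))^(N+1) := by rw [mul_pow]; ring
      _ ≤ C * ((N+1).factorial) * (1/2)^(N+1) := by
          apply mul_le_mul_of_nonneg_left (pow_le_pow_left₀ (mul_nonneg hRpos.le htx0) hhalf _)
          positivity
      _ = C * (1/2)^(N+1) * ((N+1).factorial) := by ring
  -- take the limit
  have hlim : Filter.Tendsto (fun N : ℕ => C * (1/2:ℝ)^(N+1)) atTop (nhds 0) := by
    have h1 : Filter.Tendsto (fun N : ℕ => (1/2:ℝ)^N) atTop (nhds 0) :=
      tendsto_pow_atTop_nhds_zero_of_lt_one (by norm_num) (by norm_num)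
    have h2 := (h1.const_mul C).comp (tendsto_add_atTop_nat 1)
    simpa [Function.comp_def] using h2
  have : |g t| ≤ 0 := ge_of_tendsto' hlim key
  exact abs_eq_zero.mp (le_antisymm this (abs_nonneg _))

lemma unique_continuation {g : ℝ → ℝ} {C R T₀ : ℝ} (hR : 1 ≤ R) (hC : 0 ≤ C)
    (hg : ∀ k : ℕ, ContDiffOn ℝ k g (Ici 0))
    (hb : ∀ k : ℕ, ∀ t ∈ Ici (0:ℝ), ‖iteratedDerivWithin k g (Ici 0) t‖ ≤ C * k.factorial * R^k)
    (hT₀ : 0 < T₀) (h0 : ∀ t ∈ Icc (0:ℝ) T₀, g t = 0) :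
    ∀ t ∈ Ici (0:ℝ), g t = 0 := by
  have hRpos : (0:ℝ) < R := lt_of_lt_of_le one_pos hR
  set σ : ℝ := min T₀ (1/R) / 4 with hσ
  have hσpos : 0 < σ := by
    have : 0 < min T₀ (1/R) := lt_min hT₀ (by positivity)
    positivity
  have hstep : ∀ j : ℕ, ∀ t ∈ Icc (0:ℝ) (T₀ + j*σ), g t = 0 := by
    intro j
    induction j with
    | zero => simpa using h0
    | succ j ih =>
      have h1 : T₀ ≤ T₀ + j*σ := by
        have : (0:ℝ) ≤ j*σ := by positivity
        linarith
      have := taylor_ext_step hR hC hg hb hT₀ h1 ih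
      intro t ht
      apply this t
      rw [← hσ]
      constructor
      · exact ht.1
      · have : (j+1 : ℕ) * σ = j * σ + σ := by push_cast; ring
        rw [this] at ht
        -- reassociate
        have := ht.2
        push_cast at this ⊢
        linarith
  intro t ht
  obtain ⟨j, hj⟩ := exists_nat_ge ((t - T₀)/σ)
  have : t ≤ T₀ + j*σ := by
    rw [div_le_iff₀ hσpos] at hj
    linarith
  exact hstep j t ⟨ht, this⟩

/-- If some nonzero `v` satisfies `∫₀^{T₀} ⟨v, z(t)⟩² dt = 0`, then for any
`0 < m' < m` and `M' > M` there is a symmetric matrix `Ŵ ≠ W` with entries in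
`[m', M']` such that `z` itself solves the SIS system with weights `Ŵ`
(i.e. the trajectory of `(Ŵ, z(0), γ, π)` coincides with `z`); hence `W` is not
reconstructible from the trajectory. -/
theorem stmt_4 {n : ℕ} (m M : ℝ) (hm : 0 < m) (hm2 : m ≤ 1 / 2) (hmM : m ≤ M)
    (W : Matrix (Fin n) (Fin n) ℝ) (pv γ : Fin n → ℝ)
    (z : ℝ → Fin n → ℝ)
    (hWsymm : W.IsSymm) (hWb : ∀ i j, W i j ∈ Set.Icc m M)
    (hz0 : ∀ i, z 0 i ∈ Set.Icc m (1 - m))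
    (hγ : ∀ i, γ i ∈ Set.Icc (0 : ℝ) M)
    (hpv : ∀ i, 0 < pv i) (hpv1 : ∑ i, pv i = 1)
    (hode : ∀ i, ∀ t ∈ Set.Ici (0 : ℝ), HasDerivWithinAt (fun s => z s i)
      ((1 - z t i) * (∑ j, W i j * pv j * z t j) - γ i * z t i) (Set.Ici 0) t)
    (hz01 : ∀ t ∈ Set.Ici (0 : ℝ), ∀ i, z t i ∈ Set.Icc (0 : ℝ) 1)
    (T₀ : ℝ) (hT₀ : 0 < T₀)
    (v : Fin n → ℝ) (hv : v ≠ 0)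
    (hint : ∫ t in (0 : ℝ)..T₀, (∑ i, v i * z t i) ^ 2 = 0)
    (m' M' : ℝ) (hm' : 0 < m') (hm'm : m' < m) (hMM' : M < M') :
    ∃ W' : Matrix (Fin n) (Fin n) ℝ, W' ≠ W ∧ W'.IsSymm ∧
      (∀ i j, W' i j ∈ Set.Icc m' M') ∧
      (∀ i, ∀ t ∈ Set.Ici (0 : ℝ), HasDerivWithinAt (fun s => z s i)
        ((1 - z t i) * (∑ j, W' i j * pv j * z t j) - γ i * z t i) (Set.Ici 0) t) := by
  classical
  have hs : UniqueDiffOn ℝ (Ici (0:ℝ)) := uniqueDiffOn_Ici 0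
  -- the vector-valued ODE
  have hzv : ∀ t ∈ Ici (0:ℝ), HasDerivWithinAt z
      (sisBil n W pv (z t) (z t) + sisLin n W pv γ (z t)) (Ici 0) t := by
    intro t ht
    rw [hasDerivWithinAt_pi]
    intro i
    have h := hode i t ht
    have he : (sisBil n W pv (z t) (z t) + sisLin n W pv γ (z t)) i =
        (1 - z t i) * (∑ j, W i j * pv j * z t j) - γ i * z t i := by
      simp only [Pi.add_apply, sisBil_apply, sisLin_apply]
      ring
    rw [he]
    exact h
  have hzb : ∀ t ∈ Ici (0:ℝ), ‖z t‖ ≤ 1 := by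
    intro t ht
    rw [pi_norm_le_iff_of_nonneg zero_le_one]
    intro i
    have h := hz01 t ht i
    rw [Real.norm_eq_abs, abs_le]
    exact ⟨by linarith [h.1], h.2⟩
  have hsm := ode_smooth (sisBil n W pv) (sisLin n W pv γ) hzv
  have hbd := ode_deriv_bound (sisBil n W pv) (sisLin n W pv γ) hzv hzb
  set R : ℝ := ‖sisBil n W pv‖ + ‖sisLin n W pv γ‖ + 1 with hRdef
  have hR1 : (1:ℝ) ≤ R := by
    have h1 := ContinuousLinearMap.opNorm_nonneg (sisBil n W pv)
    have h2 := ContinuousLinearMap.opNorm_nonneg (sisLin n W pv γ)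
    rw [hRdef]; linarith
  have hgφ : (fun t => ∑ i, v i * z t i) = (sisPhi n v) ∘ z := by
    funext t; simp [Function.comp]
  have hgsm : ∀ k : ℕ, ContDiffOn ℝ k (fun t => ∑ i, v i * z t i) (Ici 0) := by
    intro k
    rw [hgφ]
    exact (sisPhi n v).contDiff.comp_contDiffOn (hsm k)
  have hgb : ∀ k : ℕ, ∀ t ∈ Ici (0:ℝ),
      ‖iteratedDerivWithin k (fun t => ∑ i, v i * z t i) (Ici 0) t‖ ≤
        ‖sisPhi n v‖ * k.factorial * R^k := by
    intro k t ht
    rw [← norm_iteratedFDerivWithin_eq_norm_iteratedDerivWithin, hgφ,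
      (sisPhi n v).iteratedFDerivWithin_comp_left ((hsm k) t ht) hs ht le_rfl]
    calc ‖(sisPhi n v).compContinuousMultilinearMap (iteratedFDerivWithin ℝ k z (Ici 0) t)‖
        ≤ ‖sisPhi n v‖ * ‖iteratedFDerivWithin ℝ k z (Ici 0) t‖ :=
          (sisPhi n v).norm_compContinuousMultilinearMap_le _
      _ ≤ ‖sisPhi n v‖ * (k.factorial * R^k) := by
          refine mul_le_mul_of_nonneg_left ?_ (ContinuousLinearMap.opNorm_nonneg (sisPhi n v))
          rw [norm_iteratedFDerivWithin_eq_norm_iteratedDerivWithin]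
          exact hbd k t ht
      _ = ‖sisPhi n v‖ * k.factorial * R^k := by ring
  have h0 : ∀ t ∈ Icc (0:ℝ) T₀, (∑ i, v i * z t i) = 0 := by
    refine sq_integral_zero hT₀ ?_ hint
    exact ((hgsm 0).continuousOn).mono (fun s hsmem => le_trans (le_refl 0) hsmem.1)
  have gzero : ∀ t ∈ Ici (0:ℝ), (∑ i, v i * z t i) = 0 :=
    unique_continuation hR1 (ContinuousLinearMap.opNorm_nonneg (sisPhi n v)) hgsm hgb hT₀ h0
  -- construct the perturbed matrix
  obtain ⟨i₀, hi₀⟩ := Function.ne_iff.mp hv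
  set K : ℝ := (∑ i, |v i| / pv i)^2 + 1 with hKdef
  have hKpos : 0 < K := by positivity
  have hKb : ∀ i j, |(v i / pv i) * (v j / pv j)| ≤ K := by
    intro i j
    have h1 : ∀ l, |v l / pv l| ≤ ∑ i, |v i| / pv i := by
      intro l
      rw [abs_div, abs_of_pos (hpv l)]
      exact Finset.single_le_sum (f := fun i => |v i| / pv i)
        (fun i _ => div_nonneg (abs_nonneg _) (hpv i).le) (Finset.mem_univ l)
    rw [abs_mul]
    calc |v i / pv i| * |v j / pv j| ≤ (∑ i, |v i| / pv i) * (∑ i, |v i| / pv i) :=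
          mul_le_mul (h1 i) (h1 j) (abs_nonneg _) (le_trans (abs_nonneg _) (h1 i))
      _ = (∑ i, |v i| / pv i)^2 := (sq _).symm
      _ ≤ K := by rw [hKdef]; linarith
  have hmin : 0 < min (m - m') (M' - M) := lt_min (by linarith) (by linarith)
  set ε : ℝ := min (m - m') (M' - M) / K with hεdef
  have hεpos : 0 < ε := by positivity
  set W' : Matrix (Fin n) (Fin n) ℝ :=
    Matrix.of (fun i j => W i j + ε * ((v i / pv i) * (v j / pv j))) with hW'def
  have hW'app : ∀ i j, W' i j = W i j + ε * ((v i / pv i) * (v j / pv j)) := fun i j => rfl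
  have hpert : ∀ i j, |ε * ((v i / pv i) * (v j / pv j))| ≤ min (m - m') (M' - M) := by
    intro i j
    rw [abs_mul, abs_of_pos hεpos]
    calc ε * |(v i / pv i) * (v j / pv j)| ≤ ε * K :=
          mul_le_mul_of_nonneg_left (hKb i j) hεpos.le
      _ = min (m - m') (M' - M) := by
          rw [hεdef]; field_simp
  refine ⟨W', ?_, ?_, ?_, ?_⟩
  · -- W' ≠ W
    intro hEq
    have h1 : W' i₀ i₀ = W i₀ i₀ := by rw [hEq]
    rw [hW'app] at h1
    have h2 : ε * ((v i₀ / pv i₀) * (v i₀ / pv i₀)) = 0 := by linarith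
    have h3 : v i₀ / pv i₀ ≠ 0 := div_ne_zero hi₀ (hpv i₀).ne'
    exact (mul_ne_zero hεpos.ne' (mul_ne_zero h3 h3)) h2
  · -- symmetry
    rw [Matrix.IsSymm.ext_iff]
    intro i j
    rw [hW'app, hW'app, Matrix.IsSymm.ext_iff.mp hWsymm i j]
    ring
  · -- entry bounds
    intro i j
    have h := hpert i j
    have hW := hWb i j
    rw [abs_le] at h
    have hl := min_le_left (m - m') (M' - M)
    have hr := min_le_right (m - m') (M' - M)
    constructor
    · rw [hW'app]; linarith [hW.1, h.1]
    · rw [hW'app]; linarith [hW.2, h.2]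
  · -- the ODE with the new weights
    intro i t ht
    have hsum : (∑ j, W' i j * pv j * z t j) = ∑ j, W i j * pv j * z t j := by
      have hterm : ∀ j, W' i j * pv j * z t j
          = W i j * pv j * z t j + (ε * (v i / pv i)) * (v j * z t j) := by
        intro j
        have hj : v j / pv j * pv j = v j := div_mul_cancel₀ _ (hpv j).ne'
        rw [hW'app]
        calc (W i j + ε * ((v i / pv i) * (v j / pv j))) * pv j * z t j
            = W i j * pv j * z t j + (ε * (v i / pv i)) * ((v j / pv j * pv j) * z t j) := by
              ring
          _ = W i j * pv j * z t j + (ε * (v i / pv i)) * (v j * z t j) := by rw [hj]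
      rw [Finset.sum_congr rfl (fun j _ => hterm j), Finset.sum_add_distrib, ← Finset.mul_sum]
      rw [gzero t ht, mul_zero, add_zero]
    rw [hsum]
    exact hode i t ht
end

section
/- Let p = (W, z(0), γ, π) be SIS parameters with W symmetric and nonnegative, γ nonnegative, z(0) ∈ [0,1]ⁿ, and trajectory z. Suppose p is block regular with partition V₁,…,V_K of V = {1,…,n}, i.e., for each block z(0) and γ are constant on the block and for all blocks V_k, V_l and all i₁, i₂ ∈ V_k one has Σ_{j ∈ V_l} a_{i₁ j} = Σ_{j ∈ V_l} a_{i₂ j}, where A = WΠ = (a_{ij}). Then for every block V_k and all i₁, i₂ ∈ V_k, z_{i₁}(t) = z_{i₂}(t) for all t ≥ 0. In particular, if some block contains two distinct indices i₁ ≠ i₂, the nonzero vector v with v_{i₁} = 1, v_{i₂} = −1 and all other entries 0 satisfies ⟨v, z(t)⟩ = 0 for all t ≥ 0. -/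
/-- If the SIS parameters are block regular (with block map `P : Fin n → Fin K`),
then the trajectory is constant on blocks for all `t ≥ 0`; in particular for two
distinct indices `i₁ ≠ i₂` in the same block, the nonzero vector `v` with
`v_{i₁} = 1`, `v_{i₂} = −1`, zero elsewhere, satisfies `⟨v, z(t)⟩ = 0` for all
`t ≥ 0`. -/
theorem stmt_7 {n : ℕ} (W : Matrix (Fin n) (Fin n) ℝ) (pv γ : Fin n → ℝ)
    (z : ℝ → Fin n → ℝ)
    (hWsymm : W.IsSymm) (hWpos : ∀ i j, 0 ≤ W i j)
    (hpv : ∀ i, 0 ≤ pv i) (hpv1 : ∑ i, pv i = 1) (hγ : ∀ i, 0 ≤ γ i)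
    (hz0 : ∀ i, z 0 i ∈ Set.Icc (0 : ℝ) 1)
    (hode : ∀ i, ∀ t ∈ Set.Ici (0 : ℝ), HasDerivWithinAt (fun s => z s i)
      ((1 - z t i) * (∑ j, W i j * pv j * z t j) - γ i * z t i) (Set.Ici 0) t)
    (hz01 : ∀ t ∈ Set.Ici (0 : ℝ), ∀ i, z t i ∈ Set.Icc (0 : ℝ) 1)
    (K : ℕ) (P : Fin n → Fin K)
    (hz0blk : ∀ i₁ i₂, P i₁ = P i₂ → z 0 i₁ = z 0 i₂)
    (hγblk : ∀ i₁ i₂, P i₁ = P i₂ → γ i₁ = γ i₂)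
    (hrowblk : ∀ i₁ i₂, P i₁ = P i₂ → ∀ l : Fin K,
      ∑ j ∈ Finset.univ.filter (fun j => P j = l), W i₁ j * pv j =
      ∑ j ∈ Finset.univ.filter (fun j => P j = l), W i₂ j * pv j) :
    (∀ t ≥ (0 : ℝ), ∀ i₁ i₂, P i₁ = P i₂ → z t i₁ = z t i₂) ∧
    (∀ i₁ i₂ : Fin n, i₁ ≠ i₂ → P i₁ = P i₂ →
      (fun j => if j = i₁ then (1 : ℝ) else if j = i₂ then -1 else 0) ≠ 0 ∧
      ∀ t ≥ (0 : ℝ),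
        ∑ j, (if j = i₁ then (1 : ℝ) else if j = i₂ then -1 else 0) * z t j = 0) := by
  classical
  -- representative of the block of `j`
  have hrex : ∀ j : Fin n, (Finset.univ.filter fun j' => P j' = P j).Nonempty :=
    fun j => ⟨j, Finset.mem_filter.2 ⟨Finset.mem_univ j, rfl⟩⟩
  set r : Fin n → Fin n := fun j => (Finset.univ.filter fun j' => P j' = P j).min' (hrex j)
    with hrdef
  have hPr : ∀ j, P (r j) = P j := fun j =>
    (Finset.mem_filter.1 ((Finset.univ.filter fun j' => P j' = P j).min'_mem (hrex j))).2
  have hrcong : ∀ j j', P j = P j' → r j = r j' := by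
    intro j j' h
    have hset : (Finset.univ.filter fun j'' => P j'' = P j)
        = (Finset.univ.filter fun j'' => P j'' = P j') := by
      ext x; simp [h]
    simp only [hrdef]
    congr 1
  -- auxiliary quantities
  set S : ℝ → Fin n → ℝ := fun s i => ∑ j, W i j * pv j * z s j with hSdef
  set F : ℝ → Fin n → ℝ := fun s i => (1 - z s i) * S s i - γ i * z s i with hFdef
  set f : ℝ → Fin n × Fin n → ℝ :=
    fun s p => if P p.1 = P p.2 then z s p.1 - z s p.2 else 0 with hfdef
  set f' : ℝ → Fin n × Fin n → ℝ :=
    fun s p => if P p.1 = P p.2 then F s p.1 - F s p.2 else 0 with hf'def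
  set B : ℝ := ∑ i, ∑ j, W i j * pv j with hBdef
  set G : ℝ := ∑ j, γ j with hGdef
  set C : ℝ := 3 * B + G with hCdef
  have hanon : ∀ i j, 0 ≤ W i j * pv j := fun i j => mul_nonneg (hWpos i j) (hpv j)
  have hrow : ∀ i, ∑ j, W i j * pv j ≤ B := by
    intro i
    exact Finset.single_le_sum (f := fun i => ∑ j, W i j * pv j)
      (fun i _ => Finset.sum_nonneg fun j _ => hanon i j) (Finset.mem_univ i)
  have hB0 : 0 ≤ B := Finset.sum_nonneg fun i _ =>
    Finset.sum_nonneg fun j _ => hanon i j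
  have hG0 : 0 ≤ G := Finset.sum_nonneg fun j _ => hγ j
  have hC0 : 0 ≤ C := by positivity
  -- bound on S
  have hSb : ∀ s ∈ Set.Ici (0 : ℝ), ∀ i, |S s i| ≤ B := by
    intro s hs i
    rw [abs_le]
    constructor
    · have : (0 : ℝ) ≤ S s i := Finset.sum_nonneg fun j _ =>
        mul_nonneg (hanon i j) (hz01 s hs j).1
      linarith
    · calc S s i ≤ ∑ j, W i j * pv j := by
            apply Finset.sum_le_sum
            intro j _
            have := (hz01 s hs j).2
            nlinarith [hanon i j]
        _ ≤ B := hrow i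
  -- key cancellation using block regularity
  have hcancel : ∀ s : ℝ, ∀ i i', P i = P i' →
      ∑ j, (W i j * pv j - W i' j * pv j) * z s (r j) = 0 := by
    intro s i i' h
    have hgen : ∀ i'' : Fin n, ∑ j, W i'' j * pv j * z s (r j)
        = ∑ l : Fin K, (∑ j ∈ Finset.univ.filter fun j => P j = l, W i'' j * pv j)
            * (if hne : (Finset.univ.filter fun j => P j = l).Nonempty
                then z s (r hne.choose) else 0) := by
      intro i''
      rw [← Finset.sum_fiberwise Finset.univ P (fun j => W i'' j * pv j * z s (r j))]
      refine Finset.sum_congr rfl fun l _ => ?_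
      rcases (Finset.univ.filter fun j => P j = l).eq_empty_or_nonempty with he | hne
      · simp [he]
      · rw [dif_pos hne]
        have hcst : ∀ j ∈ Finset.univ.filter fun j => P j = l,
            W i'' j * pv j * z s (r j) = W i'' j * pv j * z s (r hne.choose) := by
          intro j hj
          have h1 : P j = l := (Finset.mem_filter.1 hj).2
          have h2 : P hne.choose = l := (Finset.mem_filter.1 hne.choose_spec).2
          rw [hrcong j hne.choose (h1.trans h2.symm)]
        rw [Finset.sum_congr rfl hcst, ← Finset.sum_mul]
    have h1 := hgen i
    have h2 := hgen i'
    have : ∑ j, (W i j * pv j - W i' j * pv j) * z s (r j)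
        = (∑ j, W i j * pv j * z s (r j)) - ∑ j, W i' j * pv j * z s (r j) := by
      rw [← Finset.sum_sub_distrib]
      exact Finset.sum_congr rfl fun j _ => by ring
    rw [this, h1, h2, ← Finset.sum_sub_distrib]
    apply Finset.sum_eq_zero
    intro l _
    rw [hrowblk i i' h l]
    ring
  -- main claim
  have main : ∀ t ≥ (0 : ℝ), ∀ i₁ i₂, P i₁ = P i₂ → z t i₁ = z t i₂ := by
    intro t ht i₁ i₂ hP
    -- Grönwall on [0, t]
    have hzc : ∀ i, ContinuousOn (fun s => z s i) (Set.Ici (0 : ℝ)) :=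
      fun i s hs => (hode i s hs).continuousWithinAt
    have hfc : ContinuousOn f (Set.Icc (0 : ℝ) t) := by
      refine ContinuousOn.mono ?_ Set.Icc_subset_Ici_self
      refine continuousOn_pi.2 fun p => ?_
      by_cases h : P p.1 = P p.2
      · simpa only [hfdef, if_pos h] using (show ContinuousOn (fun y => z y p.1 - z y p.2) (Set.Ici 0) from
          (hzc p.1).sub (hzc p.2))
      · simpa only [hfdef, if_neg h] using continuousOn_const
    have hfd : ∀ s ∈ Set.Ico (0 : ℝ) t, HasDerivWithinAt f (f' s) (Set.Ici s) s := by
      intro s hs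
      refine hasDerivWithinAt_pi.2 fun p => ?_
      by_cases h : P p.1 = P p.2
      · simp only [hfdef, hf'def, if_pos h]
        exact (((hode p.1 s hs.1).sub (hode p.2 s hs.1)).mono
          (Set.Ici_subset_Ici.2 hs.1))
      · simp only [hfdef, hf'def, if_neg h]
        exact hasDerivWithinAt_const _ _ _
    have hf0 : ‖f 0‖ ≤ 0 := by
      have : f 0 = 0 := by
        funext p
        simp only [hfdef]
        by_cases h : P p.1 = P p.2
        · rw [if_pos h, hz0blk p.1 p.2 h, sub_self]; rfl
        · rw [if_neg h]; rfl
      rw [this, norm_zero]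
    have hbound : ∀ s ∈ Set.Ico (0 : ℝ) t, ‖f' s‖ ≤ C * ‖f s‖ + 0 := by
      intro s hs
      rw [add_zero]
      have hs0 : s ∈ Set.Ici (0 : ℝ) := hs.1
      refine (pi_norm_le_iff_of_nonneg (mul_nonneg hC0 (norm_nonneg _))).2 fun p => ?_
      rw [Real.norm_eq_abs]
      by_cases h : P p.1 = P p.2
      · obtain ⟨i, i'⟩ := p
        simp only [hf'def, if_pos h]
        simp only at h ⊢
        -- bounds on f components
        have hfle : ∀ q : Fin n × Fin n, |f s q| ≤ ‖f s‖ := fun q => by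
          simpa [Real.norm_eq_abs] using norm_le_pi_norm (f s) q
        have hii' : |z s i - z s i'| ≤ ‖f s‖ := by
          have := hfle (i, i')
          simpa [hfdef, if_pos h] using this
        have hjr : ∀ j, |z s j - z s (r j)| ≤ ‖f s‖ := by
          intro j
          have := hfle (j, r j)
          simpa [hfdef, if_pos (hPr j).symm] using this
        -- difference of S
        have hSdiff : S s i - S s i'
            = ∑ j, (W i j * pv j - W i' j * pv j) * (z s j - z s (r j)) := by
          have hc := hcancel s i i' h
          have : ∑ j, (W i j * pv j - W i' j * pv j) * (z s j - z s (r j))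
              = (∑ j, (W i j * pv j - W i' j * pv j) * z s j)
                - ∑ j, (W i j * pv j - W i' j * pv j) * z s (r j) := by
            rw [← Finset.sum_sub_distrib]
            exact Finset.sum_congr rfl fun j _ => by ring
          rw [this, hc, sub_zero, hSdef]
          simp only
          rw [← Finset.sum_sub_distrib]
          exact Finset.sum_congr rfl fun j _ => by ring
        have hSdb : |S s i - S s i'| ≤ 2 * B * ‖f s‖ := by
          rw [hSdiff]
          calc |∑ j, (W i j * pv j - W i' j * pv j) * (z s j - z s (r j))|
              ≤ ∑ j, |(W i j * pv j - W i' j * pv j) * (z s j - z s (r j))| :=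
                Finset.abs_sum_le_sum_abs _ _
            _ ≤ ∑ j, (W i j * pv j + W i' j * pv j) * ‖f s‖ := by
                apply Finset.sum_le_sum
                intro j _
                rw [abs_mul]
                apply mul_le_mul
                · calc |W i j * pv j - W i' j * pv j|
                      ≤ |W i j * pv j| + |W i' j * pv j| := abs_sub _ _
                    _ = W i j * pv j + W i' j * pv j := by
                        rw [abs_of_nonneg (hanon i j), abs_of_nonneg (hanon i' j)]
                · exact hjr j
                · exact abs_nonneg _
                · exact add_nonneg (hanon i j) (hanon i' j)
            _ = (∑ j, (W i j * pv j + W i' j * pv j)) * ‖f s‖ := by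
                rw [Finset.sum_mul]
            _ ≤ 2 * B * ‖f s‖ := by
                apply mul_le_mul_of_nonneg_right _ (norm_nonneg _)
                rw [Finset.sum_add_distrib]
                have := hrow i
                have := hrow i'
                linarith
        -- rearrange F s i - F s i'
        have hγeq : γ i' = γ i := (hγblk i i' h).symm
        have hFeq : F s i - F s i'
            = (z s i' - z s i) * S s i + (1 - z s i') * (S s i - S s i')
              - γ i * (z s i - z s i') := by
          simp only [hFdef, hγeq]
          ring
        have hz1 : |1 - z s i'| ≤ 1 := by
          have h1 := (hz01 s hs0 i').1
          have h2 := (hz01 s hs0 i').2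
          rw [abs_le]; constructor <;> linarith
        have hγb : γ i ≤ G :=
          Finset.single_le_sum (fun j _ => hγ j) (Finset.mem_univ i)
        calc |F s i - F s i'|
            ≤ |z s i' - z s i| * |S s i| + |1 - z s i'| * |S s i - S s i'|
              + γ i * |z s i - z s i'| := by
              rw [hFeq]
              calc |(z s i' - z s i) * S s i + (1 - z s i') * (S s i - S s i')
                    - γ i * (z s i - z s i')|
                  ≤ |(z s i' - z s i) * S s i + (1 - z s i') * (S s i - S s i')|
                    + |γ i * (z s i - z s i')| := abs_sub _ _
                _ ≤ |(z s i' - z s i) * S s i| + |(1 - z s i') * (S s i - S s i')|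
                    + |γ i * (z s i - z s i')| := by
                    have := abs_add_le ((z s i' - z s i) * S s i)
                      ((1 - z s i') * (S s i - S s i'))
                    linarith
                _ = |z s i' - z s i| * |S s i| + |1 - z s i'| * |S s i - S s i'|
                    + γ i * |z s i - z s i'| := by
                    rw [abs_mul, abs_mul, abs_mul, abs_of_nonneg (hγ i)]
          _ ≤ ‖f s‖ * B + 1 * (2 * B * ‖f s‖) + G * ‖f s‖ := by
              have h1 : |z s i' - z s i| * |S s i| ≤ ‖f s‖ * B := by
                apply mul_le_mul _ (hSb s hs0 i) (abs_nonneg _) (norm_nonneg _)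
                rw [abs_sub_comm]; exact hii'
              have h2 : |1 - z s i'| * |S s i - S s i'| ≤ 1 * (2 * B * ‖f s‖) :=
                mul_le_mul hz1 hSdb (abs_nonneg _) zero_le_one
              have h3 : γ i * |z s i - z s i'| ≤ G * ‖f s‖ :=
                mul_le_mul hγb hii' (abs_nonneg _) hG0
              linarith
          _ ≤ C * ‖f s‖ := by rw [hCdef]; ring_nf; nlinarith [norm_nonneg (f s)]
      · simp only [hf'def, if_neg h, abs_zero]
        positivity
    have := norm_le_gronwallBound_of_norm_deriv_right_le hfc hfd hf0 hbound t
      ⟨ht, le_refl t⟩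
    rw [gronwallBound_ε0_δ0] at this
    have hft : f t = 0 := norm_eq_zero.1 (le_antisymm this (norm_nonneg _))
    have := congrFun hft (i₁, i₂)
    simp only [hfdef, if_pos hP] at this
    have : z t i₁ - z t i₂ = 0 := this
    linarith
  refine ⟨main, fun i₁ i₂ hne hP => ⟨?_, ?_⟩⟩
  · intro hv
    have := congrFun hv i₁
    simp at this
  · intro t ht
    have hz := main t ht i₁ i₂ hP
    have hsplit : ∀ j : Fin n,
        (if j = i₁ then (1 : ℝ) else if j = i₂ then -1 else 0) * z t j
        = (if j = i₁ then z t j else 0) + (if j = i₂ then -z t j else 0) := by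
      intro j
      by_cases h1 : j = i₁
      · have h2 : ¬ j = i₂ := by rw [h1]; exact hne
        simp [h1, h2, hne]
      · by_cases h2 : j = i₂ <;> simp [h1, h2, Ne.symm hne]
    rw [Finset.sum_congr rfl fun j _ => hsplit j, Finset.sum_add_distrib]
    simp [hz]
end

section
/- Let 0 < m ≤ 1/2, m ≤ M, and let p = (W, z(0), γ, π) be SIS parameters with m ≤ w_{ij} = w_{ji} ≤ M and m ≤ z_i(0) ≤ 1−m for all i, j, γ = 0 (the SI model), π_i > 0 for all i, and suppose the degrees d_i := Σ_j (WΠ)_{ij} are pairwise distinct. Then W is reconstructible: for every T₀ > 0, if Ŵ is a symmetric matrix with m ≤ ŵ_{ij} ≤ M whose trajectory ẑ with parameters (Ŵ, z(0), 0, π) satisfies ẑ(t) = z(t) for all t ∈ [0,T₀], then Ŵ = W. -/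
open Finset Set Filter Real

noncomputable def Zseq {n : ℕ} (A : (Fin n → Fin n → ℝ)) (z : ℝ → Fin n → ℝ) : ℕ → ℝ → Fin n → ℝ
  | 0 => z
  | (k+1) => fun t i =>
      (∑ l, A i l * Zseq A z k t l)
      - ∑ j ∈ (Finset.range (k+1)).attach,
          ((k.choose j.1 : ℝ)) * Zseq A z j.1 t i * (∑ l, A i l * Zseq A z (k - j.1) t l)
  decreasing_by
  · exact Nat.lt_succ_self k
  · exact Nat.lt_succ_of_le (Nat.le_of_lt_succ (Finset.mem_range.mp j.2))
  · exact Nat.lt_succ_of_le (Nat.sub_le k j.1)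

lemma Zseq_zero {n : ℕ} (A : (Fin n → Fin n → ℝ)) (z : ℝ → Fin n → ℝ) : Zseq A z 0 = z := by rw [Zseq]

lemma Zseq_succ {n : ℕ} (A : (Fin n → Fin n → ℝ)) (z : ℝ → Fin n → ℝ) (k : ℕ) (t : ℝ) (i : Fin n) :
    Zseq A z (k+1) t i = (∑ l, A i l * Zseq A z k t l)
      - ∑ j ∈ Finset.range (k+1), ((k.choose j : ℝ)) * Zseq A z j t i * (∑ l, A i l * Zseq A z (k - j) t l) := by
  rw [Zseq]
  dsimp only
  congr 1
  exact Finset.sum_attach (Finset.range (k+1)) (fun j => ((k.choose j : ℝ)) * Zseq A z j t i * (∑ l, A i l * Zseq A z (k - j) t l))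

lemma pascal_sum(a b : ℕ → ℝ) (k : ℕ) :
    ∑ j ∈ Finset.range (k+1), (k.choose j : ℝ) * (a (j+1) * b (k-j) + a j * b (k-j+1))
      = ∑ j ∈ Finset.range (k+2), ((k+1).choose j : ℝ) * (a j * b (k+1-j)) := by
  have h1 : ∀ j ∈ Finset.range (k+1), (k.choose j : ℝ) * (a (j+1) * b (k-j) + a j * b (k-j+1))
      = (k.choose j : ℝ) * (a (j+1) * b (k-j)) + (k.choose j : ℝ) * (a j * b (k-j+1)) := by
    intro j _; ring
  rw [Finset.sum_congr rfl h1, Finset.sum_add_distrib]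
  -- RHS: peel first term
  rw [Finset.sum_range_succ' (fun j => ((k+1).choose j : ℝ) * (a j * b (k+1-j))) (k+1)]
  have h2 : ∀ j ∈ Finset.range (k+1), ((k+1).choose (j+1) : ℝ) * (a (j+1) * b (k+1-(j+1)))
      = (k.choose j : ℝ) * (a (j+1) * b (k-j)) + (k.choose (j+1) : ℝ) * (a (j+1) * b (k-j)) := by
    intro j hj
    have : k+1-(j+1) = k-j := by omega
    rw [this, Nat.choose_succ_succ]
    push_cast
    ring
  rw [Finset.sum_congr rfl h2, Finset.sum_add_distrib]
  have h3 : ∑ j ∈ Finset.range (k+1), (k.choose j : ℝ) * (a j * b (k-j+1))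
      = ∑ j ∈ Finset.range (k+1), (k.choose (j+1) : ℝ) * (a (j+1) * b (k-j)) + ((k+1).choose 0 : ℝ) * (a 0 * b (k+1-0)) := by
    rw [Finset.sum_range_succ' (fun j => (k.choose j : ℝ) * (a j * b (k-j+1))) k,
        Finset.sum_range_succ (fun j => (k.choose (j+1) : ℝ) * (a (j+1) * b (k-j))) k]
    have hz : (k.choose (k+1) : ℝ) = 0 := by
      rw [Nat.choose_eq_zero_of_lt (Nat.lt_succ_self k)]; norm_num
    rw [hz]
    have : ∀ j ∈ Finset.range k, (k.choose (j+1) : ℝ) * (a (j+1) * b (k-(j+1)+1))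
        = (k.choose (j+1) : ℝ) * (a (j+1) * b (k-j)) := by
      intro j hj
      have : k-(j+1)+1 = k-j := by
        have := Finset.mem_range.mp hj; omega
      rw [this]
    rw [Finset.sum_congr rfl this]
    simp
  rw [h3]
  ring

lemma Zseq_deriv{n : ℕ} (A : (Fin n → Fin n → ℝ)) (z : ℝ → Fin n → ℝ)
    (hode : ∀ i, ∀ t ∈ Set.Ici (0:ℝ), HasDerivWithinAt (fun s => z s i)
      ((1 - z t i) * ∑ l, A i l * z t l) (Set.Ici 0) t) :
    ∀ k i, ∀ t ∈ Set.Ici (0:ℝ),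
      HasDerivWithinAt (fun s => Zseq A z k s i) (Zseq A z (k+1) t i) (Set.Ici 0) t := by
  intro k
  induction k using Nat.strong_induction_on with
  | _ k IH =>
    match k with
    | 0 =>
      intro i t ht
      have he : Zseq A z 1 t i = (1 - z t i) * ∑ l, A i l * z t l := by
        rw [Zseq_succ]
        simp [Zseq_zero]
        ring
      rw [he]
      simp only [Zseq_zero]
      exact hode i t ht
    | (k+1) =>
      intro i t ht
      have hfun : (fun s => Zseq A z (k+1) s i) = (fun s =>
          (∑ l, A i l * Zseq A z k s l)
          - ∑ j ∈ Finset.range (k+1), ((k.choose j : ℝ)) * Zseq A z j s i * (∑ l, A i l * Zseq A z (k - j) s l)) :=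
        funext fun s => Zseq_succ A z k s i
      rw [hfun]
      have h1 : HasDerivWithinAt (fun s => ∑ l, A i l * Zseq A z k s l)
          (∑ l, A i l * Zseq A z (k+1) t l) (Set.Ici 0) t :=
        HasDerivWithinAt.fun_sum fun l _ => (IH k (Nat.lt_succ_self k) l t ht).const_mul (A i l)
      have h2 : HasDerivWithinAt (fun s => ∑ j ∈ Finset.range (k+1),
            ((k.choose j : ℝ)) * Zseq A z j s i * (∑ l, A i l * Zseq A z (k - j) s l))
          (∑ j ∈ Finset.range (k+1),
            (((k.choose j : ℝ)) * Zseq A z (j+1) t i * (∑ l, A i l * Zseq A z (k - j) t l)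
              + ((k.choose j : ℝ)) * Zseq A z j t i * (∑ l, A i l * Zseq A z (k - j + 1) t l)))
          (Set.Ici 0) t := by
        apply HasDerivWithinAt.fun_sum
        intro j hj
        have hjk : j < k + 1 := Finset.mem_range.mp hj
        have hda : HasDerivWithinAt (fun s => ((k.choose j : ℝ)) * Zseq A z j s i)
            (((k.choose j : ℝ)) * Zseq A z (j+1) t i) (Set.Ici 0) t :=
          (IH j hjk i t ht).const_mul _
        have hdb : HasDerivWithinAt (fun s => ∑ l, A i l * Zseq A z (k - j) s l)
            (∑ l, A i l * Zseq A z (k - j + 1) t l) (Set.Ici 0) t :=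
          HasDerivWithinAt.fun_sum fun l _ =>
            (IH (k - j) (Nat.lt_succ_of_le (Nat.sub_le k j)) l t ht).const_mul (A i l)
        convert hda.fun_mul hdb using 1
        try ring
      have hval : (∑ l, A i l * Zseq A z (k+1) t l)
          - (∑ j ∈ Finset.range (k+1),
            (((k.choose j : ℝ)) * Zseq A z (j+1) t i * (∑ l, A i l * Zseq A z (k - j) t l)
              + ((k.choose j : ℝ)) * Zseq A z j t i * (∑ l, A i l * Zseq A z (k - j + 1) t l)))
          = Zseq A z (k+1+1) t i := by
        rw [Zseq_succ A z (k+1) t i]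
        congr 1
        have := pascal_sum (fun j => Zseq A z j t i) (fun r => ∑ l, A i l * Zseq A z r t l) k
        have hr : ∑ j ∈ Finset.range (k+1+1), ((k+1).choose j : ℝ) * Zseq A z j t i * (∑ l, A i l * Zseq A z (k+1-j) t l)
            = ∑ j ∈ Finset.range (k+2), ((k+1).choose j : ℝ) * (Zseq A z j t i * (∑ l, A i l * Zseq A z (k+1-j) t l)) :=
          Finset.sum_congr rfl (fun j _ => by ring)
        rw [hr, ← this]
        exact Finset.sum_congr rfl (fun j _ => by ring)
      rw [← hval]
      exact h1.sub h2

lemma Zseq_bound{n : ℕ} (A : (Fin n → Fin n → ℝ)) (z : ℝ → Fin n → ℝ) (M : ℝ)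
    (hM : 0 < M) (hA0 : ∀ i l, 0 ≤ A i l) (hAM : ∀ i, (∑ l, A i l) ≤ M)
    (hz01 : ∀ t ∈ Set.Ici (0:ℝ), ∀ i, z t i ∈ Set.Icc (0:ℝ) 1) :
    ∀ k, ∀ t ∈ Set.Ici (0:ℝ), ∀ i,
      |Zseq A z k t i| ≤ (k.factorial : ℝ) * (2*M)^k := by
  intro k
  induction k using Nat.strong_induction_on with
  | _ k IH =>
    match k with
    | 0 =>
      intro t ht i
      simp only [Zseq_zero, Nat.factorial_zero, pow_zero, Nat.cast_one, mul_one]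
      have h := hz01 t ht i
      rw [abs_le]
      constructor <;> [linarith [h.1]; exact h.2]
    | (k+1) =>
      intro t ht i
      have hB : (0:ℝ) < 2*M := by linarith
      have hfact : ∀ r : ℕ, (0:ℝ) ≤ (r.factorial : ℝ) * (2*M)^r := fun r => by positivity
      have hS : ∀ r, r ≤ k → |∑ l, A i l * Zseq A z r t l| ≤ M * ((r.factorial : ℝ) * (2*M)^r) := by
        intro r hr
        calc |∑ l, A i l * Zseq A z r t l| ≤ ∑ l, |A i l * Zseq A z r t l| :=
              Finset.abs_sum_le_sum_abs _ _
          _ ≤ ∑ l, A i l * ((r.factorial : ℝ) * (2*M)^r) := by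
              apply Finset.sum_le_sum
              intro l _
              rw [abs_mul, abs_of_nonneg (hA0 i l)]
              exact mul_le_mul_of_nonneg_left (IH r (Nat.lt_succ_of_le hr) t ht l) (hA0 i l)
          _ = (∑ l, A i l) * ((r.factorial : ℝ) * (2*M)^r) := by rw [← Finset.sum_mul]
          _ ≤ M * ((r.factorial : ℝ) * (2*M)^r) :=
              mul_le_mul_of_nonneg_right (hAM i) (hfact r)
      rw [Zseq_succ]
      have hsum : |∑ j ∈ Finset.range (k+1), ((k.choose j : ℝ)) * Zseq A z j t i * (∑ l, A i l * Zseq A z (k - j) t l)|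
          ≤ (k+1) * (M * ((k.factorial : ℝ) * (2*M)^k)) := by
        calc |∑ j ∈ Finset.range (k+1), ((k.choose j : ℝ)) * Zseq A z j t i * (∑ l, A i l * Zseq A z (k - j) t l)|
            ≤ ∑ j ∈ Finset.range (k+1), |((k.choose j : ℝ)) * Zseq A z j t i * (∑ l, A i l * Zseq A z (k - j) t l)| :=
              Finset.abs_sum_le_sum_abs _ _
          _ ≤ ∑ j ∈ Finset.range (k+1), M * ((k.factorial : ℝ) * (2*M)^k) := by
              apply Finset.sum_le_sum
              intro j hj
              have hjk : j ≤ k := Nat.le_of_lt_succ (Finset.mem_range.mp hj)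
              rw [abs_mul, abs_mul, Nat.abs_cast]
              have h1 := IH j (Nat.lt_succ_of_le hjk) t ht i
              have h2 := hS (k - j) (Nat.sub_le k j)
              calc (k.choose j : ℝ) * |Zseq A z j t i| * |∑ l, A i l * Zseq A z (k - j) t l|
                  ≤ (k.choose j : ℝ) * ((j.factorial : ℝ) * (2*M)^j) * (M * (((k-j).factorial : ℝ) * (2*M)^(k-j))) := by
                    apply mul_le_mul
                    · exact mul_le_mul_of_nonneg_left h1 (by positivity)
                    · exact h2
                    · exact abs_nonneg _
                    · positivity
                _ = M * (((k.choose j : ℝ) * (j.factorial : ℝ) * ((k-j).factorial : ℝ)) * ((2*M)^j * (2*M)^(k-j))) := by ring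
                _ = M * ((k.factorial : ℝ) * (2*M)^k) := by
                    rw [← pow_add, Nat.add_sub_cancel' hjk]
                    congr 2
                    rw [← Nat.cast_mul, ← Nat.cast_mul, Nat.choose_mul_factorial_mul_factorial hjk]
          _ = (k+1) * (M * ((k.factorial : ℝ) * (2*M)^k)) := by
              rw [Finset.sum_const, Finset.card_range]
              push_cast
              ring
      calc |(∑ l, A i l * Zseq A z k t l) - ∑ j ∈ Finset.range (k+1), ((k.choose j : ℝ)) * Zseq A z j t i * (∑ l, A i l * Zseq A z (k - j) t l)|
          ≤ |∑ l, A i l * Zseq A z k t l| + |∑ j ∈ Finset.range (k+1), ((k.choose j : ℝ)) * Zseq A z j t i * (∑ l, A i l * Zseq A z (k - j) t l)| :=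
            abs_sub _ _
        _ ≤ M * ((k.factorial : ℝ) * (2*M)^k) + (k+1) * (M * ((k.factorial : ℝ) * (2*M)^k)) :=
            add_le_add (hS k le_rfl) hsum
        _ = (k+2) * M * ((k.factorial : ℝ) * (2*M)^k) := by ring
        _ ≤ ((k+1).factorial : ℝ) * (2*M)^(k+1) := by
            rw [Nat.factorial_succ, pow_succ]
            push_cast
            have hfk : (0:ℝ) ≤ (k.factorial : ℝ) * (2*M)^k := hfact k
            nlinarith [mul_nonneg (mul_nonneg (Nat.cast_nonneg k : (0:ℝ) ≤ (k:ℝ)) hM.le) hfk]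

lemma monoIci{a : ℝ} (f f' : ℝ → ℝ)
    (hd : ∀ t ∈ Set.Ici a, HasDerivWithinAt f (f' t) (Set.Ici a) t)
    (h0 : ∀ t ∈ Set.Ici a, 0 ≤ f' t) : MonotoneOn f (Set.Ici a) := by
  apply monotoneOn_of_deriv_nonneg (convex_Ici a)
  · exact fun t ht => (hd t ht).continuousWithinAt
  · intro t ht
    rw [interior_Ici] at ht
    exact (((hd t (Set.mem_Ici.mpr (le_of_lt ht))).hasDerivAt (Ici_mem_nhds ht)).differentiableAt).differentiableWithinAt
  · intro t ht
    rw [interior_Ici] at ht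
    rw [((hd t (Set.mem_Ici.mpr (le_of_lt ht))).hasDerivAt (Ici_mem_nhds ht)).deriv]
    exact h0 t (Set.mem_Ici.mpr (le_of_lt ht))

lemma antiIci {a : ℝ} (f f' : ℝ → ℝ)
    (hd : ∀ t ∈ Set.Ici a, HasDerivWithinAt f (f' t) (Set.Ici a) t)
    (h0 : ∀ t ∈ Set.Ici a, f' t ≤ 0) : AntitoneOn f (Set.Ici a) := by
  have := monoIci (fun t => -f t) (fun t => -f' t)
    (fun t ht => (hd t ht).neg) (fun t ht => by linarith [h0 t ht])
  intro x hx y hy hxy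
  have := this hx hy hxy
  dsimp only at this
  linarith

lemma chain_zero_extend(g : ℕ → ℝ → ℝ) (C Bb : ℝ) (hC : 0 ≤ C) (hB : 0 < Bb)
    (hderiv : ∀ k, ∀ t ∈ Set.Ici (0:ℝ), HasDerivWithinAt (g k) (g (k+1) t) (Set.Ici 0) t)
    (hbound : ∀ k, ∀ t ∈ Set.Ici (0:ℝ), |g k t| ≤ C * (k.factorial : ℝ) * Bb^k)
    (τ : ℝ) (hτ : 0 < τ) (hg0 : ∀ s ∈ Set.Icc (0:ℝ) τ, g 0 s = 0) :
    ∀ s ∈ Set.Icc (0:ℝ) (τ + 1/(2*Bb)), g 0 s = 0 := by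
  -- (a) all chain members vanish on [0,τ]
  have hvan : ∀ k, ∀ s ∈ Set.Icc (0:ℝ) τ, g k s = 0 := by
    intro k
    induction k with
    | zero => exact hg0
    | succ k IH =>
      have hio : ∀ s ∈ Set.Ico (0:ℝ) τ, g (k+1) s = 0 := by
        intro s hs
        have hsI : s ∈ Set.Ici (0:ℝ) := hs.1
        have h1 : HasDerivWithinAt (g k) (g (k+1) s) (Set.Ici 0) s := hderiv k s hsI
        have hev : (fun _ => (0:ℝ)) =ᶠ[nhdsWithin s (Set.Ici 0)] g k := by
          filter_upwards [self_mem_nhdsWithin, mem_nhdsWithin_of_mem_nhds (Iio_mem_nhds hs.2)]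
            with x hx1 hx2
          exact (IH x ⟨hx1, le_of_lt hx2⟩).symm
        have h2 : HasDerivWithinAt (fun _ => (0:ℝ)) (g (k+1) s) (Set.Ici 0) s :=
          h1.congr_of_eventuallyEq hev (IH s ⟨hs.1, hs.2.le⟩).symm
        have h3 : HasDerivWithinAt (fun _ => (0:ℝ)) 0 (Set.Ici 0) s :=
          (hasDerivWithinAt_const s _ (0:ℝ))
        have hu : UniqueDiffWithinAt ℝ (Set.Ici (0:ℝ)) s := uniqueDiffOn_Ici 0 s hsI
        have := h2.derivWithin hu
        rw [h3.derivWithin hu] at this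
        exact this.symm
      intro s hs
      rcases lt_or_eq_of_le hs.2 with h | h
      · exact hio s ⟨hs.1, h⟩
      · subst h
        have hne : (nhdsWithin s (Set.Ico 0 s)).NeBot := by
          rw [← mem_closure_iff_nhdsWithin_neBot, closure_Ico (ne_of_lt hτ)]
          exact ⟨hs.1, le_rfl⟩
        have hcont : ContinuousWithinAt (g (k+1)) (Set.Ici 0) s :=
          (hderiv (k+1) s hs.1).continuousWithinAt
        have h1 : Tendsto (g (k+1)) (nhdsWithin s (Set.Ico 0 s)) (nhds (g (k+1) s)) :=
          hcont.mono (fun x hx => hx.1)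
        have h2 : Tendsto (g (k+1)) (nhdsWithin s (Set.Ico 0 s)) (nhds 0) := by
          have hev2 : g (k+1) =ᶠ[nhdsWithin s (Set.Ico 0 s)] (fun _ => (0:ℝ)) := by
            filter_upwards [self_mem_nhdsWithin] with x hx
            exact hio x hx
          rw [Filter.tendsto_congr' hev2]
          exact tendsto_const_nhds
        exact tendsto_nhds_unique h1 h2
  -- (b) Taylor-type bound to the right of τ
  have hQ : ∀ r j, ∀ s ∈ Set.Ici τ,
      |g j s| ≤ (C * ((j+r).factorial : ℝ) * Bb^(j+r)) * ((s - τ)^r / (r.factorial : ℝ)) := by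
    intro r
    induction r with
    | zero =>
      intro j s hs
      simpa using hbound j s (le_trans hτ.le hs)
    | succ r IH =>
      intro j s hs
      set Kc : ℝ := (C * ((j+(r+1)).factorial : ℝ) * Bb^(j+(r+1))) / ((r+1).factorial : ℝ) with hKc
      have hKc0 : 0 ≤ Kc := by positivity
      have hder : ∀ x ∈ Set.Ici τ, HasDerivWithinAt (fun s => Kc * (s - τ)^(r+1))
          (Kc * (((r+1):ℕ) * (x - τ)^r * 1)) (Set.Ici τ) x := by
        intro x _
        exact ((((hasDerivAt_id x).sub_const τ).pow (r+1)).const_mul Kc).hasDerivWithinAt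
      have hderval : ∀ x, Kc * (((r+1):ℕ) * (x - τ)^r * 1)
          = (C * ((j+1+r).factorial : ℝ) * Bb^(j+1+r)) * ((x - τ)^r / (r.factorial : ℝ)) := by
        intro x
        rw [hKc]
        have h1 : ((r+1).factorial : ℝ) = (r+1) * (r.factorial : ℝ) := by
          rw [Nat.factorial_succ]; push_cast; ring
        have h2 : j + (r+1) = j + 1 + r := by omega
        rw [h1, h2]
        have hrf : (r.factorial : ℝ) ≠ 0 := Nat.cast_ne_zero.mpr (Nat.factorial_ne_zero r)
        field_simp
        push_cast
        ring
      have hgd : ∀ x ∈ Set.Ici τ, HasDerivWithinAt (g j) (g (j+1) x) (Set.Ici τ) x := by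
        intro x hx
        exact (hderiv j x (le_trans hτ.le hx)).mono (Set.Ici_subset_Ici.mpr hτ.le)
      have hIH : ∀ x ∈ Set.Ici τ, |g (j+1) x|
          ≤ Kc * (((r+1):ℕ) * (x - τ)^r * 1) := by
        intro x hx
        rw [hderval x]
        have := IH (j+1) x hx
        have he : j + 1 + r = j + (1 + r) := by omega
        simpa [he] using this
      have hτmem : τ ∈ Set.Ici τ := Set.self_mem_Ici
      have hgτ : g j τ = 0 := hvan j τ ⟨hτ.le, le_rfl⟩
      -- upper: Pf - g j monotone
      have hup : ∀ s ∈ Set.Ici τ, g j s ≤ Kc * (s - τ)^(r+1) := by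
        have hmono := monoIci (fun s => Kc * (s - τ)^(r+1) - g j s)
          (fun x => Kc * (((r+1):ℕ) * (x - τ)^r * 1) - g (j+1) x)
          (fun x hx => (hder x hx).sub (hgd x hx))
          (fun x hx => by
            have := abs_le.mp (hIH x hx)
            linarith [this.2])
        intro s hs
        have := hmono hτmem hs hs
        simp only [sub_self, zero_pow (Nat.succ_ne_zero r), mul_zero, hgτ, sub_zero] at this
        linarith
      have hdn : ∀ s ∈ Set.Ici τ, -(Kc * (s - τ)^(r+1)) ≤ g j s := by
        have hmono := monoIci (fun s => Kc * (s - τ)^(r+1) + g j s)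
          (fun x => Kc * (((r+1):ℕ) * (x - τ)^r * 1) + g (j+1) x)
          (fun x hx => (hder x hx).add (hgd x hx))
          (fun x hx => by
            have := abs_le.mp (hIH x hx)
            linarith [this.1])
        intro s hs
        have := hmono hτmem hs hs
        simp only [sub_self, zero_pow (Nat.succ_ne_zero r), mul_zero, hgτ, add_zero, zero_add] at this
        linarith
      have habs : |g j s| ≤ Kc * (s - τ)^(r+1) := by
        rw [abs_le]
        exact ⟨hdn s hs, hup s hs⟩
      calc |g j s| ≤ Kc * (s - τ)^(r+1) := habs
        _ = (C * ((j+(r+1)).factorial : ℝ) * Bb^(j+(r+1))) * ((s - τ)^(r+1) / ((r+1).factorial : ℝ)) := by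
            rw [hKc]; ring
  -- (c) conclude
  intro s hs
  rcases le_or_gt s τ with h | h
  · exact hvan 0 s ⟨hs.1, h⟩
  · have hsτ : s ∈ Set.Ici τ := h.le
    have hkey : ∀ r : ℕ, |g 0 s| ≤ C * (1/2)^r := by
      intro r
      have := hQ r 0 s hsτ
      simp only [Nat.zero_add, zero_add] at this
      have hfr : (0:ℝ) < (r.factorial : ℝ) := by positivity
      have h2 : (C * (r.factorial : ℝ) * Bb^r) * ((s - τ)^r / (r.factorial : ℝ))
          = C * (Bb * (s - τ))^r := by
        rw [mul_pow]
        field_simp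
      rw [h2] at this
      have hb1 : 0 ≤ Bb * (s - τ) := by nlinarith
      have hb2 : Bb * (s - τ) ≤ 1/2 := by
        have : s - τ ≤ 1/(2*Bb) := by linarith [hs.2]
        calc Bb * (s - τ) ≤ Bb * (1/(2*Bb)) := by nlinarith
          _ = 1/2 := by field_simp
      calc |g 0 s| ≤ C * (Bb * (s - τ))^r := this
        _ ≤ C * (1/2)^r := by
            apply mul_le_mul_of_nonneg_left _ hC
            exact pow_le_pow_left₀ hb1 hb2 r
    have htend : Tendsto (fun r : ℕ => C * (1/2)^r) atTop (nhds 0) := by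
      have := tendsto_pow_atTop_nhds_zero_of_lt_one (le_of_lt one_half_pos) (by norm_num : (1:ℝ)/2 < 1)
      have := this.const_mul C
      simpa using this
    have : |g 0 s| ≤ 0 := ge_of_tendsto htend (Filter.Eventually.of_forall hkey)
    exact abs_eq_zero.mp (le_antisymm this (abs_nonneg _))

lemma expDeriv(c t : ℝ) : HasDerivAt (fun s => Real.exp (c * s)) (c * Real.exp (c * t)) t := by
  simpa [mul_comm] using ((hasDerivAt_id t).const_mul c).exp

/-- SI model (`γ = 0`) with all degrees `d_i = Σ_j w_{ij} π_j` pairwise distinct: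
`W` is reconstructible. If a symmetric `Ŵ` with entries in `[m,M]` produces a
trajectory (same initial condition) agreeing with `z` on some `[0,T₀]`, `T₀ > 0`,
then `Ŵ = W`. -/
theorem stmt_8 {n : ℕ} (m M : ℝ) (hm : 0 < m) (hm2 : m ≤ 1 / 2) (hmM : m ≤ M)
    (W : Matrix (Fin n) (Fin n) ℝ) (pv : Fin n → ℝ)
    (z : ℝ → Fin n → ℝ)
    (hWsymm : W.IsSymm) (hWb : ∀ i j, W i j ∈ Set.Icc m M)
    (hz0 : ∀ i, z 0 i ∈ Set.Icc m (1 - m))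
    (hpv : ∀ i, 0 < pv i) (hpv1 : ∑ i, pv i = 1)
    (hode : ∀ i, ∀ t ∈ Set.Ici (0 : ℝ), HasDerivWithinAt (fun s => z s i)
      ((1 - z t i) * (∑ j, W i j * pv j * z t j)) (Set.Ici 0) t)
    (hz01 : ∀ t ∈ Set.Ici (0 : ℝ), ∀ i, z t i ∈ Set.Icc (0 : ℝ) 1)
    (hdeg : ∀ i j : Fin n, i ≠ j → (∑ k, W i k * pv k) ≠ ∑ k, W j k * pv k) :
    ∀ T₀ : ℝ, 0 < T₀ →
      ∀ (W' : Matrix (Fin n) (Fin n) ℝ) (z' : ℝ → Fin n → ℝ),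
        W'.IsSymm → (∀ i j, W' i j ∈ Set.Icc m M) →
        (∀ i, ∀ t ∈ Set.Ici (0 : ℝ), HasDerivWithinAt (fun s => z' s i)
          ((1 - z' t i) * (∑ j, W' i j * pv j * z' t j)) (Set.Ici 0) t) →
        (∀ t ∈ Set.Ici (0 : ℝ), ∀ i, z' t i ∈ Set.Icc (0 : ℝ) 1) →
        (∀ t ∈ Set.Icc (0 : ℝ) T₀, z' t = z t) →
        W' = W := by
  intro T₀ hT₀ W' z' _ _ hode' hz01' hagree
  have hMpos : (0:ℝ) < M := lt_of_lt_of_le hm hmM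
  have hpv0 : ∀ j, (0:ℝ) ≤ pv j := fun j => (hpv j).le
  have hA0 : ∀ i l, (0:ℝ) ≤ W i l * pv l :=
    fun i l => mul_nonneg (le_trans hm.le (hWb i l).1) (hpv0 l)
  have hAM : ∀ i, (∑ l, W i l * pv l) ≤ M := by
    intro i
    calc ∑ l, W i l * pv l ≤ ∑ l, M * pv l :=
          Finset.sum_le_sum (fun l _ => mul_le_mul_of_nonneg_right (hWb i l).2 (hpv0 l))
      _ = M := by rw [← Finset.mul_sum, hpv1, mul_one]
  have hz0' : ∀ t ∈ Set.Ici (0:ℝ), ∀ i, 0 ≤ z t i := fun t ht i => (hz01 t ht i).1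
  have hz1' : ∀ t ∈ Set.Ici (0:ℝ), ∀ i, z t i ≤ 1 := fun t ht i => (hz01 t ht i).2
  -- z is nondecreasing, hence ≥ m
  have zmono : ∀ i, MonotoneOn (fun t => z t i) (Set.Ici 0) := by
    intro i
    apply monoIci _ (fun t => (1 - z t i) * ∑ l, W i l * pv l * z t l) (hode i)
    intro t ht
    apply mul_nonneg (by linarith [hz1' t ht i])
    exact Finset.sum_nonneg fun l _ => mul_nonneg (hA0 i l) (hz0' t ht l)
  have zlb : ∀ i, ∀ t ∈ Set.Ici (0:ℝ), m ≤ z t i := by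
    intro i t ht
    exact le_trans (hz0 i).1 (zmono i Set.self_mem_Ici ht ht)
  have hAzub : ∀ i, ∀ t ∈ Set.Ici (0:ℝ), ∑ l, W i l * pv l * z t l ≤ ∑ l, W i l * pv l := by
    intro i t ht
    apply Finset.sum_le_sum
    intro l _
    nlinarith [hA0 i l, hz1' t ht l]
  have hAzlb : ∀ i, ∀ t ∈ Set.Ici (0:ℝ), m*m ≤ ∑ l, W i l * pv l * z t l := by
    intro i t ht
    have key : ∀ l, m * pv l * m ≤ W i l * pv l * z t l := by
      intro l
      have h1 : m * pv l ≤ W i l * pv l := mul_le_mul_of_nonneg_right (hWb i l).1 (hpv0 l)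
      have h2 : m ≤ z t l := zlb l t ht
      nlinarith [hpv0 l, hm.le, mul_nonneg hm.le (hpv0 l)]
    calc m*m = ∑ l, m * pv l * m := by
          rw [← Finset.sum_mul, ← Finset.mul_sum, hpv1]; ring
      _ ≤ _ := Finset.sum_le_sum fun l _ => key l
  -- (1 - z t i) * exp(d_i t) is nondecreasing
  have hmonoh : ∀ i, MonotoneOn
      (fun t => (1 - z t i) * Real.exp ((∑ l, W i l * pv l) * t)) (Set.Ici 0) := by
    intro i
    apply monoIci _ (fun t => Real.exp ((∑ l, W i l * pv l) * t) *
      ((1 - z t i) * ((∑ l, W i l * pv l) - ∑ l, W i l * pv l * z t l)))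
    · intro t ht
      have h1 : HasDerivWithinAt (fun s => 1 - z s i)
          (-((1 - z t i) * ∑ l, W i l * pv l * z t l)) (Set.Ici 0) t := (hode i t ht).const_sub 1
      have h2 := (expDeriv (∑ l, W i l * pv l) t).hasDerivWithinAt (s := Set.Ici 0)
      refine (h1.fun_mul h2).congr_deriv ?_
      ring
    · intro t ht
      have h3 := hAzub i t ht
      have h4 := hz1' t ht i
      exact mul_nonneg (Real.exp_nonneg _) (mul_nonneg (by linarith) (by linarith))
  have ylb : ∀ i, ∀ t ∈ Set.Ici (0:ℝ),
      m * Real.exp (-((∑ l, W i l * pv l) * t)) ≤ 1 - z t i := by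
    intro i t ht
    have h := hmonoh i Set.self_mem_Ici ht ht
    dsimp only at h
    rw [mul_zero, Real.exp_zero, mul_one] at h
    have h0 : m ≤ 1 - z 0 i := by linarith [(hz0 i).2]
    rw [Real.exp_neg, ← div_eq_mul_inv, div_le_iff₀ (Real.exp_pos _)]
    linarith
  have ypos : ∀ i, ∀ t ∈ Set.Ici (0:ℝ), 0 < 1 - z t i := by
    intro i t ht
    have := ylb i t ht
    have hp : (0:ℝ) < m * Real.exp (-((∑ l, W i l * pv l) * t)) := by positivity
    linarith
  -- decay upper bound with rate m^2
  have yub : ∀ i, ∀ t ∈ Set.Ici (0:ℝ), 1 - z t i ≤ Real.exp (-((m*m) * t)) := by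
    intro i t ht
    have hanti : AntitoneOn (fun t => (1 - z t i) * Real.exp ((m*m) * t)) (Set.Ici 0) := by
      apply antiIci _ (fun t => Real.exp ((m*m) * t) *
        ((1 - z t i) * ((m*m) - ∑ l, W i l * pv l * z t l)))
      · intro t ht
        have h1 : HasDerivWithinAt (fun s => 1 - z s i)
            (-((1 - z t i) * ∑ l, W i l * pv l * z t l)) (Set.Ici 0) t := (hode i t ht).const_sub 1
        have h2 := (expDeriv (m*m) t).hasDerivWithinAt (s := Set.Ici 0)
        refine (h1.fun_mul h2).congr_deriv ?_
        ring
      · intro t ht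
        have h3 := hAzlb i t ht
        have h4 := hz1' t ht i
        have h5 : (1 - z t i) * ((m*m) - ∑ l, W i l * pv l * z t l) ≤ 0 :=
          mul_nonpos_iff.mpr (Or.inl ⟨by linarith, by linarith⟩)
        nlinarith [Real.exp_pos ((m*m) * t)]
    have h := hanti Set.self_mem_Ici ht ht
    dsimp only at h
    rw [mul_zero, Real.exp_zero, mul_one] at h
    have h0 : 1 - z 0 i ≤ 1 := by linarith [(hz0 i).1, hm]
    rw [Real.exp_neg, ← one_div, le_div_iff₀ (Real.exp_pos _)]
    linarith
  -- uniform bound for (1-z)·exp(d t)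
  have hKb : ∀ i, ∀ t ∈ Set.Ici (0:ℝ),
      (1 - z t i) * Real.exp ((∑ l, W i l * pv l) * t) ≤ Real.exp (M / (m*m)) := by
    intro i t ht
    have hanti : AntitoneOn (fun s => (1 - z s i) * Real.exp ((∑ l, W i l * pv l) * s)
        * Real.exp ((M/(m*m)) * Real.exp (-(m*m) * s))) (Set.Ici 0) := by
      apply antiIci _ (fun s => (Real.exp ((∑ l, W i l * pv l) * s)
          * Real.exp ((M/(m*m)) * Real.exp (-(m*m) * s)) * (1 - z s i))
          * (((∑ l, W i l * pv l) - ∑ l, W i l * pv l * z s l) - M * Real.exp (-(m*m) * s)))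
      · intro s hs
        have h1 : HasDerivWithinAt (fun u => 1 - z u i)
            (-((1 - z s i) * ∑ l, W i l * pv l * z s l)) (Set.Ici 0) s := (hode i s hs).const_sub 1
        have h2 := (expDeriv (∑ l, W i l * pv l) s).hasDerivWithinAt (s := Set.Ici 0)
        have h12 := h1.fun_mul h2
        have hu : HasDerivAt (fun u => (M/(m*m)) * Real.exp (-(m*m) * u))
            ((M/(m*m)) * (-(m*m) * Real.exp (-(m*m) * s))) s :=
          (expDeriv (-(m*m)) s).const_mul (M/(m*m))
        have hE := (hu.exp).hasDerivWithinAt (s := Set.Ici 0)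
        refine (h12.fun_mul hE).congr_deriv ?_
        have hmm : (M / (m*m)) * (m*m) = M := div_mul_cancel₀ M (by positivity)
        field_simp
        ring
      · intro s hs
        have hbr : (∑ l, W i l * pv l) - ∑ l, W i l * pv l * z s l
            ≤ M * Real.exp (-(m*m) * s) := by
          have step1 : (∑ l, W i l * pv l) - ∑ l, W i l * pv l * z s l
              = ∑ l, (W i l * pv l) * (1 - z s l) := by
            rw [← Finset.sum_sub_distrib]
            exact Finset.sum_congr rfl fun l _ => by ring
          have step2 : ∑ l, (W i l * pv l) * (1 - z s l)
              ≤ ∑ l, (W i l * pv l) * Real.exp (-((m*m) * s)) := by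
            apply Finset.sum_le_sum
            intro l _
            exact mul_le_mul_of_nonneg_left (yub l s hs) (hA0 i l)
          have step3 : ∑ l, (W i l * pv l) * Real.exp (-((m*m) * s))
              ≤ M * Real.exp (-((m*m) * s)) := by
            rw [← Finset.sum_mul]
            exact mul_le_mul_of_nonneg_right (hAM i) (Real.exp_nonneg _)
          have hee : -((m*m) * s) = -(m*m) * s := by ring
          rw [step1, ← hee]
          exact le_trans step2 step3
        have hpos1 : 0 ≤ Real.exp ((∑ l, W i l * pv l) * s)
            * Real.exp ((M/(m*m)) * Real.exp (-(m*m) * s)) * (1 - z s i) := by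
          have hyy := (ypos i s hs).le
          positivity
        exact mul_nonpos_iff.mpr (Or.inl ⟨hpos1, by linarith⟩)
    have h := hanti Set.self_mem_Ici ht ht
    dsimp only at h
    simp only [mul_zero, neg_zero, Real.exp_zero, mul_one] at h
    have hE1 : 1 ≤ Real.exp ((M/(m*m)) * Real.exp (-(m*m) * t)) :=
      Real.one_le_exp (by positivity)
    have hy0 : 0 ≤ (1 - z t i) * Real.exp ((∑ l, W i l * pv l) * t) :=
      mul_nonneg (ypos i t ht).le (Real.exp_nonneg _)
    have h2 : (1 - z t i) * Real.exp ((∑ l, W i l * pv l) * t)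
        ≤ (1 - z 0 i) * Real.exp (M/(m*m)) :=
      le_trans (le_mul_of_one_le_right hy0 hE1) h
    have h3 : 1 - z 0 i ≤ 1 := by linarith [(hz0 i).1]
    nlinarith [Real.exp_pos (M/(m*m))]
  -- reduce to entrywise equality
  suffices hfin : ∀ i j, W' i j = W i j by
    ext i j
    exact hfin i j
  intro i
  obtain ⟨c, hc⟩ : ∃ c : Fin n → ℝ, c = fun j => (W' i j - W i j) * pv j := ⟨_, rfl⟩
  -- the trajectory relation on [0, T₀)
  have hg0 : ∀ t ∈ Set.Ico (0:ℝ) T₀, ∑ j, c j * z t j = 0 := by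
    intro t ht
    have htI : t ∈ Set.Ici (0:ℝ) := ht.1
    have hvz' := hode' i t htI
    have hevz : (fun s => z s i) =ᶠ[nhdsWithin t (Set.Ici 0)] (fun s => z' s i) := by
      filter_upwards [self_mem_nhdsWithin, mem_nhdsWithin_of_mem_nhds (Iio_mem_nhds ht.2)]
        with x hx1 hx2
      exact (congrFun (hagree x ⟨hx1, hx2.le⟩) i).symm
    have hzt : z t i = z' t i := (congrFun (hagree t ⟨ht.1, ht.2.le⟩) i).symm
    have hv2 : HasDerivWithinAt (fun s => z s i)
        ((1 - z' t i) * ∑ j, W' i j * pv j * z' t j) (Set.Ici 0) t :=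
      hvz'.congr_of_eventuallyEq hevz hzt
    have hzeq : z' t = z t := hagree t ⟨ht.1, ht.2.le⟩
    rw [hzeq] at hv2
    have hu : UniqueDiffWithinAt ℝ (Set.Ici (0:ℝ)) t := uniqueDiffOn_Ici 0 t htI
    have heq : (1 - z t i) * ∑ j, W' i j * pv j * z t j
        = (1 - z t i) * ∑ j, W i j * pv j * z t j := by
      have e1 := hv2.derivWithin hu
      have e2 := (hode i t htI).derivWithin hu
      rw [e1] at e2
      exact e2
    have hyne : (1 - z t i) ≠ 0 := ne_of_gt (ypos i t htI)
    have heq2 : ∑ j, W' i j * pv j * z t j = ∑ j, W i j * pv j * z t j :=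
      mul_left_cancel₀ hyne heq
    calc ∑ j, c j * z t j
        = (∑ j, W' i j * pv j * z t j) - ∑ j, W i j * pv j * z t j := by
          rw [← Finset.sum_sub_distrib]
          exact Finset.sum_congr rfl fun j _ => by rw [hc]; ring
      _ = 0 := by rw [heq2, sub_self]
  -- the derivative chain for g
  have hderivg : ∀ k, ∀ t ∈ Set.Ici (0:ℝ), HasDerivWithinAt
      (fun t => ∑ j, c j * Zseq (fun a b => W a b * pv b) z k t j)
      (∑ j, c j * Zseq (fun a b => W a b * pv b) z (k+1) t j) (Set.Ici 0) t := by
    intro k t ht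
    exact HasDerivWithinAt.fun_sum fun j _ =>
      (Zseq_deriv (fun a b => W a b * pv b) z hode k j t ht).const_mul (c j)
  have hboundg : ∀ k, ∀ t ∈ Set.Ici (0:ℝ),
      |∑ j, c j * Zseq (fun a b => W a b * pv b) z k t j|
        ≤ (∑ j, |c j|) * (k.factorial : ℝ) * (2*M)^k := by
    intro k t ht
    have hZ := Zseq_bound (fun a b => W a b * pv b) z M hMpos
      (fun a b => hA0 a b) (fun a => hAM a) hz01 k t ht
    calc |∑ j, c j * Zseq (fun a b => W a b * pv b) z k t j|
        ≤ ∑ j, |c j * Zseq (fun a b => W a b * pv b) z k t j| := Finset.abs_sum_le_sum_abs _ _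
      _ ≤ ∑ j, |c j| * ((k.factorial : ℝ) * (2*M)^k) := by
          apply Finset.sum_le_sum
          intro j _
          rw [abs_mul]
          exact mul_le_mul_of_nonneg_left (hZ j) (abs_nonneg _)
      _ = (∑ j, |c j|) * (k.factorial : ℝ) * (2*M)^k := by rw [← Finset.sum_mul]; ring
  have hCnn : 0 ≤ ∑ j, |c j| := Finset.sum_nonneg fun j _ => abs_nonneg _
  have hBpos : (0:ℝ) < 2*M := by linarith
  -- extend vanishing to all of [0, ∞)
  have hext : ∀ N : ℕ, ∀ s ∈ Set.Icc (0:ℝ) (T₀/2 + N * (1/(2*(2*M)))),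
      ∑ j, c j * Zseq (fun a b => W a b * pv b) z 0 s j = 0 := by
    intro N
    induction N with
    | zero =>
      intro s hs
      have hs2 := hs.2
      simp only [Nat.cast_zero, zero_mul, add_zero] at hs2
      have hs' : s ∈ Set.Ico (0:ℝ) T₀ := ⟨hs.1, by linarith⟩
      simp only [Zseq_zero]
      exact hg0 s hs'
    | succ N IH =>
      intro s hs
      have hτpos : (0:ℝ) < T₀/2 + N * (1/(2*(2*M))) := by positivity
      have hstep := chain_zero_extend
        (fun k t => ∑ j, c j * Zseq (fun a b => W a b * pv b) z k t j)
        (∑ j, |c j|) (2*M) hCnn hBpos hderivg hboundg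
        (T₀/2 + N * (1/(2*(2*M)))) hτpos IH
      apply hstep
      constructor
      · exact hs.1
      · have hs2 := hs.2
        push_cast at hs2 ⊢
        linarith
  have hzsum : ∀ t ∈ Set.Ici (0:ℝ), ∑ j, c j * z t j = 0 := by
    intro t ht
    have h4M : (0:ℝ) < 2*(2*M) := by linarith
    obtain ⟨N, hN⟩ := exists_nat_ge (t * (2*(2*M)))
    have hNt : t ≤ T₀/2 + N * (1/(2*(2*M))) := by
      have h1 : t ≤ N * (1/(2*(2*M))) := by
        rw [mul_one_div, le_div_iff₀ h4M]
        linarith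
      linarith
    have := hext N t ⟨ht, hNt⟩
    simpa only [Zseq_zero] using this
  -- sum of coefficients vanishes
  have hcsum : ∑ j, c j = 0 := by
    have hb : ∀ t ∈ Set.Ici (0:ℝ), |∑ j, c j| ≤ (∑ j, |c j|) * Real.exp (-((m*m) * t)) := by
      intro t ht
      have h1 : ∑ j, c j * (1 - z t j) = ∑ j, c j := by
        have he : ∀ j ∈ Finset.univ, c j * (1 - z t j) = c j - c j * z t j := fun j _ => by ring
        rw [Finset.sum_congr rfl he, Finset.sum_sub_distrib, hzsum t ht, sub_zero]
      rw [← h1]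
      calc |∑ j, c j * (1 - z t j)| ≤ ∑ j, |c j * (1 - z t j)| := Finset.abs_sum_le_sum_abs _ _
        _ ≤ ∑ j, |c j| * Real.exp (-((m*m)*t)) := by
            apply Finset.sum_le_sum
            intro j _
            rw [abs_mul, abs_of_nonneg (ypos j t ht).le]
            exact mul_le_mul_of_nonneg_left (yub j t ht) (abs_nonneg _)
        _ = (∑ j, |c j|) * Real.exp (-((m*m)*t)) := by rw [← Finset.sum_mul]
    have htend : Tendsto (fun t : ℝ => (∑ j, |c j|) * Real.exp (-((m*m) * t))) atTop (nhds 0) := by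
      have h1 : Tendsto (fun t : ℝ => (m*m) * t) atTop atTop :=
        Tendsto.const_mul_atTop (by positivity) tendsto_id
      have h2 : Tendsto (fun t : ℝ => Real.exp (-((m*m) * t))) atTop (nhds 0) :=
        Real.tendsto_exp_neg_atTop_nhds_zero.comp h1
      simpa using h2.const_mul (∑ j, |c j|)
    have hle : |∑ j, c j| ≤ 0 := by
      apply ge_of_tendsto htend
      filter_upwards [eventually_ge_atTop (0:ℝ)] with t ht
      exact hb t ht
    exact abs_eq_zero.mp (le_antisymm hle (abs_nonneg _))
  -- final step: all coefficients vanish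
  intro j
  by_contra hne
  have hcj : c j ≠ 0 := by
    rw [hc]
    intro h
    rcases mul_eq_zero.mp h with h1 | h1
    · exact hne (by linarith [sub_eq_zero.mp h1])
    · exact (hpv j).ne' h1
  have hSne : (Finset.univ.filter (fun l => c l ≠ 0)).Nonempty :=
    ⟨j, Finset.mem_filter.mpr ⟨Finset.mem_univ j, hcj⟩⟩
  obtain ⟨js, hjsS, hjsmin⟩ := Finset.exists_min_image
    (Finset.univ.filter (fun l => c l ≠ 0)) (fun l => ∑ k, W l k * pv k) hSne
  have hcjs : c js ≠ 0 := (Finset.mem_filter.mp hjsS).2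
  have hkey : ∀ t ∈ Set.Ici (0:ℝ), |c js| * m ≤ ∑ l ∈ Finset.univ.erase js,
      |c l| * Real.exp (M/(m*m))
        * Real.exp (((∑ k, W js k * pv k) - ∑ k, W l k * pv k) * t) := by
    intro t ht
    have hy : ∀ l, 1 - z t l
        ≤ Real.exp (M/(m*m)) * Real.exp (-((∑ k, W l k * pv k) * t)) := by
      intro l
      have h1 := hKb l t ht
      have hE := Real.exp_pos ((∑ k, W l k * pv k) * t)
      rw [Real.exp_neg, ← div_eq_mul_inv, le_div_iff₀ hE]
      exact h1
    have hsum0 : ∑ l, c l * (1 - z t l) = 0 := by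
      have he : ∀ l ∈ Finset.univ, c l * (1 - z t l) = c l - c l * z t l := fun l _ => by ring
      rw [Finset.sum_congr rfl he, Finset.sum_sub_distrib, hzsum t ht, hcsum, sub_zero]
    have hsplit : c js * (1 - z t js) = - ∑ l ∈ Finset.univ.erase js, c l * (1 - z t l) := by
      have h2 := Finset.add_sum_erase Finset.univ (fun l => c l * (1 - z t l)) (Finset.mem_univ js)
      rw [hsum0] at h2
      linarith
    have hlhs : |c js| * (m * Real.exp (-((∑ k, W js k * pv k) * t)))
        ≤ |c js * (1 - z t js)| := by
      rw [abs_mul]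
      apply mul_le_mul_of_nonneg_left _ (abs_nonneg _)
      exact le_trans (ylb js t ht) (le_abs_self _)
    have hrhs : |c js * (1 - z t js)| ≤ ∑ l ∈ Finset.univ.erase js,
        |c l| * (Real.exp (M/(m*m)) * Real.exp (-((∑ k, W l k * pv k) * t))) := by
      rw [hsplit, abs_neg]
      calc |∑ l ∈ Finset.univ.erase js, c l * (1 - z t l)|
          ≤ ∑ l ∈ Finset.univ.erase js, |c l * (1 - z t l)| := Finset.abs_sum_le_sum_abs _ _
        _ ≤ _ := by
            apply Finset.sum_le_sum
            intro l _
            rw [abs_mul, abs_of_nonneg (ypos l t ht).le]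
            exact mul_le_mul_of_nonneg_left (hy l) (abs_nonneg _)
    have hcomb := le_trans hlhs hrhs
    have hEpos : (0:ℝ) < Real.exp ((∑ k, W js k * pv k) * t) := Real.exp_pos _
    have hmul := mul_le_mul_of_nonneg_right hcomb hEpos.le
    have hexp1 : Real.exp (-((∑ k, W js k * pv k) * t))
        * Real.exp ((∑ k, W js k * pv k) * t) = 1 := by
      rw [← Real.exp_add]
      simp
    have hLHS : |c js| * (m * Real.exp (-((∑ k, W js k * pv k) * t)))
        * Real.exp ((∑ k, W js k * pv k) * t) = |c js| * m := by
      rw [mul_assoc, mul_assoc, hexp1]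
      ring
    have hRHS : (∑ l ∈ Finset.univ.erase js,
        |c l| * (Real.exp (M/(m*m)) * Real.exp (-((∑ k, W l k * pv k) * t))))
        * Real.exp ((∑ k, W js k * pv k) * t)
        = ∑ l ∈ Finset.univ.erase js, |c l| * Real.exp (M/(m*m))
            * Real.exp (((∑ k, W js k * pv k) - ∑ k, W l k * pv k) * t) := by
      rw [Finset.sum_mul]
      apply Finset.sum_congr rfl
      intro l _
      have he : Real.exp (-((∑ k, W l k * pv k) * t)) * Real.exp ((∑ k, W js k * pv k) * t)
          = Real.exp (((∑ k, W js k * pv k) - ∑ k, W l k * pv k) * t) := by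
        rw [← Real.exp_add]
        congr 1
        ring
      calc |c l| * (Real.exp (M/(m*m)) * Real.exp (-((∑ k, W l k * pv k) * t)))
            * Real.exp ((∑ k, W js k * pv k) * t)
          = |c l| * Real.exp (M/(m*m)) * (Real.exp (-((∑ k, W l k * pv k) * t))
              * Real.exp ((∑ k, W js k * pv k) * t)) := by ring
        _ = |c l| * Real.exp (M/(m*m))
              * Real.exp (((∑ k, W js k * pv k) - ∑ k, W l k * pv k) * t) := by rw [he]
    rw [hLHS, hRHS] at hmul
    exact hmul
  have htends : Tendsto (fun t : ℝ => ∑ l ∈ Finset.univ.erase js,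
      |c l| * Real.exp (M/(m*m))
        * Real.exp (((∑ k, W js k * pv k) - ∑ k, W l k * pv k) * t)) atTop (nhds 0) := by
    have h0 : (0:ℝ) = ∑ l ∈ Finset.univ.erase js, (0:ℝ) := by simp
    rw [h0]
    apply tendsto_finset_sum
    intro l hl
    rcases eq_or_ne (c l) 0 with hc0 | hc0
    · simp only [hc0, abs_zero, zero_mul]
      exact tendsto_const_nhds
    · have hlS : l ∈ Finset.univ.filter (fun l => c l ≠ 0) :=
        Finset.mem_filter.mpr ⟨Finset.mem_univ l, hc0⟩
      have hlne : l ≠ js := (Finset.mem_erase.mp hl).1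
      have hdlt : ∑ k, W js k * pv k < ∑ k, W l k * pv k :=
        lt_of_le_of_ne (hjsmin l hlS) (hdeg js l (fun h => hlne h.symm))
      have hapos : (0:ℝ) < (∑ k, W l k * pv k) - (∑ k, W js k * pv k) := by linarith
      have h1 : Tendsto (fun t : ℝ => ((∑ k, W l k * pv k) - (∑ k, W js k * pv k)) * t)
          atTop atTop := Tendsto.const_mul_atTop hapos tendsto_id
      have h2 : Tendsto (fun t : ℝ =>
          Real.exp (-(((∑ k, W l k * pv k) - (∑ k, W js k * pv k)) * t))) atTop (nhds 0) :=
        Real.tendsto_exp_neg_atTop_nhds_zero.comp h1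
      refine Filter.Tendsto.congr (fun t => ?_)
        (by simpa using h2.const_mul (|c l| * Real.exp (M/(m*m))))
      congr 1
      congr 1
      ring
  have hfin0 : |c js| * m ≤ 0 := by
    apply ge_of_tendsto htends
    filter_upwards [eventually_ge_atTop (0:ℝ)] with t ht
    exact hkey t ht
  have hpos2 : 0 < |c js| * m := mul_pos (abs_pos.mpr hcjs) hm
  linarith
end

section
/- Let 0 < m ≤ 1/2, m ≤ M, and let p = (W, z(0), 0, π) be SI parameters (γ = 0) with m ≤ w_{ij} = w_{ji} ≤ M and m ≤ z_i(0) ≤ 1−m for all i, j, and Σ_i π_i = 1 with π_i ≥ 0. Then the trajectory z satisfies, for every i and every t ≥ 0: (A z(t))_i ≥ m² and 1 − z_i(t) ≤ e^{−m² t}, where A = WΠ. -/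
/-- SI model (`γ = 0`) with `m ≤ w_{ij} ≤ M` and `m ≤ z_i(0) ≤ 1 − m`:
for every `i` and every `t ≥ 0`, `(A z(t))_i ≥ m²` and `1 − z_i(t) ≤ e^{−m² t}`. -/
theorem stmt_9 {n : ℕ} (m M : ℝ) (hm : 0 < m) (hm2 : m ≤ 1 / 2) (hmM : m ≤ M)
    (W : Matrix (Fin n) (Fin n) ℝ) (pv : Fin n → ℝ)
    (z : ℝ → Fin n → ℝ)
    (hWsymm : W.IsSymm) (hWb : ∀ i j, W i j ∈ Set.Icc m M)
    (hz0 : ∀ i, z 0 i ∈ Set.Icc m (1 - m))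
    (hpv : ∀ i, 0 ≤ pv i) (hpv1 : ∑ i, pv i = 1)
    (hode : ∀ i, ∀ t ∈ Set.Ici (0 : ℝ), HasDerivWithinAt (fun s => z s i)
      ((1 - z t i) * (∑ j, W i j * pv j * z t j)) (Set.Ici 0) t)
    (hz01 : ∀ t ∈ Set.Ici (0 : ℝ), ∀ i, z t i ∈ Set.Icc (0 : ℝ) 1) :
    ∀ i : Fin n, ∀ t ≥ (0 : ℝ),
      m ^ 2 ≤ (∑ j, W i j * pv j * z t j) ∧
      1 - z t i ≤ Real.exp (-(m ^ 2) * t) := by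
  have hIoi : interior (Set.Ici (0:ℝ)) = Set.Ioi 0 := interior_Ici
  -- continuity of each component on Ici 0
  have hcont : ∀ i, ContinuousOn (fun s => z s i) (Set.Ici (0:ℝ)) := fun i t ht =>
    (hode i t ht).continuousWithinAt
  -- each component is monotone on Ici 0
  have hmono : ∀ i, MonotoneOn (fun s => z s i) (Set.Ici (0:ℝ)) := by
    intro i
    refine monotoneOn_of_hasDerivWithinAt_nonneg (convex_Ici 0) (hcont i)
      (f' := fun t => (1 - z t i) * (∑ j, W i j * pv j * z t j)) ?_ ?_
    · intro t ht
      rw [hIoi] at ht ⊢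
      exact (hode i t (Set.Ioi_subset_Ici_self ht)).mono Set.Ioi_subset_Ici_self
    · intro t ht
      rw [hIoi] at ht
      have ht' : t ∈ Set.Ici (0:ℝ) := Set.Ioi_subset_Ici_self ht
      have h1 := hz01 t ht' i
      refine mul_nonneg (by linarith [h1.2]) (Finset.sum_nonneg fun j _ => ?_)
      exact mul_nonneg (mul_nonneg (le_trans hm.le (hWb i j).1) (hpv j)) (hz01 t ht' j).1
  -- lower bound z t j ≥ m
  have hzm : ∀ t ∈ Set.Ici (0:ℝ), ∀ j, m ≤ z t j := by
    intro t ht j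
    exact le_trans (hz0 j).1 (hmono j Set.self_mem_Ici ht ht)
  -- main sum lower bound
  have hsum : ∀ t ∈ Set.Ici (0:ℝ), ∀ i, m ^ 2 ≤ ∑ j, W i j * pv j * z t j := by
    intro t ht i
    calc m ^ 2 = ∑ j, m * pv j * m := by
          rw [← Finset.sum_mul, ← Finset.mul_sum, hpv1]; ring
      _ ≤ ∑ j, W i j * pv j * z t j := by
          refine Finset.sum_le_sum fun j _ => ?_
          have h1 : m * m ≤ W i j * z t j :=
            mul_le_mul (hWb i j).1 (hzm t ht j) hm.le (le_trans hm.le (hWb i j).1)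
          nlinarith [hpv j]
  intro i t ht
  refine ⟨hsum t ht i, ?_⟩
  set g : ℝ → ℝ := fun s => (1 - z s i) * Real.exp (m ^ 2 * s) with hg
  have hganti : AntitoneOn g (Set.Ici (0:ℝ)) := by
    refine antitoneOn_of_hasDerivWithinAt_nonpos (convex_Ici 0)
      (f' := fun s => (-((1 - z s i) * (∑ j, W i j * pv j * z s j))) * Real.exp (m ^ 2 * s)
        + (1 - z s i) * (Real.exp (m ^ 2 * s) * m ^ 2)) ?_ ?_ ?_
    · intro s hs
      exact (((hode i s hs).const_sub 1).mul
        (((hasDerivAt_id s).const_mul (m ^ 2)).exp.hasDerivWithinAt)).continuousWithinAt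
    · intro s hs
      rw [hIoi] at hs ⊢
      have hs' : s ∈ Set.Ici (0:ℝ) := Set.Ioi_subset_Ici_self hs
      exact ((((hode i s hs').const_sub 1).mul
        (((hasDerivAt_id s).const_mul (m ^ 2)).exp.hasDerivWithinAt)).mono
        Set.Ioi_subset_Ici_self).congr_deriv (by simp only [id_eq]; ring)
    · intro s hs
      rw [hIoi] at hs
      have hs' : s ∈ Set.Ici (0:ℝ) := Set.Ioi_subset_Ici_self hs
      have h1 := (hz01 s hs' i).2
      have h2 := hsum s hs' i
      have he : (0:ℝ) < Real.exp (m ^ 2 * s) := Real.exp_pos _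
      have key : 0 ≤ Real.exp (m ^ 2 * s) * ((1 - z s i) * ((∑ j, W i j * pv j * z s j) - m ^ 2)) :=
        mul_nonneg he.le (mul_nonneg (by linarith) (by linarith))
      beta_reduce
      nlinarith [key]
  have hg0 : g 0 ≤ 1 := by
    simp only [hg, mul_zero, Real.exp_zero, mul_one]
    linarith [(hz0 i).1, hm]
  have hkey : g t ≤ 1 := le_trans (hganti Set.self_mem_Ici ht ht) hg0
  have he : (0:ℝ) < Real.exp (m ^ 2 * t) := Real.exp_pos _
  rw [show -(m ^ 2) * t = -(m ^ 2 * t) by ring, Real.exp_neg, inv_eq_one_div, le_div_iff₀ he]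
  simpa [hg] using hkey
end

section
/- Let 0 < m ≤ 1/2, m ≤ M, and let p = (W, z(0), 0, π) be SI parameters (γ = 0) with m ≤ w_{ij} = w_{ji} ≤ M and m ≤ z_i(0) ≤ 1−m for all i, j, and Σ_i π_i = 1 with π_i ≥ 0. Then for every community i, the degree is observable in the long-time limit: lim_{t → ∞} −(1/t)·log(1 − z_i(t)) = d_i, where d_i = Σ_j (WΠ)_{ij}. -/
open Filter

/-- FTC helper: right derivative of the primitive of a function continuous on `[0, ∞)`. -/
lemma si_primitive_hasDerivWithinAt (g : ℝ → ℝ) (hg : ContinuousOn g (Set.Ici 0))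
    (x : ℝ) (hx : 0 ≤ x) :
    HasDerivWithinAt (fun t => ∫ s in (0:ℝ)..t, g s) (g x) (Set.Ici x) x := by
  have hsub : Set.Ioi x ⊆ Set.Ici 0 := fun y hy => le_trans hx (le_of_lt hy)
  apply intervalIntegral.integral_hasDerivWithinAt_right (t := Set.Ioi x)
  · apply (hg.mono ?_).intervalIntegrable
    rw [Set.uIcc_of_le hx]; exact Set.Icc_subset_Ici_self
  · exact (hg.mono hsub).stronglyMeasurableAtFilter_nhdsWithin measurableSet_Ioi x
  · exact (hg x hx).mono hsub

/-- In the SI model (`γ = 0`) the degrees are observable in the long-time limit: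
`lim_{t → ∞} −(1/t) log(1 − z_i(t)) = d_i` where `d_i = Σ_j w_{ij} π_j`. -/
theorem stmt_10 {n : ℕ} (m M : ℝ) (hm : 0 < m) (hm2 : m ≤ 1 / 2) (hmM : m ≤ M)
    (W : Matrix (Fin n) (Fin n) ℝ) (pv : Fin n → ℝ)
    (z : ℝ → Fin n → ℝ)
    (hWsymm : W.IsSymm) (hWb : ∀ i j, W i j ∈ Set.Icc m M)
    (hz0 : ∀ i, z 0 i ∈ Set.Icc m (1 - m))
    (hpv : ∀ i, 0 ≤ pv i) (hpv1 : ∑ i, pv i = 1)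
    (hode : ∀ i, ∀ t ∈ Set.Ici (0 : ℝ), HasDerivWithinAt (fun s => z s i)
      ((1 - z t i) * (∑ j, W i j * pv j * z t j)) (Set.Ici 0) t)
    (hz01 : ∀ t ∈ Set.Ici (0 : ℝ), ∀ i, z t i ∈ Set.Icc (0 : ℝ) 1) :
    ∀ i : Fin n,
      Tendsto (fun t : ℝ => -(1 / t) * Real.log (1 - z t i)) atTop
        (nhds (∑ j, W i j * pv j)) := by
  set g : Fin n → ℝ → ℝ := fun j s => ∑ k, W j k * pv k * z s k with hg_def
  set I : Fin n → ℝ → ℝ := fun j t => ∫ s in (0:ℝ)..t, g j s with hI_def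
  -- continuity of z
  have hzcont : ∀ k, ContinuousOn (fun s => z s k) (Set.Ici 0) :=
    fun k t ht => (hode k t ht).continuousWithinAt
  have hgcont : ∀ j, ContinuousOn (g j) (Set.Ici 0) := by
    intro j
    apply continuousOn_finset_sum
    intro k _
    exact continuousOn_const.mul (hzcont k)
  have hgint : ∀ j, ∀ t : ℝ, 0 ≤ t → IntervalIntegrable (g j) MeasureTheory.volume 0 t := by
    intro j t ht
    apply ((hgcont j).mono ?_).intervalIntegrable
    rw [Set.uIcc_of_le ht]; exact Set.Icc_subset_Ici_self
  -- pointwise bounds on g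
  have hgnonneg : ∀ j, ∀ s : ℝ, 0 ≤ s → 0 ≤ g j s := by
    intro j s hs
    apply Finset.sum_nonneg
    intro k _
    have h1 := (hz01 s hs k).1
    have h2 := (hWb j k).1
    have h3 := hpv k
    exact mul_nonneg (mul_nonneg (le_trans hm.le h2) h3) h1
  -- key identity: 1 - z t j = (1 - z 0 j) * exp (- I j t)
  have hkey : ∀ j, ∀ t : ℝ, 0 ≤ t → 1 - z t j = (1 - z 0 j) * Real.exp (-(I j t)) := by
    intro j t ht
    set u : ℝ → ℝ := fun s => (1 - z s j) * Real.exp (I j s) with hu_def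
    have hIderiv : ∀ x : ℝ, 0 ≤ x → HasDerivWithinAt (I j) (g j x) (Set.Ici x) x :=
      fun x hx => si_primitive_hasDerivWithinAt (g j) (hgcont j) x hx
    have hIcont : ContinuousOn (I j) (Set.Icc 0 t) := by
      have : ContinuousOn (fun x => ∫ s in (0:ℝ)..x, g j s) (Set.uIcc 0 t) := by
        apply intervalIntegral.continuousOn_primitive_interval
        rw [Set.uIcc_of_le ht]
        exact ((hgcont j).mono Set.Icc_subset_Ici_self).integrableOn_Icc
      rwa [Set.uIcc_of_le ht] at this
    have hucont : ContinuousOn u (Set.Icc 0 t) := by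
      apply ContinuousOn.mul
      · exact continuousOn_const.sub ((hzcont j).mono Set.Icc_subset_Ici_self)
      · exact Real.continuous_exp.comp_continuousOn hIcont
    have huderiv : ∀ x ∈ Set.Ico 0 t, HasDerivWithinAt u 0 (Set.Ici x) x := by
      intro x hx
      have hx0 : (0:ℝ) ≤ x := hx.1
      have h1 : HasDerivWithinAt (fun s => 1 - z s j)
          (-((1 - z x j) * g j x)) (Set.Ici x) x := by
        have := ((hode j x hx0).mono (Set.Ici_subset_Ici.2 hx0)).const_sub 1
        simpa using this
      have h2 : HasDerivWithinAt (fun s => Real.exp (I j s))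
          (Real.exp (I j x) * g j x) (Set.Ici x) x := (hIderiv x hx0).exp
      have := h1.mul h2
      exact this.congr_deriv (by ring)
    have := constant_of_has_deriv_right_zero hucont huderiv t (Set.right_mem_Icc.2 ht)
    have hu0 : u 0 = 1 - z 0 j := by
      simp [hu_def, hI_def]
    rw [hu0] at this
    have hexp : Real.exp (I j t) ≠ 0 := Real.exp_ne_zero _
    have : (1 - z t j) * Real.exp (I j t) = 1 - z 0 j := this
    rw [Real.exp_neg]
    field_simp
    linarith [this]
  have hz0m : ∀ j, 0 < 1 - z 0 j := by
    intro j
    have := (hz0 j).2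
    linarith
  have hInonneg : ∀ j, ∀ t : ℝ, 0 ≤ t → 0 ≤ I j t := by
    intro j t ht
    exact intervalIntegral.integral_nonneg ht (fun s hs => hgnonneg j s hs.1)
  -- lower bound on z
  have hzm : ∀ t : ℝ, 0 ≤ t → ∀ k, m ≤ z t k := by
    intro t ht k
    have h1 := hkey k t ht
    have h2 : Real.exp (-(I k t)) ≤ 1 := by
      rw [Real.exp_le_one_iff]
      linarith [hInonneg k t ht]
    have h3 := (hz0 k).1
    have h4 : 0 < Real.exp (-(I k t)) := Real.exp_pos _
    nlinarith [hz0m k]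
  -- lower bound on g
  have hglb : ∀ j, ∀ s : ℝ, 0 ≤ s → m ^ 2 ≤ g j s := by
    intro j s hs
    have : ∑ k, m * pv k * m ≤ g j s := by
      apply Finset.sum_le_sum
      intro k _
      have h1 := (hWb j k).1
      have h2 := hpv k
      have h3 := hzm s hs k
      have h4 := (hz01 s hs k).1
      nlinarith [mul_nonneg (mul_nonneg (sub_nonneg.2 h1) h2) h4,
        mul_nonneg (mul_nonneg hm.le h2) (sub_nonneg.2 h3)]
    calc m ^ 2 = ∑ k, m * pv k * m := by
          rw [← Finset.sum_mul, ← Finset.mul_sum, hpv1]; ring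
      _ ≤ g j s := this
  have hIlb : ∀ j, ∀ t : ℝ, 0 ≤ t → m ^ 2 * t ≤ I j t := by
    intro j t ht
    have : ∫ s in (0:ℝ)..t, (m ^ 2 : ℝ) ≤ ∫ s in (0:ℝ)..t, g j s :=
      intervalIntegral.integral_mono_on ht intervalIntegrable_const (hgint j t ht)
        (fun s hs => hglb j s hs.1)
    simp only [intervalIntegral.integral_const, smul_eq_mul, sub_zero] at this
    rw [hI_def]
    linarith
  -- exponential convergence of z to 1
  have hub : ∀ j, ∀ t : ℝ, 0 ≤ t → 1 - z t j ≤ Real.exp (-(m ^ 2 * t)) := by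
    intro j t ht
    rw [hkey j t ht]
    have h1 : Real.exp (-(I j t)) ≤ Real.exp (-(m ^ 2 * t)) := by
      apply Real.exp_le_exp.2
      linarith [hIlb j t ht]
    have h2 : 1 - z 0 j ≤ 1 := by linarith [(hz0 j).1, hm]
    nlinarith [Real.exp_pos (-(I j t)), hz0m j]
  intro i
  set d : ℝ := ∑ j, W i j * pv j with hd_def
  -- upper bound on g and gap bound
  have hgub : ∀ s : ℝ, 0 ≤ s → g i s ≤ d := by
    intro s hs
    apply Finset.sum_le_sum
    intro k _
    have h1 := (hWb i k).1
    have h2 := hpv k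
    have h3 := (hz01 s hs k).2
    nlinarith [mul_nonneg (mul_nonneg (hm.le.trans h1) h2) (sub_nonneg.2 h3)]
  have hgap : ∀ s : ℝ, 0 ≤ s → d - g i s ≤ M * Real.exp (-(m ^ 2 * s)) := by
    intro s hs
    have : d - g i s = ∑ k, (W i k * pv k - W i k * pv k * z s k) := by
      rw [hd_def, hg_def, ← Finset.sum_sub_distrib]
    rw [this]
    have hsum : ∑ k, (W i k * pv k - W i k * pv k * z s k)
        ≤ ∑ k, M * pv k * Real.exp (-(m ^ 2 * s)) := by
      apply Finset.sum_le_sum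
      intro k _
      have h1 := (hWb i k).1
      have h2 := (hWb i k).2
      have h3 := hpv k
      have h4 := hub k s hs
      have h5 := (hz01 s hs k).2
      have h6 := (hz01 s hs k).1
      nlinarith [mul_nonneg h3 (sub_nonneg.2 h5),
        mul_nonneg (mul_nonneg (sub_nonneg.2 h2) h3) (sub_nonneg.2 h5),
        mul_nonneg (mul_nonneg (hm.le.trans hmM) h3) (sub_nonneg.2 h4)]
    calc ∑ k, (W i k * pv k - W i k * pv k * z s k)
        ≤ ∑ k, M * pv k * Real.exp (-(m ^ 2 * s)) := hsum
      _ = M * Real.exp (-(m ^ 2 * s)) := by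
          rw [← Finset.sum_mul, ← Finset.mul_sum, hpv1]; ring
  -- integral gap bound
  have hIub2 : ∀ t : ℝ, 0 ≤ t → I i t ≤ d * t := by
    intro t ht
    have : ∫ s in (0:ℝ)..t, g i s ≤ ∫ s in (0:ℝ)..t, d :=
      intervalIntegral.integral_mono_on ht (hgint i t ht) intervalIntegrable_const
        (fun s hs => hgub s hs.1)
    simpa [mul_comm] using this
  have hexpint : ∀ t : ℝ, 0 ≤ t →
      ∫ s in (0:ℝ)..t, M * Real.exp (-(m ^ 2 * s))
        = M / m ^ 2 * (1 - Real.exp (-(m ^ 2 * t))) := by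
    intro t ht
    have hm2 : (0:ℝ) < m ^ 2 := by positivity
    have hasderiv : ∀ x ∈ Set.uIcc (0:ℝ) t,
        HasDerivAt (fun s => -(M / m ^ 2) * Real.exp (-(m ^ 2 * s)))
          (M * Real.exp (-(m ^ 2 * x))) x := by
      intro x _
      have h1 : HasDerivAt (fun s : ℝ => -(m ^ 2 * s)) (-(m ^ 2)) x := by
        exact ((hasDerivAt_id x).const_mul (m ^ 2)).neg.congr_deriv (by ring)
      have h2 := h1.exp
      have h3 := h2.const_mul (-(M / m ^ 2))
      exact h3.congr_deriv (by
        have h := hm2.ne'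
        calc _ = M * (m ^ 2 / m ^ 2) * Real.exp (-(m ^ 2 * x)) := by ring
          _ = _ := by rw [div_self h]; ring)
    have hint : IntervalIntegrable (fun s => M * Real.exp (-(m ^ 2 * s)))
        MeasureTheory.volume 0 t :=
      (continuous_const.mul (Real.continuous_exp.comp
        ((continuous_const.mul continuous_id).neg))).intervalIntegrable 0 t
    rw [intervalIntegral.integral_eq_sub_of_hasDerivAt hasderiv hint]
    simp
    ring
  have hIub : ∀ t : ℝ, 0 ≤ t → d * t - I i t ≤ M / m ^ 2 := by
    intro t ht
    have hmono : ∫ s in (0:ℝ)..t, (d - g i s)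
        ≤ ∫ s in (0:ℝ)..t, M * Real.exp (-(m ^ 2 * s)) := by
      apply intervalIntegral.integral_mono_on ht
        (intervalIntegrable_const.sub (hgint i t ht))
        ((continuous_const.mul (Real.continuous_exp.comp
          ((continuous_const.mul continuous_id).neg))).intervalIntegrable 0 t)
        (fun s hs => hgap s hs.1)
    have heq : ∫ s in (0:ℝ)..t, (d - g i s) = d * t - I i t := by
      rw [intervalIntegral.integral_sub intervalIntegrable_const (hgint i t ht)]
      simp [hI_def, mul_comm]
    rw [heq, hexpint t ht] at hmono
    have hm2 : (0:ℝ) < m ^ 2 := by positivity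
    have hM : (0:ℝ) < M := lt_of_lt_of_le hm hmM
    nlinarith [mul_pos (div_pos hM hm2) (Real.exp_pos (-(m ^ 2 * t)))]
  -- log formula
  have hlog : ∀ t : ℝ, 0 ≤ t →
      Real.log (1 - z t i) = Real.log (1 - z 0 i) - I i t := by
    intro t ht
    rw [hkey i t ht, Real.log_mul (ne_of_gt (hz0m i)) (Real.exp_ne_zero _),
      Real.log_exp]
    ring
  -- final squeeze
  set c : ℝ := Real.log (1 - z 0 i) with hc_def
  set C : ℝ := |c| + M / m ^ 2 with hC_def
  have hCpos : 0 < C := by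
    have hM : (0:ℝ) < M := lt_of_lt_of_le hm hmM
    have h1 : 0 < M / m ^ 2 := by positivity
    rw [hC_def]
    linarith [abs_nonneg c]
  have hsq : Tendsto (fun t : ℝ => -(1 / t) * Real.log (1 - z t i) - d) atTop (nhds 0) := by
    apply squeeze_zero_norm' (a := fun t : ℝ => C / t)
    · filter_upwards [eventually_ge_atTop (1:ℝ)] with t ht
      have ht0 : (0:ℝ) < t := lt_of_lt_of_le one_pos ht
      have h1 : -(1 / t) * Real.log (1 - z t i) - d = (-c + (I i t - d * t)) / t := by
        rw [hlog t ht0.le]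
        field_simp
        ring
      rw [Real.norm_eq_abs, h1, abs_div, abs_of_pos ht0]
      have h2 : |I i t - d * t| ≤ M / m ^ 2 := by
        rw [abs_sub_comm, abs_of_nonneg (by linarith [hIub2 t ht0.le])]
        exact hIub t ht0.le
      have h3 : |(-c + (I i t - d * t))| ≤ C := by
        calc |(-c + (I i t - d * t))| ≤ |(-c)| + |I i t - d * t| := abs_add_le _ _
          _ ≤ |c| + M / m ^ 2 := by rw [abs_neg]; linarith
          _ = C := rfl
      exact (div_le_div_iff_of_pos_right ht0).mpr h3
    · exact Tendsto.div_atTop tendsto_const_nhds tendsto_id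
  have := hsq.add_const d
  simpa using this
end
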